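/- arXiv:2101.05257 — 10 statements merged into one kernel-verified Lean document; each statement's English description precedes it below -/
import Mathlib

section
/- Let {b_n} be a sequence of integers and {a_n} a sequence of positive integers with a_n > 1 for all sufficiently large n, and suppose lim_{n→∞} |b_n|/(a_{n-1} a_n) = 0. Then the sum ∑_{n=1}^∞ b_n / (∏_{i=1}^n a_i) is rational if and only if there exists a positive integer B and a sequence of integers {c_n} such that for all sufficiently large n, B·b_n = c_n·a_n − c_{n+1} and |c_{n+1}| < a_n/2. -/
open Filter Finset
namespace ES21

noncomputable def Q (a : ℕ → ℤ) (n : ℕ) : ℝ := ∏ i ∈ Finset.range n, (a i : ℝ)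

noncomputable def t (a b : ℕ → ℤ) (n : ℕ) : ℝ :=
  (b n : ℝ) / ∏ i ∈ Finset.range (n + 1), (a i : ℝ)

variable {a b : ℕ → ℤ}

lemma Q_pos (ha : ∀ n, 0 < a n) (n : ℕ) : 0 < Q a n :=
  Finset.prod_pos fun i _ => by exact_mod_cast ha i

lemma Q_succ (a : ℕ → ℤ) (n : ℕ) : Q a (n + 1) = Q a n * (a n : ℝ) :=
  Finset.prod_range_succ _ _

lemma t_eq (a b : ℕ → ℤ) (n : ℕ) : t a b n = (b n : ℝ) / Q a (n + 1) := rfl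

lemma Q_ge (ha : ∀ n, 0 < a n) {N : ℕ} (h2 : ∀ i, N ≤ i → 2 ≤ a i) :
    ∀ k, Q a N * 2 ^ k ≤ Q a (N + k) := by
  intro k
  induction k with
  | zero => simp
  | succ k ih =>
    have h2' : (2 : ℝ) ≤ (a (N + k) : ℝ) := by exact_mod_cast h2 _ (Nat.le_add_right _ _)
    calc Q a N * 2 ^ (k+1) = (Q a N * 2 ^ k) * 2 := by ring
    _ ≤ Q a (N + k) * (a (N+k) : ℝ) :=
        mul_le_mul ih h2' (by norm_num) (le_of_lt (Q_pos ha _))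
    _ = Q a (N + (k+1)) := (Q_succ a (N + k)).symm

lemma tail_term_bound (ha : ∀ n, 0 < a n) {N : ℕ} {ε : ℝ}
    (h2 : ∀ i, N ≤ i → 2 ≤ a i)
    (hb : ∀ i, N ≤ i → |(b (i+1) : ℝ)| ≤ ε * ((a i : ℝ) * (a (i+1) : ℝ)))
    {n : ℕ} (hn : N ≤ n) (k : ℕ) :
    |t a b (k + (n + 1))| ≤ ε / Q a n * (1/2) ^ k := by
  rw [show k + (n + 1) = n + k + 1 from by omega]
  have hQ : Q a (n + k + 1 + 1) = Q a (n + k) * ((a (n + k) : ℝ) * (a (n + k + 1) : ℝ)) := by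
    rw [Q_succ, Q_succ]; ring
  have hbk := hb (n + k) (le_trans hn (Nat.le_add_right _ _))
  have hapos : (0:ℝ) < (a (n+k) : ℝ) * (a (n+k+1) : ℝ) := by
    have := ha (n+k); have := ha (n+k+1); positivity
  have hQpos := Q_pos ha (n + k)
  have hQn := Q_pos ha n
  have hge : Q a n * 2 ^ k ≤ Q a (n + k) := Q_ge ha (fun i hi => h2 i (le_trans hn hi)) k
  have hεnn : 0 ≤ ε := by
    have := hb N le_rfl
    have h1 : (0:ℝ) < (a N : ℝ) * (a (N+1) : ℝ) := by
      have := ha N; have := ha (N+1); positivity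
    nlinarith [abs_nonneg ((b (N+1) : ℝ))]
  have ht : |t a b (n + k + 1)| = |(b (n + k + 1) : ℝ)| / Q a (n + k + 1 + 1) := by
    rw [t_eq, abs_div, abs_of_pos (Q_pos ha _)]
  rw [ht, hQ]
  have step1 : |(b (n + k + 1) : ℝ)| / (Q a (n+k) * ((a (n+k) : ℝ) * (a (n+k+1) : ℝ)))
      ≤ ε / Q a (n + k) := by
    rw [div_le_div_iff₀ (by positivity) hQpos]
    nlinarith [hbk, hQpos.le, hapos.le]
  refine step1.trans ?_
  have e2 : ε / Q a n * (1/2)^k = ε / (Q a n * 2 ^ k) := by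
    rw [div_pow, one_pow]
    field_simp
  rw [e2]
  exact div_le_div_of_nonneg_left hεnn (by positivity) hge

lemma summable_t (ha : ∀ n, 0 < a n) {N : ℕ}
    (h2 : ∀ i, N ≤ i → 2 ≤ a i)
    (hb : ∀ i, N ≤ i → |(b (i+1) : ℝ)| ≤ 1 * ((a i : ℝ) * (a (i+1) : ℝ))) :
    Summable (t a b) := by
  rw [← summable_nat_add_iff (N + 1)]
  apply Summable.of_norm_bounded (g := fun k => 1 / Q a N * (1/2) ^ k)
  · exact (summable_geometric_two).mul_left _
  · intro k
    simpa [Real.norm_eq_abs] using tail_term_bound ha h2 hb le_rfl k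

lemma tsum_tail_bound (ha : ∀ n, 0 < a n) (hsum : Summable (t a b)) {N : ℕ} {ε : ℝ}
    (h2 : ∀ i, N ≤ i → 2 ≤ a i)
    (hb : ∀ i, N ≤ i → |(b (i+1) : ℝ)| ≤ ε * ((a i : ℝ) * (a (i+1) : ℝ)))
    {n : ℕ} (hn : N ≤ n) :
    ∑' k, |t a b (k + (n + 1))| ≤ 2 * ε / Q a n := by
  have hs1 : Summable fun k => |t a b (k + (n + 1))| :=
    ((summable_nat_add_iff (n+1)).2 hsum).abs
  have hs2 : Summable fun k : ℕ => ε / Q a n * (1/2) ^ k :=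
    (summable_geometric_two).mul_left _
  calc ∑' k, |t a b (k + (n + 1))| ≤ ∑' k : ℕ, ε / Q a n * (1/2) ^ k :=
        Summable.tsum_le_tsum (tail_term_bound ha h2 hb hn) hs1 hs2
  _ = ε / Q a n * ∑' k : ℕ, ((1:ℝ)/2) ^ k := tsum_mul_left
  _ = 2 * ε / Q a n := by rw [tsum_geometric_two]; ring

def cseq (a b : ℕ → ℤ) (q : ℚ) (n : ℕ) : ℤ :=
  q.num * ∏ i ∈ Finset.range n, a i -
    (q.den : ℤ) * ∑ k ∈ Finset.range n, b k * ∏ i ∈ Finset.Ico (k+1) n, a i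

lemma cseq_rec (a b : ℕ → ℤ) (q : ℚ) (n : ℕ) :
    (q.den : ℤ) * b n = cseq a b q n * a n - cseq a b q (n+1) := by
  unfold cseq
  rw [Finset.prod_range_succ, Finset.sum_range_succ, Finset.Ico_self, Finset.prod_empty]
  have hsum : ∑ k ∈ Finset.range n, b k * ∏ i ∈ Finset.Ico (k+1) (n+1), a i
      = ∑ k ∈ Finset.range n, (b k * ∏ i ∈ Finset.Ico (k+1) n, a i) * a n := by
    refine Finset.sum_congr rfl fun k hk => ?_
    rw [Finset.prod_Ico_succ_top (Nat.succ_le_of_lt (Finset.mem_range.1 hk)), ← mul_assoc]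
  rw [hsum, ← Finset.sum_mul]
  ring

lemma cseq_real (ha : ∀ n, 0 < a n) {q : ℚ} (hsum : Summable (t a b))
    (hq : ∑' n, t a b n = (q : ℝ)) (n : ℕ) :
    (cseq a b q n : ℝ) = (q.den : ℝ) * Q a n * ∑' k, t a b (k + n) := by
  have htail : ∑' k, t a b (k + n) = (q : ℝ) - ∑ k ∈ Finset.range n, t a b k := by
    have := Summable.sum_add_tsum_nat_add n hsum
    rw [hq] at this
    linarith
  rw [htail]
  have hden : (q.den : ℝ) ≠ 0 := Nat.cast_ne_zero.2 q.den_nz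
  have hnum : (q.den : ℝ) * (q : ℝ) = (q.num : ℝ) := by
    rw [Rat.cast_def]
    field_simp
  have hterm : ∀ k ∈ Finset.range n, Q a n * t a b k
      = (b k : ℝ) * ∏ i ∈ Finset.Ico (k+1) n, (a i : ℝ) := by
    intro k hk
    have hQk : Q a (k+1) * ∏ i ∈ Finset.Ico (k+1) n, (a i : ℝ) = Q a n :=
      Finset.prod_range_mul_prod_Ico _ (Nat.succ_le_of_lt (Finset.mem_range.1 hk))
    rw [t_eq, ← hQk]
    have := (Q_pos ha (k+1)).ne'
    field_simp
  have hsum2 : Q a n * ∑ k ∈ Finset.range n, t a b k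
      = ∑ k ∈ Finset.range n, (b k : ℝ) * ∏ i ∈ Finset.Ico (k+1) n, (a i : ℝ) := by
    rw [Finset.mul_sum]
    exact Finset.sum_congr rfl hterm
  have hcast : (cseq a b q n : ℝ) = (q.num : ℝ) * Q a n -
      (q.den : ℝ) * ∑ k ∈ Finset.range n, (b k : ℝ) * ∏ i ∈ Finset.Ico (k+1) n, (a i : ℝ) := by
    unfold cseq Q
    push_cast
    ring
  rw [hcast, ← hsum2, ← hnum]
  ring

lemma key_of (ha : ∀ n, 0 < a n) (ha1 : ∀ᶠ n in atTop, 1 < a n)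
    (hlim : Tendsto (fun n => |(b n : ℝ)| / ((a (n - 1) : ℝ) * (a n : ℝ))) atTop (nhds 0)) :
    ∀ ε : ℝ, 0 < ε → ∃ N, ∀ i, N ≤ i →
      2 ≤ a i ∧ |(b (i+1) : ℝ)| ≤ ε * ((a i : ℝ) * (a (i+1) : ℝ)) := by
  intro ε hε
  have h1 : ∀ᶠ n in atTop, |(b n:ℝ)| / ((a (n-1):ℝ) * (a n:ℝ)) < ε :=
    hlim.eventually_lt_const hε
  obtain ⟨N₁, hN₁⟩ := eventually_atTop.1 h1
  obtain ⟨N₂, hN₂⟩ := eventually_atTop.1 ha1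
  refine ⟨max N₁ N₂, fun i hi => ⟨hN₂ i (le_trans (le_max_right _ _) hi), ?_⟩⟩
  have hi1 : N₁ ≤ i + 1 := le_trans (le_trans (le_max_left _ _) hi) (Nat.le_succ i)
  have h3 := hN₁ (i+1) hi1
  rw [Nat.add_sub_cancel] at h3
  have hp : (0:ℝ) < (a i : ℝ) * (a (i+1) : ℝ) := by
    have := ha i; have := ha (i+1); positivity
  rw [div_lt_iff₀ hp] at h3
  linarith

set_option maxHeartbeats 1000000 in
lemma forward (ha : ∀ n, 0 < a n)
    (key : ∀ ε : ℝ, 0 < ε → ∃ N, ∀ i, N ≤ i →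
      2 ≤ a i ∧ |(b (i+1) : ℝ)| ≤ ε * ((a i : ℝ) * (a (i+1) : ℝ)))
    (hsum : Summable (t a b)) (q : ℚ) (hq : ∑' n, t a b n = (q : ℝ)) :
    ∃ B : ℤ, 0 < B ∧ ∃ c : ℕ → ℤ, ∀ᶠ n in atTop,
      B * b n = c n * a n - c (n + 1) ∧ |(c (n + 1) : ℝ)| < (a n : ℝ) / 2 := by
  have hden : (0:ℝ) < (q.den : ℝ) := by exact_mod_cast q.pos
  set ε : ℝ := 1/(8*(q.den:ℝ)) with hεdef
  have hε : 0 < ε := by positivity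
  obtain ⟨N, hN⟩ := key ε hε
  have h2 : ∀ i, N ≤ i → 2 ≤ a i := fun i hi => (hN i hi).1
  have hb' : ∀ i, N ≤ i → |(b (i+1):ℝ)| ≤ ε * ((a i : ℝ) * (a (i+1) : ℝ)) :=
    fun i hi => (hN i hi).2
  refine ⟨(q.den : ℤ), by exact_mod_cast q.pos, cseq a b q,
    eventually_atTop.2 ⟨N, fun n hn => ⟨cseq_rec a b q n, ?_⟩⟩⟩
  have htb := tsum_tail_bound ha hsum h2 hb' hn
  have hcr := cseq_real ha hsum hq (n+1)
  have hQn := Q_pos ha n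
  have han : (0:ℝ) < (a n : ℝ) := by exact_mod_cast ha n
  have hs1 : Summable fun k => |t a b (k + (n + 1))| :=
    ((summable_nat_add_iff (n+1)).2 hsum).abs
  have h1 : |∑' k, t a b (k + (n+1))| ≤ 2*ε/Q a n := by
    refine le_trans ?_ htb
    have h1' := norm_tsum_le_tsum_norm (f := fun k => t a b (k + (n+1)))
      (by simpa [Real.norm_eq_abs] using hs1)
    simpa [Real.norm_eq_abs] using h1'
  have habs : |(cseq a b q (n+1) : ℝ)| ≤ (q.den:ℝ) * Q a (n+1) * (2*ε/Q a n) := by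
    rw [hcr, abs_mul]
    have hpos : (0:ℝ) ≤ (q.den:ℝ) * Q a (n+1) := by
      have := Q_pos ha (n+1); positivity
    rw [abs_of_nonneg hpos]
    exact mul_le_mul_of_nonneg_left h1 hpos
  have hval : (q.den:ℝ) * Q a (n+1) * (2*ε/Q a n) = (a n : ℝ)/4 := by
    rw [Q_succ, hεdef]
    field_simp
    ring
  rw [hval] at habs
  linarith

set_option maxHeartbeats 1000000 in
lemma backward (ha : ∀ n, 0 < a n)
    (key : ∀ ε : ℝ, 0 < ε → ∃ N, ∀ i, N ≤ i →
      2 ≤ a i ∧ |(b (i+1) : ℝ)| ≤ ε * ((a i : ℝ) * (a (i+1) : ℝ)))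
    (B : ℤ) (hB : 0 < B) (c : ℕ → ℤ)
    (h : ∀ᶠ n in atTop, B * b n = c n * a n - c (n + 1) ∧ |(c (n + 1) : ℝ)| < (a n : ℝ) / 2) :
    ∃ q : ℚ, ∑' n, t a b n = (q : ℝ) := by
  obtain ⟨N₁, hkey⟩ := key 1 one_pos
  have hsum : Summable (t a b) :=
    summable_t ha (fun i hi => (hkey i hi).1) (fun i hi => (hkey i hi).2)
  obtain ⟨N₂, hN₂⟩ := eventually_atTop.1 h
  set N := max N₁ N₂ with hNdef
  have h2 : ∀ i, N ≤ i → 2 ≤ a i := fun i hi => (hkey i (le_trans (le_max_left _ _) hi)).1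
  have hrec : ∀ n, N ≤ n → B * b n = c n * a n - c (n + 1) ∧ |(c (n + 1) : ℝ)| < (a n : ℝ) / 2 :=
    fun n hn => hN₂ n (le_trans (le_max_right _ _) hn)
  have hBR : (0:ℝ) < (B:ℝ) := by exact_mod_cast hB
  set g : ℕ → ℝ := fun k => (c (N+k):ℝ)/Q a (N+k) with hgdef
  have hstep : ∀ k, (B:ℝ) * t a b (N+k) = g k - g (k+1) := by
    intro k
    have hr := (hrec (N+k) (Nat.le_add_right _ _)).1
    have hr' : (B:ℝ) * (b (N+k):ℝ) = (c (N+k):ℝ) * (a (N+k):ℝ) - (c (N+k+1):ℝ) := by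
      exact_mod_cast congrArg (fun z : ℤ => (z : ℝ)) hr
    have hQ1 : Q a (N+k+1) = Q a (N+k) * (a (N+k):ℝ) := Q_succ a _
    have han : ((a (N+k)):ℝ) ≠ 0 := ne_of_gt (by exact_mod_cast ha _)
    have hQne := (Q_pos ha (N+k)).ne'
    show (B:ℝ) * ((b (N+k):ℝ) / Q a (N+k+1)) = (c (N+k):ℝ)/Q a (N+k) - (c (N+k+1):ℝ)/Q a (N+k+1)
    have hsplit : (c (N+k):ℝ)/Q a (N+k) - (c (N+k+1):ℝ)/(Q a (N+k) * (a (N+k):ℝ))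
        = ((c (N+k):ℝ) * (a (N+k):ℝ) - (c (N+k+1):ℝ))/(Q a (N+k) * (a (N+k):ℝ)) := by
      field_simp
    rw [hQ1, hsplit, ← hr', mul_div_assoc]
  have hpartial : ∀ M, ∑ k ∈ Finset.range M, (B:ℝ) * t a b (N+k) = g 0 - g M := by
    intro M
    rw [Finset.sum_congr rfl fun k _ => hstep k]
    exact Finset.sum_range_sub' g M
  have hgtend : Tendsto g atTop (nhds 0) := by
    rw [← tendsto_add_atTop_iff_nat 1]
    apply squeeze_zero_norm (a := fun m => 1/(2*Q a N) * (1/2)^m)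
    · intro m
      have hb2 := (hrec (N+m) (Nat.le_add_right _ _)).2
      have hQm := Q_pos ha (N+m)
      have hQN := Q_pos ha N
      have ham : (0:ℝ) < (a (N+m):ℝ) := by exact_mod_cast ha _
      have hge : Q a N * 2 ^ m ≤ Q a (N + m) := Q_ge ha h2 m
      have e1 : g (m+1) = (c (N+m+1):ℝ) / (Q a (N+m) * (a (N+m):ℝ)) := by
        rw [hgdef]
        show (c (N+(m+1)):ℝ)/Q a (N+(m+1)) = _
        rw [show N+(m+1) = (N+m)+1 from rfl, Q_succ]
      rw [e1, Real.norm_eq_abs, abs_div, abs_of_pos (mul_pos hQm ham)]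
      have e2 : 1/(2*Q a N) * ((1:ℝ)/2)^m = 1 / (2 * (Q a N * 2^m)) := by
        rw [div_pow, one_pow]
        field_simp
      rw [e2, div_le_div_iff₀ (by positivity) (by positivity)]
      have hp2 : (0:ℝ) < (2:ℝ)^m := by positivity
      nlinarith [mul_le_mul_of_nonneg_right hb2.le
          (by positivity : (0:ℝ) ≤ 2*(Q a N * 2^m)),
        mul_le_mul_of_nonneg_right hge ham.le]
    · have := tendsto_pow_atTop_nhds_zero_of_lt_one (by norm_num : (0:ℝ) ≤ 1/2) (by norm_num)
      simpa using this.const_mul (1/(2*Q a N))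
  have hf : Summable fun k => t a b (N+k) :=
    ((summable_nat_add_iff N).2 hsum).congr (fun k => by rw [add_comm])
  have h1 : Tendsto (fun M => ∑ k ∈ Finset.range M, (B:ℝ) * t a b (N+k)) atTop
      (nhds ((B:ℝ) * ∑' k, t a b (N+k))) := (hf.hasSum.mul_left _).tendsto_sum_nat
  have h2' : Tendsto (fun M => g 0 - g M) atTop (nhds (g 0 - 0)) :=
    tendsto_const_nhds.sub hgtend
  have heq : (B:ℝ) * ∑' k, t a b (N+k) = g 0 := by
    have h1' : Tendsto (fun M => g 0 - g M) atTop (nhds ((B:ℝ) * ∑' k, t a b (N+k))) := by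
      refine h1.congr fun M => hpartial M
    have := tendsto_nhds_unique h1' h2'
    simpa using this
  have htshift : ∑' i, t a b (i + N) = ∑' k, t a b (N + k) := tsum_congr fun k => by rw [add_comm]
  have hQN := Q_pos ha N
  have hval : ∑' n, t a b n = (∑ k ∈ Finset.range N, t a b k) + (c N:ℝ)/(Q a N * (B:ℝ)) := by
    rw [← Summable.sum_add_tsum_nat_add N hsum, htshift]
    congr 1
    have hts : ∑' k, t a b (N+k) = g 0 / (B:ℝ) := by
      rw [eq_div_iff (ne_of_gt hBR)]
      linarith [heq]
    rw [hts, hgdef]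
    show (c (N+0):ℝ)/Q a (N+0) / (B:ℝ) = _
    rw [Nat.add_zero, div_div]
  refine ⟨(∑ k ∈ Finset.range N, (b k : ℚ)/(∏ i ∈ Finset.range (k+1), (a i : ℚ))) +
    (c N : ℚ)/((∏ i ∈ Finset.range N, (a i : ℚ)) * (B : ℚ)), ?_⟩
  rw [hval]
  push_cast
  rfl

end ES21

theorem erdos_straus_thm_2_1 (a b : ℕ → ℤ)
    (ha : ∀ n, 0 < a n) (ha1 : ∀ᶠ n in atTop, 1 < a n)
    (hlim : Tendsto (fun n => |(b n : ℝ)| / ((a (n - 1) : ℝ) * (a n : ℝ))) atTop (nhds 0)) :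
    (∃ q : ℚ, (∑' n : ℕ, (b n : ℝ) / ∏ i ∈ Finset.range (n + 1), (a i : ℝ)) = q) ↔
      (∃ B : ℤ, 0 < B ∧ ∃ c : ℕ → ℤ, ∀ᶠ n in atTop,
        B * b n = c n * a n - c (n + 1) ∧ |(c (n + 1) : ℝ)| < (a n : ℝ) / 2) := by
  have key := ES21.key_of ha ha1 hlim
  obtain ⟨N₁, hkey⟩ := key 1 one_pos
  have hsum : Summable (ES21.t a b) :=
    ES21.summable_t ha (fun i hi => (hkey i hi).1) (fun i hi => (hkey i hi).2)
  constructor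
  · rintro ⟨q, hq⟩
    exact ES21.forward ha key hsum q hq
  · rintro ⟨B, hB, c, hc⟩
    exact ES21.backward ha key B hB c hc
end

section
/- Let {b_n} be a sequence of integers and {a_n} a sequence of positive integers with a_n > 1 eventually and lim |b_n|/(a_{n-1} a_n) = 0. Assume additionally that eventually b_n > 0 and a_{n+1} ≥ a_n, that the sequence (b_{n+1} − b_n)/a_n converges with limit ≤ 0, and that liminf a_n/b_n = 0. Then ∑_{n=1}^∞ b_n / (∏_{i=1}^n a_i) is irrational. -/
open Filter Finset

set_option maxHeartbeats 3200000 in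
theorem erdos_straus_cor_2_10 (a b : ℕ → ℤ)
    (ha : ∀ n, 0 < a n) (ha1 : ∀ᶠ n in atTop, 1 < a n)
    (hlim : Tendsto (fun n => |(b n : ℝ)| / ((a (n - 1) : ℝ) * (a n : ℝ))) atTop (nhds 0))
    (hev : ∀ᶠ n in atTop, 0 < b n ∧ a n ≤ a (n + 1))
    (hconv : ∃ L : ℝ, L ≤ 0 ∧
      Tendsto (fun n => ((b (n + 1) : ℝ) - (b n : ℝ)) / (a n : ℝ)) atTop (nhds L))
    (hliminf : Filter.liminf (fun n => (a n : ℝ) / (b n : ℝ)) atTop = 0) :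
    Irrational (∑' n : ℕ, (b n : ℝ) / ∏ i ∈ Finset.range (n + 1), (a i : ℝ)) := by
  by_contra hirr
  obtain ⟨r, hr⟩ := not_not.mp hirr
  -- basic notation
  set f : ℕ → ℝ := fun n => (b n : ℝ) / ∏ i ∈ Finset.range (n + 1), (a i : ℝ) with hf
  set P : ℕ → ℝ := fun n => ∏ i ∈ Finset.range (n + 1), (a i : ℝ) with hPdef
  set S : ℝ := ∑' n : ℕ, f n with hS
  have haR : ∀ n, (0 : ℝ) < a n := fun n => by exact_mod_cast ha n
  have hPpos : ∀ n, 0 < P n := fun n => Finset.prod_pos fun i _ => haR i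
  have hPsucc : ∀ n, P (n + 1) = P n * a (n + 1) := fun n => Finset.prod_range_succ _ _
  have hPf : ∀ m, P m * f m = b m := by
    intro m
    have := (hPpos m).ne'
    show P m * (b m / P m) = b m
    field_simp
  -- the denominator
  have hq0 : (0 : ℝ) < (r.den : ℝ) := by exact_mod_cast r.pos
  set ε : ℝ := 1 / (16 * r.den) with hε
  have hεpos : 0 < ε := by positivity
  -- collect eventual hypotheses
  obtain ⟨L, hL0, hLtend⟩ := hconv
  have e1 : ∀ᶠ n in atTop, |(b n : ℝ)| / ((a (n - 1) : ℝ) * (a n : ℝ)) < ε :=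
    hlim.eventually (gt_mem_nhds hεpos)
  have e2 : ∀ᶠ n in atTop, ((b (n + 1) : ℝ) - (b n : ℝ)) / (a n : ℝ) < ε :=
    hLtend.eventually (gt_mem_nhds (hL0.trans_lt hεpos))
  obtain ⟨N0, hN0⟩ := eventually_atTop.mp ((ha1.and hev).and (e1.and e2))
  set N : ℕ := N0 + 1 with hN
  have key2 : ∀ n ≥ N, (2 : ℝ) ≤ a n := by
    intro n hn
    have := (hN0 n (le_trans (Nat.le_succ N0) hn)).1.1
    exact_mod_cast this
  have keyb : ∀ n ≥ N, (0 : ℝ) < b n := by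
    intro n hn
    have := (hN0 n (le_trans (Nat.le_succ N0) hn)).1.2.1
    exact_mod_cast this
  have keymono : ∀ n ≥ N, (a n : ℝ) ≤ a (n + 1) := by
    intro n hn
    have := (hN0 n (le_trans (Nat.le_succ N0) hn)).1.2.2
    exact_mod_cast this
  -- |b (n+1)| ≤ ε a n a (n+1) for n ≥ N
  have keybb : ∀ n ≥ N, (b (n + 1) : ℝ) ≤ ε * (a n * a (n + 1)) := by
    intro n hn
    have h := (hN0 (n + 1) (le_trans (Nat.le_succ N0) (le_trans hn (Nat.le_succ n)))).2.1
    simp only [Nat.add_sub_cancel] at h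
    have hpos : (0 : ℝ) < (a n : ℝ) * a (n + 1) := mul_pos (haR n) (haR (n + 1))
    have := (div_lt_iff₀ hpos).mp h
    calc (b (n + 1) : ℝ) ≤ |(b (n + 1) : ℝ)| := le_abs_self _
      _ ≤ ε * (a n * a (n + 1)) := by linarith
  have keystep : ∀ n ≥ N, (b (n + 1) : ℝ) - b n ≤ ε * a n := by
    intro n hn
    have h := (hN0 n (le_trans (Nat.le_succ N0) hn)).2.2
    have := (div_lt_iff₀ (haR n)).mp h
    linarith
  -- growth of P
  have hPgrow : ∀ k, P N * 2 ^ k ≤ P (N + k) := by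
    intro k
    induction k with
    | zero => simp
    | succ k ih =>
      have h2 : (2 : ℝ) ≤ a (N + k + 1) := key2 _ (by omega)
      have := hPpos (N + k)
      calc P N * 2 ^ (k + 1) = (P N * 2 ^ k) * 2 := by ring
        _ ≤ P (N + k) * a (N + k + 1) := by nlinarith [hPpos N, pow_pos (by norm_num : (0:ℝ) < 2) k]
        _ = P (N + (k + 1)) := by rw [← hPsucc]; ring_nf
  -- summability
  have hfb : ∀ n : ℕ, |f (n + (N + 2))| ≤ (1 / P N) * (1 / 2) ^ n := by
    intro n
    have hm : P (n + (N + 2)) = P (N + n) * a (N + n + 1) * a (N + n + 2) := by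
      have e : n + (N + 2) = (N + n + 1) + 1 := by omega
      rw [e, hPsucc, hPsucc]
    have hb1 : |(b (n + (N + 2)) : ℝ)| ≤ (a (N + n + 1) : ℝ) * a (N + n + 2) := by
      have h := (hN0 (n + (N + 2)) (by omega)).2.1
      have hpos : (0 : ℝ) < (a ((n + (N+2)) - 1) : ℝ) * a (n + (N + 2)) :=
        mul_pos (haR _) (haR _)
      have h2 := (div_lt_iff₀ hpos).mp h
      have he1 : n + (N + 2) - 1 = N + n + 1 := by omega
      have he2 : n + (N + 2) = N + n + 2 := by omega
      rw [he1, he2] at h2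
      rw [he2]
      have hε1 : ε ≤ 1 := by
        rw [hε, div_le_one (by positivity)]
        have : (1:ℝ) ≤ r.den := by exact_mod_cast r.pos
        linarith
      nlinarith [mul_pos (haR (N+n+1)) (haR (N+n+2))]
    have habs : |f (n + (N + 2))| = |(b (n + (N + 2)) : ℝ)| / P (n + (N + 2)) := by
      rw [hf, abs_div, abs_of_pos (hPpos _)]
    have h1 : |f (n + (N + 2))| ≤ 1 / P (N + n) := by
      rw [habs, hm, div_le_div_iff₀ (mul_pos (mul_pos (hPpos _) (haR _)) (haR _)) (hPpos (N+n))]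
      nlinarith [hPpos (N+n), mul_pos (haR (N+n+1)) (haR (N+n+2)),
        abs_nonneg ((b (n + (N+2)) : ℝ))]
    refine h1.trans ?_
    have heq : (1:ℝ) / P N * (1 / 2) ^ n = 1 / (P N * 2 ^ n) := by
      rw [one_div_pow, div_mul_div_comm, one_mul]
    rw [heq]
    exact one_div_le_one_div_of_le (mul_pos (hPpos N) (pow_pos (by norm_num) n)) (hPgrow n)
  have hgsum : Summable (fun n : ℕ => (1 / P N) * (1 / 2 : ℝ) ^ n) :=
    (summable_geometric_of_lt_one (by norm_num) (by norm_num)).mul_left _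
  have hsum : Summable f := by
    rw [← summable_nat_add_iff (N + 2)]
    exact Summable.of_abs (Summable.of_nonneg_of_le (fun n => abs_nonneg _) hfb hgsum)
  -- tails
  have hsumshift : ∀ n : ℕ, Summable fun k => f (k + n) := fun n =>
    (summable_nat_add_iff n).mpr hsum
  set T : ℕ → ℝ := fun n => ∑' k : ℕ, f (k + (n + 1)) with hT
  set t : ℕ → ℝ := fun n => P n * T n with ht
  have hTtail : ∀ n, T n = S - ∑ k ∈ range (n + 1), f k := by
    intro n
    have h := Summable.sum_add_tsum_nat_add (f := f) (n + 1) hsum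
    rw [hT, hS]
    simp only
    rw [← h]
    ring
  have hTrec : ∀ n, T n = f (n + 1) + T (n + 1) := by
    intro n
    have h := Summable.tsum_eq_zero_add (hsumshift (n + 1))
    rw [hT]
    simp only
    rw [h]
    congr 1
    · simp
    · apply tsum_congr; intro k; congr 1; omega
  have hTpos : ∀ n ≥ N, 0 < T n := by
    intro n hn
    apply Summable.tsum_pos (hsumshift (n + 1)) _ 0
    · have : 0 < b (0 + (n + 1)) := by
        have := keyb (0 + (n + 1)) (by omega)
        exact_mod_cast this
      exact div_pos (by exact_mod_cast this) (hPpos _)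
    · intro k
      have hbk : (0:ℝ) < b (k + (n + 1)) := keyb _ (by omega)
      exact le_of_lt (div_pos hbk (hPpos _))
  have htpos : ∀ n ≥ N, 0 < t n := fun n hn => mul_pos (hPpos n) (hTpos n hn)
  have htrec : ∀ n, t (n + 1) = a (n + 1) * t n - b (n + 1) := by
    intro n
    have h1 : t (n + 1) = P n * a (n + 1) * T (n + 1) := by rw [ht]; simp only; rw [hPsucc]
    have h2 : T (n + 1) = T n - f (n + 1) := by rw [hTrec n]; ring
    have h3 : P (n + 1) * f (n + 1) = b (n + 1) := hPf (n + 1)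
    rw [hPsucc] at h3
    rw [h1, h2]
    rw [ht]
    simp only
    nlinarith [h3]
  -- integrality
  have hPsplit : ∀ k n : ℕ, k ≤ n → P k * ∏ i ∈ Ico (k + 1) (n + 1), (a i : ℝ) = P n := by
    intro k n hkn
    simp only [hPdef, Finset.range_eq_Ico]
    exact Finset.prod_Ico_consecutive _ (by omega) (by omega)
  set M : ℕ → ℤ := fun n => r.num * (∏ i ∈ range (n + 1), a i) -
      r.den * ∑ k ∈ range (n + 1), b k * ∏ i ∈ Ico (k + 1) (n + 1), a i with hM
  have hMt : ∀ n, (M n : ℝ) = r.den * t n := by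
    intro n
    have hnum : (r.num : ℝ) = r.den * S := by
      rw [← hr, Rat.cast_def]
      field_simp
    have hterm : ∀ k ∈ range (n + 1), P n * f k = (b k : ℝ) * ∏ i ∈ Ico (k + 1) (n + 1), (a i : ℝ) := by
      intro k hk
      have hkn : k ≤ n := by simpa using Nat.lt_succ_iff.mp (Finset.mem_range.mp hk)
      have hsp := hPsplit k n hkn
      have hfk : f k = b k / P k := rfl
      rw [hfk]
      rw [← hsp]
      field_simp [(hPpos k).ne']
    have hcast : ((∏ i ∈ range (n + 1), a i : ℤ) : ℝ) = P n := by
      rw [hPdef]; push_cast; rfl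
    have hcast2 : ((∑ k ∈ range (n + 1), b k * ∏ i ∈ Ico (k + 1) (n + 1), a i : ℤ) : ℝ)
        = ∑ k ∈ range (n + 1), P n * f k := by
      rw [Finset.sum_congr rfl hterm]
      push_cast
      rfl
    rw [hM]
    push_cast [hcast, hcast2]
    rw [← Finset.mul_sum]
    have hTn := hTtail n
    rw [ht]
    simp only
    rw [hTn, hnum]
    ring
  -- t n is a positive multiple of 1/q
  have hint : ∀ n ≥ N, 1 ≤ (r.den : ℝ) * t n := by
    intro n hn
    have h1 : (0:ℝ) < M n := by rw [hMt]; exact mul_pos hq0 (htpos n hn)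
    have h2 : (0:ℤ) < M n := by exact_mod_cast h1
    have h3 : (1:ℤ) ≤ M n := h2
    calc (1:ℝ) ≤ (M n : ℝ) := by exact_mod_cast h3
      _ = r.den * t n := hMt n
  -- terms of the tail
  have hterm2 : ∀ n k : ℕ, P n * f (k + (n + 1)) =
      (b (k + (n + 1)) : ℝ) / ∏ i ∈ Ico (n + 1) (k + n + 2), (a i : ℝ) := by
    intro n k
    have hsp := hPsplit n (k + (n + 1)) (by omega)
    have he : k + (n + 1) + 1 = k + n + 2 := by omega
    rw [he] at hsp
    have hfk : f (k + (n + 1)) = b (k + (n + 1)) / P (k + (n + 1)) := rfl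
    have hIpos : (0:ℝ) < ∏ i ∈ Ico (n + 1) (k + n + 2), (a i : ℝ) :=
      Finset.prod_pos fun i _ => haR i
    rw [hfk, ← hsp]
    field_simp
    exact mul_div_cancel_left₀ _ (hPpos n).ne'
  -- upper bound for the tail
  have htub : ∀ n ≥ N, t n ≤ 2 * ε * a n := by
    intro n hn
    have h1 : t n = ∑' k : ℕ, P n * f (k + (n + 1)) := by
      rw [ht]; simp only; rw [tsum_mul_left]
    have hsummandle : ∀ k : ℕ, P n * f (k + (n + 1)) ≤ (ε * a n) * (1/2 : ℝ)^k := by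
      intro k
      rw [hterm2 n k]
      have hIpos : (0:ℝ) < ∏ i ∈ Ico (n + 1) (k + n + 2), (a i : ℝ) :=
        Finset.prod_pos fun i _ => haR i
      rw [div_le_iff₀ hIpos]
      have hbk : (b (k + (n + 1)) : ℝ) ≤ ε * (a (k + n) * a (k + n + 1)) := by
        have h := keybb (k + n) (by omega)
        have he : k + (n + 1) = k + n + 1 := by omega
        rw [he]
        exact h
      have han : (2:ℝ) ≤ a n := key2 n hn
      cases k with
      | zero =>
        rw [show 0 + n + 2 = (n + 1) + 1 from by omega,
          Finset.prod_Ico_succ_top le_rfl, Finset.Ico_self, Finset.prod_empty, one_mul]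
        simp only [pow_zero, mul_one]
        have := haR (n + 1)
        have h0 : (b (0 + (n + 1)) : ℝ) ≤ ε * (a (0 + n) * a (0 + n + 1)) := hbk
        simp only [Nat.zero_add] at h0 ⊢
        nlinarith
      | succ j =>
        have hsplit1 : ∏ i ∈ Ico (n + 1) (j + 1 + n + 2), (a i : ℝ) =
            (∏ i ∈ Ico (n + 1) (j + n + 1), (a i : ℝ)) * a (j + n + 1) * a (j + n + 2) := by
          rw [show j + 1 + n + 2 = (j + n + 2) + 1 from by omega,
            Finset.prod_Ico_succ_top (by omega),
            show j + n + 2 = (j + n + 1) + 1 from by omega,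
            Finset.prod_Ico_succ_top (by omega)]
        have hprodge : (2:ℝ)^j ≤ ∏ i ∈ Ico (n + 1) (j + n + 1), (a i : ℝ) := by
          have hcard : (Ico (n + 1) (j + n + 1)).card = j := by
            rw [Nat.card_Ico]; omega
          calc (2:ℝ)^j = ∏ _i ∈ Ico (n + 1) (j + n + 1), (2:ℝ) := by
                rw [Finset.prod_const, hcard]
            _ ≤ ∏ i ∈ Ico (n + 1) (j + n + 1), (a i : ℝ) := by
                apply Finset.prod_le_prod (fun i _ => by norm_num)
                intro i hi
                exact key2 i (le_trans (by omega) (Finset.mem_Ico.mp hi).1)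
        have hbk2 : (b (j + 1 + (n + 1)) : ℝ) ≤ ε * (a (j + n + 1) * a (j + n + 2)) := by
          have h := keybb (j + n + 1) (by omega)
          rw [show j + 1 + (n + 1) = j + n + 1 + 1 from by omega]
          rw [show j + n + 2 = j + n + 1 + 1 from by omega]
          exact h
        have hpow : (2:ℝ) * 2^j * (1/2:ℝ)^(j + 1) = 1 := by
          rw [div_pow, one_pow, pow_succ]
          have : (2:ℝ)^j ≠ 0 := by positivity
          field_simp
        rw [hsplit1]
        have hA1 := haR (j + n + 1)
        have hA2 := haR (j + n + 2)
        have hp2 : (0:ℝ) < (1/2:ℝ)^(j+1) := by positivity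
        have hp3 : (0:ℝ) < (2:ℝ)^j := by positivity
        calc (b (j + 1 + (n + 1)) : ℝ) ≤ ε * (a (j + n + 1) * a (j + n + 2)) := hbk2
          _ = ε * (2 * 2^j * (1/2:ℝ)^(j+1)) * (a (j + n + 1) * a (j + n + 2)) := by
              rw [hpow]; ring
          _ ≤ ε * (a n * 2^j * (1/2:ℝ)^(j+1)) * (a (j + n + 1) * a (j + n + 2)) := by
              have : (0:ℝ) < a (j+n+1) * a (j+n+2) := mul_pos hA1 hA2
              have hmul : ε * (2 * 2^j * (1/2:ℝ)^(j+1)) ≤ ε * (a n * 2^j * (1/2:ℝ)^(j+1)) := by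
                apply mul_le_mul_of_nonneg_left _ (le_of_lt hεpos)
                apply mul_le_mul_of_nonneg_right _ (le_of_lt hp2)
                exact mul_le_mul_of_nonneg_right han (le_of_lt hp3)
              exact mul_le_mul_of_nonneg_right hmul (le_of_lt this)
          _ ≤ ε * a n * (1/2:ℝ)^(j+1) * ((∏ i ∈ Ico (n + 1) (j + n + 1), (a i : ℝ)) *
                a (j + n + 1) * a (j + n + 2)) := by
              have h2an : (0:ℝ) < a n := haR n
              have hpos0 : (0:ℝ) ≤ ε * a n * (1/2:ℝ)^(j+1) :=
                le_of_lt (mul_pos (mul_pos hεpos h2an) hp2)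
              calc ε * ((a n : ℝ) * 2^j * (1/2:ℝ)^(j+1)) * ((a (j+n+1) : ℝ) * a (j+n+2))
                  = (ε * a n * (1/2:ℝ)^(j+1)) * (2^j * ((a (j+n+1) : ℝ) * a (j+n+2))) := by
                    ring
                _ ≤ (ε * a n * (1/2:ℝ)^(j+1)) *
                      ((∏ i ∈ Ico (n + 1) (j + n + 1), (a i : ℝ)) *
                        ((a (j+n+1) : ℝ) * a (j+n+2))) := by
                    exact mul_le_mul_of_nonneg_left (mul_le_mul_of_nonneg_right hprodge
                      (le_of_lt (mul_pos hA1 hA2))) hpos0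
                _ = ε * a n * (1/2:ℝ)^(j+1) * ((∏ i ∈ Ico (n + 1) (j + n + 1), (a i : ℝ)) *
                      a (j + n + 1) * a (j + n + 2)) := by ring
    have hs1 : Summable fun k : ℕ => P n * f (k + (n + 1)) := (hsumshift (n + 1)).mul_left _
    have hs2 : Summable fun k : ℕ => (ε * a n) * (1/2 : ℝ)^k :=
      (summable_geometric_of_lt_one (by norm_num) (by norm_num)).mul_left _
    rw [h1]
    calc ∑' k : ℕ, P n * f (k + (n + 1)) ≤ ∑' k : ℕ, (ε * a n) * (1/2 : ℝ)^k :=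
          Summable.tsum_le_tsum hsummandle hs1 hs2
      _ = (ε * a n) * ∑' k : ℕ, ((1:ℝ)/2)^k := tsum_mul_left
      _ = (ε * a n) * 2 := by rw [tsum_geometric_two]
      _ = 2 * ε * a n := by ring
  -- the comparison sequence c
  set c : ℕ → ℝ := fun n => (b n : ℝ) / ((a n : ℝ) - 1) with hc
  have hcpos : ∀ n ≥ N, 0 < c n := by
    intro n hn
    exact div_pos (keyb n hn) (by linarith [key2 n hn])
  have hcub : ∀ n ≥ N, c (n + 1) ≤ 2 * ε * a n := by
    intro n hn
    have h2 : (2:ℝ) ≤ a (n + 1) := key2 (n + 1) (by omega)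
    have hb := keybb n hn
    rw [hc]
    simp only
    rw [div_le_iff₀ (by linarith : (0:ℝ) < (a (n+1) : ℝ) - 1)]
    have han : (0:ℝ) < a n := haR n
    nlinarith [mul_pos hεpos han]
  have hcstep : ∀ n ≥ N, c (n + 1) ≤ c n + 2 * ε := by
    intro n hn
    have h2 : (2:ℝ) ≤ a n := key2 n hn
    have h2' : (2:ℝ) ≤ a (n + 1) := key2 (n + 1) (by omega)
    have hmono := keymono n hn
    have hstep := keystep n hn
    have hbn := keyb n hn
    have hbn1 := keyb (n + 1) (by omega : n + 1 ≥ N)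
    have hA : (0:ℝ) < (a n : ℝ) - 1 := by linarith
    have hA' : (0:ℝ) < (a (n+1) : ℝ) - 1 := by linarith
    have e1 : (b (n+1) : ℝ) / ((a (n+1) : ℝ) - 1) ≤ (b (n+1) : ℝ) / ((a n : ℝ) - 1) := by
      have hd := one_div_le_one_div_of_le hA (by linarith : (a n : ℝ) - 1 ≤ (a (n+1):ℝ) - 1)
      calc (b (n+1) : ℝ) / ((a (n+1) : ℝ) - 1) = (b (n+1):ℝ) * (1/((a (n+1):ℝ) - 1)) := by
            rw [mul_one_div]
        _ ≤ (b (n+1):ℝ) * (1/((a n:ℝ) - 1)) := mul_le_mul_of_nonneg_left hd (le_of_lt hbn1)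
        _ = (b (n+1) : ℝ) / ((a n : ℝ) - 1) := by rw [mul_one_div]
    have e2 : (b (n+1) : ℝ) / ((a n : ℝ) - 1) ≤ ((b n : ℝ) + ε * a n) / ((a n : ℝ) - 1) := by
      apply div_le_div_of_nonneg_right ?_ hA.le
      linarith
    have e3 : ((b n : ℝ) + ε * a n) / ((a n : ℝ) - 1) ≤ (b n : ℝ) / ((a n : ℝ) - 1) + 2 * ε := by
      rw [add_div]
      have e4 : ε * (a n : ℝ) / ((a n : ℝ) - 1) ≤ 2 * ε := by
        rw [div_le_iff₀ hA]
        nlinarith [hεpos]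
      linarith
    rw [hc]
    simp only
    linarith
  -- the g identity and bounds
  have hgid : ∀ n ≥ N, t (n + 1) = a (n + 1) * (t n - c (n + 1)) + c (n + 1) := by
    intro n hn
    have h2 : (2:ℝ) ≤ a (n + 1) := key2 (n + 1) (by omega)
    have hbc : ((a (n+1) : ℝ) - 1) * c (n + 1) = b (n + 1) := by
      rw [hc]
      simp only
      field_simp
      exact mul_div_cancel_left₀ _ (by linarith : ((a (n+1):ℝ) - 1) ≠ 0)
    linear_combination htrec n + hbc
  have hglb : ∀ n ≥ N, -(2 * ε) ≤ t n - c (n + 1) := by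
    intro n hn
    have hid := hgid n hn
    have htp := htpos (n + 1) (by omega)
    have hcu := hcub n hn
    have hmono := keymono n hn
    have h2 : (2:ℝ) ≤ a (n + 1) := key2 (n + 1) (by omega)
    nlinarith [haR (n + 1), hεpos, mul_pos hεpos (haR (n+1))]
  have hgub : ∀ n ≥ N, t n - c (n + 1) < 4 * ε := by
    intro n hn
    by_contra hcon
    push_neg at hcon
    have hid := hgid n hn
    have hub := htub (n + 1) (by omega)
    have hcp := hcpos (n + 1) (by omega)
    have h2 : (2:ℝ) ≤ a (n + 1) := key2 (n + 1) (by omega)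
    nlinarith [hεpos, haR (n + 1), mul_pos hεpos (haR (n + 1))]
  -- eventual monotonicity of t
  have htmono : ∀ n ≥ N, t (n + 1) ≤ t n := by
    intro n hn
    have h1 : t (n + 1) - t n ≤ 8 * ε := by
      have hu := hgub (n + 1) (by omega)
      have hl := hglb n hn
      have hs := hcstep (n + 1) (by omega)
      linarith
    have h2 : (M (n+1) : ℝ) - M n ≤ (r.den : ℝ) * (8 * ε) := by
      rw [hMt, hMt]
      nlinarith [hq0]
    have h3 : (r.den : ℝ) * (8 * ε) = 1 / 2 := by
      rw [hε]
      field_simp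
      ring
    have h5 : M (n + 1) ≤ M n := by
      have h4 : (M (n + 1) : ℝ) < M n + 1 := by linarith
      exact_mod_cast Int.lt_add_one_iff.mp (by exact_mod_cast h4)
    have h6 : (M (n + 1) : ℝ) ≤ M n := by exact_mod_cast h5
    rw [hMt, hMt] at h6
    nlinarith [hq0]
  have htbound : ∀ n ≥ N, t n ≤ t N := by
    intro n hn
    induction n, hn using Nat.le_induction with
    | base => exact le_refl _
    | succ n hn ih => exact le_trans (htmono n hn) ih
  -- final case analysis
  by_cases hcase : ∀ δ : ℝ, 0 < δ → ∃ᶠ n in atTop, (a n : ℝ) / b n < δ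
  · -- Case 1 : b n / a n is frequently huge, contradicting t n ≤ t N
    have htN := htpos N le_rfl
    set δ : ℝ := 1 / (t N + 3 * ε + 1) with hδ
    have hδpos : 0 < δ := div_pos one_pos (by linarith)
    obtain ⟨n, hn1, hn2⟩ := ((hcase δ hδpos).and_eventually (eventually_ge_atTop (N + 1))).exists
    obtain ⟨m, rfl⟩ : ∃ m, n = m + 1 := ⟨n - 1, by omega⟩
    have hmN : m ≥ N := by omega
    have hbpos := keyb (m + 1) (by omega : m + 1 ≥ N)
    have hapos : (0:ℝ) < a (m + 1) := haR (m + 1)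
    have hba : t N + 3 * ε + 1 < (b (m + 1) : ℝ) / a (m + 1) := by
      have h1 : (a (m + 1) : ℝ) < δ * b (m + 1) := by
        have := (div_lt_iff₀ hbpos).mp hn1
        linarith
      rw [lt_div_iff₀ hapos]
      have hX : (0:ℝ) < t N + 3 * ε + 1 := by linarith
      have h2 : (t N + 3*ε+1) * (a (m+1) : ℝ) < (t N + 3*ε+1) * (δ * b (m+1)) :=
        mul_lt_mul_of_pos_left h1 hX
      have hXδ : (t N + 3*ε+1) * δ = 1 := by
        rw [hδ]
        field_simp
      nlinarith
    have hcge : (b (m + 1) : ℝ) / a (m + 1) ≤ c (m + 1) := by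
      rw [hc]
      simp only
      have h2 : (2:ℝ) ≤ a (m + 1) := key2 (m + 1) (by omega)
      have hd := one_div_le_one_div_of_le (by linarith : (0:ℝ) < (a (m+1):ℝ) - 1)
        (by linarith : (a (m+1):ℝ) - 1 ≤ (a (m+1):ℝ))
      calc (b (m+1):ℝ) / a (m+1) = (b (m+1):ℝ) * (1 / (a (m+1):ℝ)) := by rw [mul_one_div]
        _ ≤ (b (m+1):ℝ) * (1 / ((a (m+1):ℝ) - 1)) :=
            mul_le_mul_of_nonneg_left hd (le_of_lt hbpos)
        _ = (b (m+1):ℝ) / ((a (m+1):ℝ) - 1) := by rw [mul_one_div]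
    have hgm := hglb m hmN
    have := htbound m hmN
    linarith
  · push_neg at hcase
    obtain ⟨δ, hδpos, hδfr⟩ := hcase
    replace hδfr : ∀ᶠ n in atTop, ¬ (a n : ℝ) / b n < δ := hδfr.mono fun n h => not_lt.mpr h
    by_cases hbd : ∃ Mb : ℝ, ∃ᶠ n in atTop, (a n : ℝ) / b n ≤ Mb
    · -- Case 2a : liminf really is a limit point, contradiction with δ ≤ liminf = 0
      obtain ⟨Mb, hMb⟩ := hbd
      have hcob : IsCoboundedUnder (· ≥ ·) atTop (fun n => (a n : ℝ) / b n) := by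
        refine ⟨Mb, fun x hx => ?_⟩
        rw [eventually_map] at hx
        obtain ⟨n, h1, h2⟩ := (hx.and_frequently hMb).exists
        exact le_trans h1 h2
      have hge : δ ≤ liminf (fun n => (a n : ℝ) / b n) atTop :=
        le_liminf_of_le hcob (hδfr.mono fun n h => not_lt.mp h)
      rw [hliminf] at hge
      linarith
    · -- Case 2b : a n / b n → ∞, so c → 0 and t n < 1 / q eventually
      push_neg at hbd
      have hbig : ∀ᶠ n in atTop, (1:ℝ) / ε < (a n : ℝ) / b n := by
        have h := hbd (1 / ε)
        replace h : ∀ᶠ n in atTop, ¬ (a n : ℝ) / b n ≤ 1 / ε := h.mono fun n h => not_le.mpr h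
        exact h.mono fun n h => not_le.mp h
      obtain ⟨n, hn1, hn2⟩ := (hbig.and (eventually_ge_atTop (N + 1))).exists
      obtain ⟨m, rfl⟩ : ∃ m, n = m + 1 := ⟨n - 1, by omega⟩
      have hmN : m ≥ N := by omega
      have hbpos := keyb (m + 1) (by omega : m + 1 ≥ N)
      have hapos : (0:ℝ) < a (m + 1) := haR (m + 1)
      have h2 : (2:ℝ) ≤ a (m + 1) := key2 (m + 1) (by omega)
      have hblt : (b (m + 1) : ℝ) < ε * a (m + 1) := by
        have h1 := (lt_div_iff₀ hbpos).mp hn1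
        have h3 : (1 / ε) * (b (m+1):ℝ) < a (m+1) := by linarith
        have h4 := mul_lt_mul_of_pos_left h3 hεpos
        rw [mul_comm] at h4
        calc (b (m+1):ℝ) = ε * ((1/ε) * (b (m+1):ℝ)) := by field_simp
          _ < ε * (a (m+1):ℝ) := mul_lt_mul_of_pos_left h3 hεpos
      have hclt : c (m + 1) ≤ 2 * ε := by
        rw [hc]
        simp only
        rw [div_le_iff₀ (by linarith : (0:ℝ) < (a (m+1):ℝ) - 1)]
        nlinarith [hεpos]
      have hgu := hgub m hmN
      have hq1 := hint m hmN
      have h6 : (r.den : ℝ) * (6 * ε) = 6 / 16 := by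
        rw [hε]
        field_simp
      have h7 : t m < 6 * ε := by linarith
      nlinarith [hq0]
end

section
/- Let A > 1 be real, {d_n} a sequence of reals with d_n > 1 for all n such that the infinite product ∏ d_n converges, and let {a_n}, {b_n} be sequences of positive integers with lim_{n→∞} a_n^{1/2^n} = A, with A / a_n^{1/2^n} > ∏_{j=n}^∞ d_j for all n ≥ s (for some s > 0), and with d_n^{2^n}/b_n → ∞. Then ∑_{n=1}^∞ b_n/a_n is irrational. -/
open Filter Finset

lemma Hancl3_prod_le_tprod (d : ℕ → ℝ) (hd : ∀ n, 1 < d n) (hdprod : Multipliable d)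
    (F : Finset ℕ) : ∏ i ∈ F, d i ≤ ∏' i, d i := by
  refine ge_of_tendsto hdprod.hasProd (eventually_atTop.2 ⟨F, fun G hFG => ?_⟩)
  have h1 : (1:ℝ) ≤ ∏ i ∈ G \ F, d i := by
    calc (1:ℝ) = ∏ i ∈ G \ F, 1 := by simp
    _ ≤ ∏ i ∈ G \ F, d i := Finset.prod_le_prod (by simp) (fun i _ => (hd i).le)
  have h2 : (0:ℝ) < ∏ i ∈ F, d i :=
    Finset.prod_pos fun i _ => lt_trans one_pos (hd i)
  have h3 : (∏ i ∈ G \ F, d i) * ∏ i ∈ F, d i = ∏ i ∈ G, d i := Finset.prod_sdiff hFG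
  nlinarith

lemma Hancl3_summable_log (d : ℕ → ℝ) (hd : ∀ n, 1 < d n) (hdprod : Multipliable d) :
    Summable (fun n => Real.log (d n)) := by
  apply summable_of_sum_le (c := Real.log (∏' i, d i))
    (fun n => Real.log_nonneg (hd n).le)
  intro F
  rw [← Real.log_prod (fun i _ => (lt_trans one_pos (hd i)).ne')]
  apply Real.log_le_log (Finset.prod_pos fun i _ => lt_trans one_pos (hd i))
  exact Hancl3_prod_le_tprod d hd hdprod F

lemma Hancl3_tail_bound (c : ℝ) (hc : 0 < c) (m : ℕ) (g : ℕ → ℝ)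
    (hgs : Summable g)
    (hgle : ∀ i, g i ≤ Real.exp (-(c * 2 ^ (i + m)))) :
    ∑' i, g i ≤ Real.exp (-(c * 2 ^ m)) * (1 - Real.exp (-c))⁻¹ := by
  have hr0 : (0:ℝ) ≤ Real.exp (-c) := (Real.exp_pos _).le
  have hr1 : Real.exp (-c) < 1 := Real.exp_lt_one_iff.2 (by linarith)
  have hsum2 : Summable (fun i : ℕ => Real.exp (-(c * 2 ^ m)) * Real.exp (-c) ^ i) :=
    (summable_geometric_of_lt_one hr0 hr1).mul_left _
  have hpt : ∀ i : ℕ, g i ≤ Real.exp (-(c * 2 ^ m)) * Real.exp (-c) ^ i := by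
    intro i
    refine (hgle i).trans ?_
    rw [← Real.exp_nat_mul, ← Real.exp_add]
    apply Real.exp_le_exp.2
    have h2 : (2:ℝ) ^ m + i ≤ 2 ^ (i + m) := by
      have hi : (i:ℝ) + 1 ≤ 2 ^ i := by
        exact_mod_cast (Nat.lt_two_pow_self (n := i))
      have h2m : (1:ℝ) ≤ 2 ^ m := one_le_pow₀ (by norm_num)
      calc (2:ℝ) ^ m + i ≤ 2 ^ m + i * 2 ^ m := by
            nlinarith [pow_pos (show (0:ℝ) < 2 by norm_num) m]
      _ = (i + 1) * 2 ^ m := by ring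
      _ ≤ 2 ^ i * 2 ^ m := by nlinarith
      _ = 2 ^ (i + m) := (pow_add 2 i m).symm
    nlinarith
  calc ∑' i, g i ≤ ∑' i, Real.exp (-(c * 2 ^ m)) * Real.exp (-c) ^ i :=
        Summable.tsum_le_tsum hpt hgs hsum2
  _ = Real.exp (-(c * 2 ^ m)) * ∑' i, Real.exp (-c) ^ i := tsum_mul_left
  _ = Real.exp (-(c * 2 ^ m)) * (1 - Real.exp (-c))⁻¹ := by
      rw [tsum_geometric_of_lt_one hr0 hr1]

set_option maxHeartbeats 2000000 in
theorem Hancl3 (A : ℝ) (d : ℕ → ℝ) (a b : ℕ → ℤ) (s : ℕ)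
    (hA : 1 < A) (hd : ∀ n, 1 < d n) (hdprod : Multipliable d)
    (ha : ∀ n, 0 < a n) (hb : ∀ n, 0 < b n) (hs : 0 < s)
    (assu1 : Tendsto (fun n => (a n : ℝ) ^ ((1 : ℝ) / 2 ^ n)) atTop (nhds A))
    (assu2 : ∀ n ≥ s, (∏' j : ℕ, d (n + j)) < A / (a n : ℝ) ^ ((1 : ℝ) / 2 ^ n))
    (assu3 : Tendsto (fun n => d n ^ (2 ^ n : ℕ) / (b n : ℝ)) atTop atTop) :
    Irrational (∑' n : ℕ, (b n : ℝ) / (a n : ℝ)) := by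
  have hA0 : (0:ℝ) < A := by linarith
  set L := Real.log A with hLdef
  have hL : 0 < L := Real.log_pos hA
  have haR : ∀ n, (0:ℝ) < (a n : ℝ) := fun n => by exact_mod_cast ha n
  have hbR : ∀ n, (0:ℝ) < (b n : ℝ) := fun n => by exact_mod_cast hb n
  have hd0 : ∀ n, (0:ℝ) < d n := fun n => lt_trans one_pos (hd n)
  have h2n : ∀ n : ℕ, (0:ℝ) < (2:ℝ) ^ n := fun n => pow_pos two_pos n
  -- the exponent sequence u
  set u : ℕ → ℝ := fun n => L - Real.log (a n) / 2 ^ n with hudef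
  have hloga : ∀ n, Real.log (a n) = (L - u n) * 2 ^ n := by
    intro n
    have := h2n n
    rw [show u n = L - Real.log (a n) / 2 ^ n from rfl]
    field_simp
    ring
  have hau : ∀ n, (a n : ℝ) = Real.exp ((L - u n) * 2 ^ n) := fun n => by
    rw [← hloga n, Real.exp_log (haR n)]
  have hu0 : Tendsto u atTop (nhds 0) := by
    have hlog1 : Tendsto (fun n => Real.log ((a n:ℝ) ^ ((1:ℝ)/2^n))) atTop (nhds L) :=
      ((Real.continuousAt_log (ne_of_gt hA0)).tendsto).comp assu1
    have heq : (fun n => Real.log ((a n:ℝ) ^ ((1:ℝ)/2^n)))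
        = fun n => Real.log (a n) / 2 ^ n := by
      funext n
      rw [Real.log_rpow (haR n)]
      ring
    rw [heq] at hlog1
    have := tendsto_const_nhds (x := L) (f := atTop (α := ℕ)) |>.sub hlog1
    simpa [hudef] using this
  -- log of d
  set dl : ℕ → ℝ := fun n => Real.log (d n) with hdldef
  have hdlpos : ∀ n, 0 < dl n := fun n => Real.log_pos (hd n)
  have hdlsum : Summable dl := Hancl3_summable_log d hd hdprod
  have hdl0 : Tendsto dl atTop (nhds 0) := hdlsum.tendsto_atTop_zero
  have htailsum : ∀ n, Summable (fun j => dl (n + j)) := by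
    intro n
    have := (summable_nat_add_iff n).2 hdlsum
    simpa [add_comm] using this
  set t : ℕ → ℝ := fun n => ∑' j, dl (n + j) with htdef
  have ht0 : ∀ n, 0 ≤ t n := fun n => tsum_nonneg fun j => (hdlpos _).le
  have hexp_t : ∀ n, Real.exp (t n) = ∏' j, d (n + j) := by
    intro n
    have h := Real.rexp_tsum_eq_tprod (f := fun j => d (n + j))
      (fun j => hd0 _) (htailsum n)
    exact h
  have hstep : ∀ k, t k = dl k + t (k + 1) := by
    intro k
    calc t k = dl (k + 0) + ∑' j, dl (k + (j + 1)) := Summable.tsum_eq_zero_add (htailsum k)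
    _ = dl k + t (k + 1) := by
        rw [add_zero]
        congr 1
        apply tsum_congr
        intro j
        congr 1
        omega
  have htmono : Antitone t := antitone_nat_of_succ_le fun n => by
    have := hstep n
    have := hdlpos n
    linarith
  have htu : ∀ n, s ≤ n → t n < u n := by
    intro n hn
    have h2 := assu2 n hn
    have hα : (0:ℝ) < (a n:ℝ) ^ ((1:ℝ)/2^n) := Real.rpow_pos_of_pos (haR n) _
    have hlogα : Real.log ((a n:ℝ) ^ ((1:ℝ)/2^n)) = Real.log (a n) / 2 ^ n := by
      rw [Real.log_rpow (haR n)]; ring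
    have hexpu : A / (a n:ℝ) ^ ((1:ℝ)/2^n) = Real.exp (u n) := by
      rw [hudef]
      rw [Real.exp_sub, Real.exp_log hA0, ← hlogα, Real.exp_log hα]
    have hlt : Real.exp (t n) < Real.exp (u n) := by
      rw [hexp_t n, ← hexpu]
      exact h2
    exact Real.exp_lt_exp.1 hlt
  have hT : ∀ n, t n ≤ ∑' k, dl k := by
    intro n
    exact Summable.tsum_le_tsum_of_inj (fun j => n + j) (fun i j h => by simpa using h)
      (fun c _ => (hdlpos c).le) (fun j => le_refl _) (htailsum n) hdlsum
  -- log C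
  set lC : ℕ → ℝ := fun n => Real.log (d n ^ (2 ^ n : ℕ) / (b n : ℝ)) with hlCdef
  have hlogb : ∀ n, Real.log (b n) = dl n * 2 ^ n - lC n := by
    intro n
    have h1 : lC n = (2 ^ n : ℕ) * dl n - Real.log (b n) := by
      rw [hlCdef]
      simp only []
      rw [Real.log_div (pow_ne_zero _ (ne_of_gt (hd0 n))) (ne_of_gt (hbR n)), Real.log_pow]
    rw [h1]
    push_cast
    ring
  have hC : Tendsto lC atTop atTop := Real.tendsto_log_atTop.comp assu3
  -- f
  set f : ℕ → ℝ := fun n => (b n : ℝ) / (a n : ℝ) with hfdef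
  have hfpos : ∀ n, 0 < f n := fun n => div_pos (hbR n) (haR n)
  have hfexp : ∀ n, f n = Real.exp (Real.log (b n) + (u n - L) * 2 ^ n) := by
    intro n
    rw [hfdef]
    simp only []
    rw [Real.exp_add]
    rw [Real.exp_log (hbR n)]
    congr 1
    rw [show (u n - L) * 2 ^ n = -((L - u n) * 2 ^ n) by ring, Real.exp_neg, ← hloga n,
      Real.exp_log (haR n)]
    ring
  have hfle : ∀ n, u n ≤ L/8 → dl n ≤ L/8 → 0 ≤ lC n →
      f n ≤ Real.exp (-((3/4*L) * 2 ^ n)) := by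
    intro n h1 h2 h3
    rw [hfexp n]
    apply Real.exp_le_exp.2
    have hb2 := hlogb n
    have e1 : dl n * 2 ^ n ≤ (L/8) * 2 ^ n := mul_le_mul_of_nonneg_right h2 (h2n n).le
    have e2 : (u n - L) * 2 ^ n ≤ (L/8 - L) * 2 ^ n :=
      mul_le_mul_of_nonneg_right (by linarith) (h2n n).le
    nlinarith [h2n n]
  -- summability of f
  have hev0 : ∀ᶠ n in atTop, u n ≤ L/8 ∧ dl n ≤ L/8 ∧ 0 ≤ lC n := by
    filter_upwards [hu0.eventually_le_const (show (0:ℝ) < L/8 by linarith),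
      hdl0.eventually_le_const (show (0:ℝ) < L/8 by linarith),
      hC.eventually_ge_atTop 0] with n h1 h2 h3
    exact ⟨h1, h2, h3⟩
  have hfsum : Summable f := by
    obtain ⟨M₀, hM₀⟩ := eventually_atTop.1 hev0
    rw [← summable_nat_add_iff M₀]
    refine Summable.of_nonneg_of_le (fun i => (hfpos _).le)
      (f := fun i => Real.exp (-(3/4*L)) ^ i) (fun i => ?_)
      (summable_geometric_of_lt_one (Real.exp_pos _).le
        (Real.exp_lt_one_iff.2 (by linarith)))
    obtain ⟨h1, h2, h3⟩ := hM₀ (i + M₀) (by omega)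
    refine (hfle _ h1 h2 h3).trans ?_
    show Real.exp (-(3/4*L * 2 ^ (i + M₀))) ≤ Real.exp (-(3/4*L)) ^ i
    rw [← Real.exp_nat_mul]
    apply Real.exp_le_exp.2
    have hi : (i:ℝ) ≤ 2 ^ (i + M₀) := by
      have : (i:ℝ) + 1 ≤ 2 ^ i := by exact_mod_cast (Nat.lt_two_pow_self (n := i))
      have h2m : (1:ℝ) ≤ 2 ^ M₀ := one_le_pow₀ (by norm_num)
      have := pow_add (2:ℝ) i M₀
      nlinarith [pow_pos (show (0:ℝ) < 2 by norm_num) i]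
    nlinarith
  -- now assume rationality
  rintro ⟨r, hr⟩
  have hqpos : (0:ℝ) < (r.den : ℝ) := by
    have := r.pos
    exact_mod_cast this
  have hpq : (r.num : ℝ) = (r.den : ℝ) * ∑' n, f n := by
    rw [← hr, Rat.cast_def]
    field_simp
  have htail : ∀ N, Summable (fun i => f (i + N)) := fun N => (summable_nat_add_iff N).2 hfsum
  set ρ : ℕ → ℝ := fun N => ∑' i, f (i + N) with hρdef
  have hρpos : ∀ N, 0 < ρ N := by
    intro N
    have h1 : f (0 + N) ≤ ρ N := Summable.le_tsum (htail N) 0 (fun j _ => (hfpos _).le)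
    calc (0:ℝ) < f (0 + N) := hfpos _
    _ ≤ ρ N := h1
  have hρsplit : ∀ N, ρ N = f N + ρ (N + 1) := by
    intro N
    rw [hρdef]
    simp only []
    calc ∑' i, f (i + N) = f (0 + N) + ∑' i, f ((i + 1) + N) := Summable.tsum_eq_zero_add (htail N)
    _ = f N + ∑' i, f (i + (N + 1)) := by
        rw [zero_add]
        congr 1
        apply tsum_congr
        intro i
        congr 1
        omega
  have hsplit : ∀ N, ∑ i ∈ range N, f i + ρ N = ∑' i, f i := fun N =>
    Summable.sum_add_tsum_nat_add N hfsum
  -- the integrality bound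
  have hZ : ∀ N, (1:ℝ) ≤ (r.den : ℝ) * (∏ k ∈ range N, (a k : ℝ)) * ρ N := by
    intro N
    set Z : ℤ := r.num * ∏ k ∈ range N, a k
      - (r.den : ℤ) * ∑ n ∈ range N, b n * ∏ k ∈ (range N).erase n, a k with hZdef
    have hPmul : (∏ k ∈ range N, (a k:ℝ)) * (∑ n ∈ range N, f n)
        = ∑ n ∈ range N, (b n : ℝ) * ∏ k ∈ (range N).erase n, (a k : ℝ) := by
      rw [Finset.mul_sum]
      refine Finset.sum_congr rfl fun n hn => ?_
      have han : (a n : ℝ) ≠ 0 := (haR n).ne'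
      rw [← Finset.mul_prod_erase _ _ hn]
      have hfn : f n = (b n : ℝ) / (a n : ℝ) := rfl
      rw [hfn]
      field_simp
    have hρeq : ρ N = (∑' i, f i) - ∑ i ∈ range N, f i := by linarith [hsplit N]
    have hZR : (Z : ℝ) = (r.den : ℝ) * (∏ k ∈ range N, (a k : ℝ)) * ρ N := by
      rw [hρeq]
      push_cast [hZdef]
      linear_combination (∏ k ∈ range N, (a k:ℝ)) * hpq + (r.den : ℝ) * hPmul
    have hZpos : 0 < Z := by
      have h0 : (0:ℝ) < (Z:ℝ) := by
        rw [hZR]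
        exact mul_pos (mul_pos hqpos (Finset.prod_pos fun k _ => haR k)) (hρpos N)
      exact_mod_cast h0
    have h1 : (1:ℝ) ≤ (Z:ℝ) := by exact_mod_cast hZpos
    linarith [hZR ▸ h1]
  have hkey : ∀ N, Real.exp (-(Real.log r.den) - ∑ k ∈ range N, (L - u k) * 2 ^ k) ≤ ρ N := by
    intro N
    have hprod : (∏ k ∈ range N, (a k:ℝ)) = Real.exp (∑ k ∈ range N, (L - u k) * 2 ^ k) := by
      rw [Real.exp_sum]
      exact Finset.prod_congr rfl fun k _ => hau k
    set E := Real.log r.den + ∑ k ∈ range N, (L - u k) * 2 ^ k with hEdef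
    have hEexp : (r.den:ℝ) * (∏ k ∈ range N, (a k:ℝ)) = Real.exp E := by
      rw [hEdef, Real.exp_add, hprod, Real.exp_log hqpos]
    have h2 : (1:ℝ) ≤ Real.exp E * ρ N := by
      rw [← hEexp]
      exact hZ N
    have h3 : Real.exp (-(Real.log r.den) - ∑ k ∈ range N, (L - u k) * 2 ^ k)
        = (Real.exp E)⁻¹ := by
      rw [← Real.exp_neg]
      congr 1
      rw [hEdef]
      ring
    rw [h3]
    have hEpos := Real.exp_pos E
    nlinarith [mul_inv_cancel₀ (ne_of_gt hEpos), hρpos N]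
  -- constants
  set c₃ := ∑ k ∈ range s, u k * 2 ^ k with hc3def
  set T := ∑' k, dl k with hTdef
  set K₁ := (1 - Real.exp (-(3/4*L)))⁻¹ with hK1def
  have hK1pos : 0 < K₁ := by
    rw [hK1def]
    have h1 : Real.exp (-(3/4*L)) < 1 := Real.exp_lt_one_iff.2 (by linarith)
    exact inv_pos.2 (by linarith)
  set K₃ := Real.log r.den + Real.log 2 + T * 2 ^ s - L - c₃ with hK3def
  set c₂ := -(Real.log r.den) + L + c₃ with hc2def
  -- tendsto facts
  have h2inf : Tendsto (fun m : ℕ => (2:ℝ) ^ m) atTop atTop :=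
    tendsto_pow_atTop_atTop_of_one_lt one_lt_two
  have hneg : Tendsto (fun m : ℕ => -(1/2*L) * 2 ^ m) atTop atBot := by
    have h1 : Tendsto (fun m : ℕ => (1/2*L) * 2 ^ m) atTop atTop :=
      h2inf.const_mul_atTop (show (0:ℝ) < 1/2*L by linarith)
    have h2 := tendsto_neg_atTop_atBot.comp h1
    refine h2.congr fun m => ?_
    simp [Function.comp]
  have htt : Tendsto (fun m : ℕ => K₁ * Real.exp (-(1/2*L) * 2 ^ m)) atTop (nhds 0) := by
    have := (Real.tendsto_exp_atBot.comp hneg).const_mul K₁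
    simpa using this
  have hub : Tendsto (fun n => u n + dl n) atTop (nhds 0) := by
    have := hu0.add hdl0
    simpa using this
  -- choose the threshold M
  obtain ⟨M, hM⟩ := eventually_atTop.1
    ((hev0.and (hC.eventually_ge_atTop (K₃+1))).and
      ((htt.eventually_le_const (show (0:ℝ) < 1/2 * Real.exp c₂ by positivity)).and
        (eventually_ge_atTop (s+1))))
  -- tail estimate
  have hρle : ∀ N, M ≤ N → ρ (N+1) ≤ Real.exp (-(3/4*L * 2 ^ (N+1))) * K₁ := by
    intro N hN
    have hle : ∀ i : ℕ, f (i + (N+1)) ≤ Real.exp (-(3/4*L * 2 ^ (i + (N+1)))) := by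
      intro i
      obtain ⟨⟨⟨h1, h2, h3⟩, _⟩, _⟩ := hM (i + (N+1)) (by omega)
      exact hfle _ h1 h2 h3
    have := Hancl3_tail_bound (3/4*L) (by linarith) (N+1) (fun i => f (i + (N+1)))
      (htail (N+1)) hle
    exact this
  -- geometric sums
  have hgeom : ∀ N : ℕ, ∑ k ∈ range N, (2:ℝ) ^ k = 2 ^ N - 1 := by
    intro N
    rw [geom_sum_eq (by norm_num : (2:ℝ) ≠ 1) N]
    norm_num
  have hgeomIco : ∀ N : ℕ, s ≤ N + 1 → ∑ k ∈ Finset.Ico s (N+1), (2:ℝ) ^ k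
      = 2 ^ (N+1) - 2 ^ s := by
    intro N hN
    rw [geom_sum_Ico (by norm_num : (2:ℝ) ≠ 1) hN]
    norm_num
  have hEeq : ∀ N : ℕ, ∑ k ∈ range N, (L - u k) * 2 ^ k
      = L * (2 ^ N - 1) - ∑ k ∈ range N, u k * 2 ^ k := by
    intro N
    calc ∑ k ∈ range N, (L - u k) * 2 ^ k
        = ∑ k ∈ range N, (L * 2 ^ k - u k * 2 ^ k) :=
          Finset.sum_congr rfl fun k _ => by ring
    _ = ∑ k ∈ range N, L * 2 ^ k - ∑ k ∈ range N, u k * 2 ^ k := Finset.sum_sub_distrib _ _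
    _ = L * (2 ^ N - 1) - ∑ k ∈ range N, u k * 2 ^ k := by rw [← Finset.mul_sum, hgeom N]
  have hsplitS : ∀ N, s ≤ N → ∑ k ∈ range N, u k * 2 ^ k
      = c₃ + ∑ k ∈ Finset.Ico s N, u k * 2 ^ k := by
    intro N hN
    rw [hc3def, Finset.range_eq_Ico, Finset.range_eq_Ico]
    exact (Finset.sum_Ico_consecutive _ (Nat.zero_le s) hN).symm
  have hIconneg : ∀ N, 0 ≤ ∑ k ∈ Finset.Ico s N, u k * 2 ^ k := by
    intro N
    refine Finset.sum_nonneg fun k hk => mul_nonneg ?_ (h2n k).le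
    have h1 := htu k (Finset.mem_Ico.1 hk).1
    have h2 := ht0 k
    linarith
  -- main inequality from rationality
  have hmain : ∀ N, M ≤ N →
      -(Real.log r.den) - (L * (2 ^ (N+1) - 1) - ∑ k ∈ range (N+1), u k * 2 ^ k)
        - Real.log 2 ≤ Real.log (b (N+1)) + (u (N+1) - L) * 2 ^ (N+1) := by
    intro N hN
    obtain ⟨_, ⟨hgeo', hsm⟩⟩ := hM (N+1) (by omega)
    have hk := hkey (N+1)
    rw [hEeq (N+1)] at hk
    have hsp := hρsplit (N+1)
    have hr2 := hρle (N+1) (by omega)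
    -- bound the far tail
    have h22 : (2:ℝ) ^ (N+2) = 2 * 2 ^ (N+1) := by rw [pow_succ]; ring
    have e1a : Real.exp (-(3/4*L * 2 ^ (N+2)))
        = Real.exp (-(1/2*L) * 2 ^ (N+1)) * Real.exp (-(L * 2 ^ (N+1))) := by
      rw [← Real.exp_add]
      congr 1
      rw [h22]
      ring
    have e1 : Real.exp (-(3/4*L * 2 ^ (N+2))) * K₁
        = K₁ * Real.exp (-(1/2*L) * 2 ^ (N+1)) * Real.exp (-(L * 2 ^ (N+1))) := by
      rw [e1a]; ring
    have e3 : ρ (N+2) ≤ 1/2 * Real.exp c₂ * Real.exp (-(L * 2 ^ (N+1))) := by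
      calc ρ (N+2) ≤ Real.exp (-(3/4*L * 2 ^ (N+2))) * K₁ := hρle (N+1) (by omega)
      _ = K₁ * Real.exp (-(1/2*L) * 2 ^ (N+1)) * Real.exp (-(L * 2 ^ (N+1))) := e1
      _ ≤ 1/2 * Real.exp c₂ * Real.exp (-(L * 2 ^ (N+1))) :=
          mul_le_mul_of_nonneg_right hgeo' (Real.exp_pos _).le
    have e4a : Real.exp c₂ * Real.exp (-(L * 2 ^ (N+1)))
        = Real.exp (c₂ - L * 2 ^ (N+1)) := by
      rw [← Real.exp_add]
      congr 1
    have e4 : 1/2 * Real.exp c₂ * Real.exp (-(L * 2 ^ (N+1)))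
        = 1/2 * Real.exp (c₂ - L * 2 ^ (N+1)) := by
      rw [← e4a]; ring
    have e5 : c₂ - L * 2 ^ (N+1) ≤ -(Real.log r.den)
        - (L * (2 ^ (N+1) - 1) - ∑ k ∈ range (N+1), u k * 2 ^ k) := by
      have h1 := hsplitS (N+1) (by omega)
      have h2 := hIconneg (N+1)
      rw [hc2def]
      linarith
    have e6 : ρ (N+2) ≤ 1/2 * Real.exp (-(Real.log r.den)
        - (L * (2 ^ (N+1) - 1) - ∑ k ∈ range (N+1), u k * 2 ^ k)) := by
      rw [e4] at e3
      refine e3.trans ?_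
      have := Real.exp_le_exp.2 e5
      linarith
    -- conclude f (N+1) is at least half of the lower bound
    have e7 : Real.exp (-(Real.log r.den)
        - (L * (2 ^ (N+1) - 1) - ∑ k ∈ range (N+1), u k * 2 ^ k) - Real.log 2)
        ≤ f (N+1) := by
      rw [Real.exp_sub, Real.exp_log (by norm_num : (0:ℝ) < 2)]
      have h8 := Real.exp_pos (-(Real.log r.den)
        - (L * (2 ^ (N+1) - 1) - ∑ k ∈ range (N+1), u k * 2 ^ k))
      linarith
    rw [hfexp (N+1)] at e7
    exact Real.exp_le_exp.1 e7
  -- the combinatorial sequence H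
  set H : ℕ → ℝ := fun N => ∑ k ∈ Finset.Ico s (N+1), (u k - t k + dl k) * 2 ^ k with hHdef
  have hHnonneg : ∀ N, 0 ≤ H N := by
    intro N
    refine Finset.sum_nonneg fun k hk => mul_nonneg ?_ (h2n k).le
    have h1 := htu k (Finset.mem_Ico.1 hk).1
    have h2 := hdlpos k
    linarith
  have hHsucc : ∀ N, s ≤ N + 1 → H (N+1) = H N + (u (N+1) - t (N+1) + dl (N+1)) * 2 ^ (N+1) := by
    intro N hN
    exact Finset.sum_Ico_succ_top hN _
  have hrec : ∀ N, M ≤ N → H N + 1 ≤ (u (N+1) - t (N+1) + dl (N+1)) * 2 ^ (N+1) := by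
    intro N hN
    obtain ⟨⟨_, hCK⟩, _⟩ := hM (N+1) (by omega)
    obtain ⟨_, ⟨_, hsM⟩⟩ := hM N hN
    have h1 := hmain N hN
    have h2 := hlogb (N+1)
    have h3 := hsplitS (N+1) (by omega)
    -- pointwise bound inside the Ico sum
    have hptw : ∀ k ∈ Finset.Ico s (N+1),
        (u k - t k + dl k) * 2 ^ k + t (N+1) * 2 ^ k ≤ u k * 2 ^ k := by
      intro k hk
      obtain ⟨hk1, hk2⟩ := Finset.mem_Ico.1 hk
      have e1 : t (N+1) ≤ t (k+1) := htmono (by omega)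
      have e2 : t k = dl k + t (k+1) := hstep k
      have hc : u k - t k + dl k + t (N+1) ≤ u k := by linarith
      calc (u k - t k + dl k) * 2 ^ k + t (N+1) * 2 ^ k
          = (u k - t k + dl k + t (N+1)) * 2 ^ k := by ring
      _ ≤ u k * 2 ^ k := mul_le_mul_of_nonneg_right hc (h2n k).le
    have h4 : H N + t (N+1) * (2 ^ (N+1) - 2 ^ s) ≤ ∑ k ∈ Finset.Ico s (N+1), u k * 2 ^ k := by
      have hsum := Finset.sum_le_sum hptw
      rw [Finset.sum_add_distrib, ← Finset.mul_sum, hgeomIco N (by omega)] at hsum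
      exact hsum
    have h5 : t (N+1) * 2 ^ s ≤ T * 2 ^ s := mul_le_mul_of_nonneg_right (hT (N+1)) (h2n s).le
    have h6 : 0 ≤ t (N+1) := ht0 _
    have h7 : (0:ℝ) < 2 ^ (N+1) := h2n (N+1)
    rw [hK3def] at hCK
    nlinarith [h6, h7]
  -- doubling induction
  obtain ⟨_, ⟨_, hsM⟩⟩ := hM M le_rfl
  have hind : ∀ j : ℕ, (2:ℝ) ^ j ≤ H (M + 1 + j) := by
    intro j
    induction j with
    | zero =>
      have e1 := hHsucc M (by omega)
      have e2 := hrec M le_rfl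
      have e3 := hHnonneg M
      norm_num
      linarith
    | succ j ih =>
      have e1 := hHsucc (M+1+j) (by omega)
      have e2 := hrec (M+1+j) (by omega)
      have eidx : M+1+(j+1) = (M+1+j)+1 := by omega
      rw [eidx, e1]
      have e3 : (2:ℝ) ^ (j+1) = 2 ^ j + 2 ^ j := by ring
      linarith
  -- final contradiction
  have hεpos : (0:ℝ) < 1 / 2 ^ (M+2) := by positivity
  obtain ⟨m, hm1, hm2⟩ := ((hub.eventually_lt_const hεpos).and (eventually_ge_atTop (M+2))).exists
  set j := m - (M+2) with hjdef
  have hmj : m = (M+1+j) + 1 := by omega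
  have h1 := hrec (M+1+j) (by omega)
  rw [← hmj] at h1
  have h2 := hind j
  have h3 : (u m - t m + dl m) * 2 ^ m ≤ (u m + dl m) * 2 ^ m :=
    mul_le_mul_of_nonneg_right (by linarith [ht0 m]) (h2n m).le
  have h4 : (u m + dl m) * 2 ^ m < (1 / 2 ^ (M+2)) * 2 ^ m :=
    mul_lt_mul_of_pos_right hm1 (h2n m)
  have h5 : (1 / 2 ^ (M+2)) * (2:ℝ) ^ m = 2 ^ j := by
    have hm3 : m = (M+2) + j := by omega
    have hpow := pow_add (2:ℝ) (M+2) j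
    rw [hm3, hpow, one_div, inv_mul_cancel_left₀ (h2n (M+2)).ne']
  rw [h5] at h4
  linarith [h1, h2, h3, h4]
end

section
/- Let A > 1 be real and let {a_n}, {b_n} be sequences of positive integers with lim_{n→∞} a_n^{1/2^n} = A. If for all n ≥ 6 one has a_n^{1/2^n}·(1 + 4·(2/3)^n) ≤ A and b_n ≤ 2^{(4/3)^{n-1}}, then ∑_{n=1}^∞ b_n/a_n is irrational. -/
set_option maxHeartbeats 1000000
open Filter Finset

lemma hancl_exp_neg_log_two_mul (m : ℕ) : Real.exp (-(Real.log 2) * m) = (1/2:ℝ)^m := by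
  rw [← Real.rpow_natCast (1/2:ℝ) m, Real.rpow_def_of_pos (by norm_num), one_div,
    Real.log_inv]

lemma hancl_goodN (L c₁ : ℝ) (hL : 0 < L) (δ S : ℕ → ℝ)
    (hδ0 : Tendsto δ atTop (nhds 0))
    (hS : ∀ N : ℕ, S (N + 1) = S N + 2 ^ (N + 1) * δ (N + 1))
    (hSlb : ∀ N : ℕ, 6 ≤ N → 8 * (4 / 3 : ℝ) ^ N - c₁ ≤ S N)
    (M : ℕ) (hM6 : 6 ≤ M) :
    ∃ N, M ≤ N ∧ ∀ n, N < n →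
      2 ^ n * δ n ≤ S N + ((2 : ℝ) ^ n - 2 ^ (N + 1)) * L - (4 / 3 : ℝ) ^ n
        - ((n : ℝ) - (N : ℝ)) - 1 := by
  by_contra hcon
  push_neg at hcon
  -- hcon : ∀ N, M ≤ N → ∃ n, N < n ∧ S N + ... - 1 < 2 ^ n * δ n
  have h1 : ∀ᶠ n : ℕ in atTop, δ n < L / 4 :=
    hδ0.eventually (eventually_lt_nhds (show (0:ℝ) < L/4 by linarith))
  have h2 : Tendsto (fun n : ℕ => (c₁ + (4/3:ℝ)^n + n + 1) / 2 ^ n) atTop (nhds 0) := by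
    have t1 : Tendsto (fun n : ℕ => c₁ * (1/2:ℝ)^n) atTop (nhds 0) := by
      simpa using (tendsto_pow_atTop_nhds_zero_of_lt_one (by norm_num : (0:ℝ) ≤ 1/2)
        (by norm_num)).const_mul c₁
    have t2 : Tendsto (fun n : ℕ => ((2:ℝ)/3)^n) atTop (nhds 0) :=
      tendsto_pow_atTop_nhds_zero_of_lt_one (by norm_num) (by norm_num)
    have t3 : Tendsto (fun n : ℕ => (n:ℝ) / 2 ^ n) atTop (nhds 0) := by
      simpa using tendsto_pow_const_div_const_pow_of_one_lt 1 (show (1:ℝ) < 2 by norm_num)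
    have t4 : Tendsto (fun n : ℕ => ((1:ℝ)/2)^n) atTop (nhds 0) :=
      tendsto_pow_atTop_nhds_zero_of_lt_one (by norm_num) (by norm_num)
    have := ((t1.add t2).add t3).add t4
    simp only [add_zero] at this
    refine this.congr fun n => ?_
    have h4 : (4/3:ℝ)^n = (2/3)^n * 2^n := by rw [← mul_pow]; norm_num
    have h12 : ((1:ℝ)/2)^n = 1/2^n := by rw [div_pow]; norm_num
    rw [h12, h4]
    generalize ((2:ℝ)/3)^n = u
    have hv : (2:ℝ)^n ≠ 0 := by positivity
    field_simp
  have h2' : ∀ᶠ n : ℕ in atTop, (c₁ + (4/3:ℝ)^n + n + 1) / 2 ^ n < L / 4 :=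
    h2.eventually (eventually_lt_nhds (show (0:ℝ) < L/4 by linarith))
  have h3 : ∀ᶠ n : ℕ in atTop, c₁ < (4/3:ℝ)^(n+1) := by
    filter_upwards [(tendsto_pow_atTop_atTop_of_one_lt
      (show (1:ℝ) < 4/3 by norm_num)).eventually_gt_atTop c₁] with n hn
    have : (4/3:ℝ)^n ≤ (4/3:ℝ)^(n+1) := pow_le_pow_right₀ (by norm_num) (Nat.le_succ n)
    linarith
  obtain ⟨M₀, hM₀⟩ := eventually_atTop.mp ((h1.and h2').and h3)
  set M' := max M₀ M with hM'def
  have hM'M : M ≤ M' := le_max_right _ _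
  have hM'6 : 6 ≤ M' := le_trans hM6 hM'M
  have hM'0 : M₀ ≤ M' := le_max_left _ _
  have hfacts : ∀ n, M' ≤ n → δ n < L/4 ∧ (c₁ + (4/3:ℝ)^n + n + 1) / 2^n < L/4 ∧ c₁ < (4/3:ℝ)^(n+1) := by
    intro n hn
    have := hM₀ n (le_trans hM'0 hn)
    exact ⟨this.1.1, this.1.2, this.2⟩
  -- classification of violations
  have key : ∀ N, M' ≤ N → 2 * S N - 3 * (4/3:ℝ)^(N+1) < S (N+1) := by
    intro N hN
    obtain ⟨n, hn, hviol⟩ := hcon N (le_trans hM'M hN)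
    rcases eq_or_lt_of_le (Nat.succ_le_of_lt hn) with heq | hlt
    · -- n = N + 1
      subst heq
      have hpow1 : (1:ℝ) ≤ (4/3:ℝ)^(N+1) := one_le_pow₀ (by norm_num)
      have hSrec := hS N
      simp only [Nat.succ_eq_add_one] at hviol
      push_cast at hviol
      have hz : ((2:ℝ)^(N+1) - 2^(N+1)) * L = 0 := by ring
      linarith [hviol, hpow1, hSrec, hz]
    · -- n ≥ N + 2 : contradiction
      exfalso
      have hnM' : M' ≤ n := le_trans hN (le_of_lt hn)
      obtain ⟨hd, hq, -⟩ := hfacts n hnM'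
      have h2npos : (0:ℝ) < 2^n := by positivity
      have hq' : c₁ + (4/3:ℝ)^n + n + 1 < L/4 * 2^n := by
        rw [div_lt_iff₀ h2npos] at hq; linarith
      have hSN : -c₁ ≤ S N := by
        have := hSlb N (le_trans hM'6 hN)
        have : (0:ℝ) ≤ 8 * (4/3:ℝ)^N := by positivity
        linarith [hSlb N (le_trans hM'6 hN)]
      have hpow : (2:ℝ)^(N+2) ≤ 2^n := pow_le_pow_right₀ (by norm_num) hlt
      have hsplit : (2:ℝ)^(N+2) = 2 * 2^(N+1) := by ring
      -- (2^n - 2^(N+1)) ≥ 2^n / 2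
      have hhalf : (2:ℝ)^n / 2 ≤ 2^n - 2^(N+1) := by
        nlinarith [hpow]
      have hnN : ((n:ℝ) - N) ≤ n := by
        have : (0:ℝ) ≤ N := Nat.cast_nonneg N
        linarith
      have hmul : (2:ℝ)^n/2 * L ≤ ((2:ℝ)^n - 2^(N+1)) * L := by
        exact mul_le_mul_of_nonneg_right hhalf (le_of_lt hL)
      have hδn : L/4 * 2^n < 2^n * δ n := by nlinarith [hviol]
      have : δ n < L/4 := hd
      nlinarith [this, hδn]
  -- geometric growth of T
  set T : ℕ → ℝ := fun N => S N - 5 * (4/3:ℝ)^(N+1) with hTdef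
  have hTM : 0 < T M' := by
    have h1 := hSlb M' hM'6
    have h2 := (hfacts M' le_rfl).2.2
    have hps : (4/3:ℝ)^(M'+1) = (4/3) * (4/3:ℝ)^M' := by ring
    simp only [hTdef]
    nlinarith
  have hTd : ∀ N, M' ≤ N → 2 * T N ≤ T (N+1) := by
    intro N hN
    have := key N hN
    simp only [hTdef]
    have e1 : (4/3:ℝ)^(N+2) = (4/3) * (4/3:ℝ)^(N+1) := by ring
    nlinarith [pow_nonneg (show (0:ℝ) ≤ 4/3 by norm_num) (N+1)]
  have hTgrow : ∀ N, M' ≤ N → 2^(N - M') * T M' ≤ T N := by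
    intro N hN
    induction N, hN using Nat.le_induction with
    | base => simp
    | succ N hN ih =>
      have : 2 * T N ≤ T (N+1) := hTd N hN
      have h2 : (2:ℝ)^(N + 1 - M') = 2 * 2^(N - M') := by
        rw [Nat.succ_sub hN, pow_succ]; ring
      rw [h2]
      nlinarith [ih]
  -- slow growth of S from δ → 0
  set ε := T M' / 2^(M'+2) with hεdef
  have hεpos : 0 < ε := by positivity
  obtain ⟨K, hK⟩ := eventually_atTop.mp (hδ0.eventually
    (eventually_le_nhds hεpos))
  have hSup : ∀ N, K ≤ N → S N ≤ S K + ε * 2^(N+1) := by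
    intro N hN
    induction N, hN using Nat.le_induction with
    | base =>
      have : (0:ℝ) ≤ ε * 2^(K+1) := by positivity
      linarith
    | succ N hN ih =>
      have hδ := hK (N+1) (by omega)
      have := hS N
      have h2 : (0:ℝ) < 2^(N+1) := by positivity
      have : 2^(N+1) * δ (N+1) ≤ ε * 2^(N+1) := by nlinarith
      have hp : (2:ℝ)^(N+2) = 2 * 2^(N+1) := by ring
      rw [hp]
      linarith [hS N]
  -- contradiction
  obtain ⟨j, hj⟩ := pow_unbounded_of_one_lt (S K / (T M' / 2)) (show (1:ℝ) < 2 by norm_num)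
  set N := max (M' + j) K with hNdef
  have hNM' : M' ≤ N := le_trans (Nat.le_add_right _ _) (le_max_left _ _)
  have hNK : K ≤ N := le_max_right _ _
  have hjN : j ≤ N - M' := by omega
  have g1 : 2^(N - M') * T M' ≤ T N := hTgrow N hNM'
  have g2 : T N ≤ S N := by
    simp only [hTdef]
    nlinarith [pow_nonneg (show (0:ℝ) ≤ 4/3 by norm_num) (N+1)]
  have g3 : S N ≤ S K + ε * 2^(N+1) := hSup N hNK
  have hexp : (2:ℝ)^(N+1) = 2^(N - M') * 2^(M'+1) := by
    rw [← pow_add]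
    congr 1
    omega
  have g4 : ε * 2^(N+1) = 2^(N - M') * (T M' / 2) := by
    have hv : ((2:ℝ)^(M'+1)) ≠ 0 := by positivity
    rw [hεdef, hexp, pow_succ]
    generalize (2:ℝ)^(M'+1) = v at hv ⊢
    generalize (2:ℝ)^(N - M') = u
    field_simp
  have g5 : (2:ℝ)^j ≤ 2^(N - M') := pow_le_pow_right₀ (by norm_num) hjN
  have hTM2 : (0:ℝ) < T M' / 2 := half_pos hTM
  have g6 : S K < 2^j * (T M' / 2) := by
    have := (div_lt_iff₀ hTM2).mp hj
    linarith
  have g7 : 2^j * (T M' / 2) ≤ 2^(N - M') * (T M' / 2) :=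
    mul_le_mul_of_nonneg_right g5 (le_of_lt hTM2)
  have g8 : 2^(N - M') * (T M' / 2) * 2 = 2^(N - M') * T M' := by ring
  clear_value T ε N
  linarith [g1, g2, g3, g4, g6, g7, g8]

theorem Hancl3corollary (A : ℝ) (a b : ℕ → ℤ)
    (hA : 1 < A) (ha : ∀ n, 0 < a n) (hb : ∀ n, 0 < b n)
    (assu1 : Tendsto (fun n => (a n : ℝ) ^ ((1 : ℝ) / 2 ^ n)) atTop (nhds A))
    (h : ∀ n ≥ 6, (a n : ℝ) ^ ((1 : ℝ) / 2 ^ n) * (1 + 4 * (2 / 3 : ℝ) ^ n) ≤ A ∧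
      (b n : ℝ) ≤ (2 : ℝ) ^ ((4 / 3 : ℝ) ^ (n - 1))) :
    Irrational (∑' n : ℕ, (b n : ℝ) / (a n : ℝ)) := by
  rintro ⟨r, hr⟩
  set f : ℕ → ℝ := fun n => (b n : ℝ) / (a n : ℝ) with hfdef
  set x : ℝ := ∑' n : ℕ, f n with hxdef
  have haR : ∀ n, (0:ℝ) < (a n : ℝ) := fun n => by exact_mod_cast ha n
  have hbR : ∀ n, (0:ℝ) < (b n : ℝ) := fun n => by exact_mod_cast hb n
  have hA0 : (0:ℝ) < A := by linarith
  set L : ℝ := Real.log A with hLdef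
  have hL : 0 < L := Real.log_pos hA
  set δ : ℕ → ℝ := fun n => L - Real.log ((a n : ℝ) ^ ((1:ℝ)/2^n)) with hδdef
  set l : ℕ → ℝ := fun n => Real.log (a n : ℝ) with hldef
  have hl : ∀ n, l n = 2^n * (L - δ n) := by
    intro n
    have h2n : ((2:ℝ)^n) ≠ 0 := by positivity
    simp only [hδdef, hldef]
    rw [Real.log_rpow (haR n)]
    field_simp
    ring
  have hδ0 : Tendsto δ atTop (nhds 0) := by
    have h1 := assu1.log (ne_of_gt hA0)
    have h2 : Tendsto (fun n : ℕ => L - Real.log ((a n:ℝ) ^ ((1:ℝ)/2^n))) atTop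
        (nhds (L - Real.log A)) := tendsto_const_nhds.sub h1
    rw [hLdef, sub_self] at h2
    exact h2
  have hδlb : ∀ n, 6 ≤ n → 2 * (2/3:ℝ)^n ≤ δ n := by
    intro n hn
    have h1 := (h n hn).1
    set t := (a n:ℝ)^((1:ℝ)/2^n) with htdef
    have ht : 0 < t := Real.rpow_pos_of_pos (haR n) _
    set e : ℝ := 4*(2/3:ℝ)^n with hedef
    have he0 : 0 < e := by positivity
    have he1 : e ≤ 1 := by
      have : (2/3:ℝ)^n ≤ (2/3:ℝ)^4 :=
        pow_le_pow_of_le_one (by norm_num) (by norm_num) (by omega)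
      simp only [hedef]
      nlinarith
    have hlogle : Real.log (t * (1+e)) ≤ L := Real.log_le_log (by positivity) h1
    rw [Real.log_mul (ne_of_gt ht) (by positivity)] at hlogle
    have hlog1e : e/2 ≤ Real.log (1+e) := by
      have h2 : Real.log (1/(1+e)) ≤ 1/(1+e) - 1 :=
        Real.log_le_sub_one_of_pos (by positivity)
      rw [Real.log_div one_ne_zero (by positivity), Real.log_one] at h2
      have h3 : 1/(1+e) - 1 = -(e/(1+e)) := by field_simp; ring
      have h4 : e/2 ≤ e/(1+e) := by
        rw [div_le_div_iff₀ (by norm_num) (by positivity)]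
        nlinarith
      linarith
    simp only [hδdef]
    have : e/2 = 2*(2/3:ℝ)^n := by rw [hedef]; ring
    linarith
  set S : ℕ → ℝ := fun N => ∑ k ∈ Finset.range (N+1), 2^k * δ k with hSdef
  have hS : ∀ N, S (N+1) = S N + 2^(N+1) * δ (N+1) := by
    intro N
    simp only [hSdef]
    rw [Finset.sum_range_succ]
  set c₁ : ℝ := 6 * (4/3:ℝ)^6 - S 5 with hc₁def
  have hSlb : ∀ N, 6 ≤ N → 8*(4/3:ℝ)^N - c₁ ≤ S N := by
    intro N hN
    have hsplit : S N = S 5 + ∑ k ∈ Finset.Ico 6 (N+1), 2^k * δ k := by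
      simp only [hSdef]
      rw [show (5:ℕ)+1 = 6 from rfl, Finset.range_eq_Ico]
      exact (Finset.sum_Ico_consecutive _ (by norm_num : (0:ℕ) ≤ 6) (by omega : (6:ℕ) ≤ N+1)).symm
    have hterm : ∀ k ∈ Finset.Ico 6 (N+1), 2*(4/3:ℝ)^k ≤ 2^k * δ k := by
      intro k hk
      have hk6 : 6 ≤ k := (Finset.mem_Ico.mp hk).1
      have hd := hδlb k hk6
      have h2k : (0:ℝ) ≤ 2^k := by positivity
      have heq : 2*(4/3:ℝ)^k = 2^k * (2*(2/3)^k) := by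
        rw [show (4/3:ℝ) = 2 * (2/3) by norm_num, mul_pow]; ring
      rw [heq]
      exact mul_le_mul_of_nonneg_left hd h2k
    have hsum2 := Finset.sum_le_sum hterm
    have hgeom : ∑ k ∈ Finset.Ico 6 (N+1), (4/3:ℝ)^k
        = ((4/3:ℝ)^(N+1) - (4/3)^6)/((4/3) - 1) :=
      geom_sum_Ico (by norm_num) (by omega)
    have hmul : ∑ k ∈ Finset.Ico 6 (N+1), 2*(4/3:ℝ)^k
        = 2 * (((4/3:ℝ)^(N+1) - (4/3)^6)/((4/3) - 1)) := by
      rw [← Finset.mul_sum, hgeom]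
    have hps : (4/3:ℝ)^(N+1) = (4/3)*(4/3)^N := by ring
    rw [hsplit, hc₁def]
    rw [hmul] at hsum2
    have : 2 * (((4/3:ℝ)^(N+1) - (4/3)^6)/((4/3) - 1)) = 8*(4/3:ℝ)^N - 6*(4/3)^6 := by
      rw [hps]; ring_nf
    linarith
  -- per-term exponential bound
  have hfle : ∀ n, 6 ≤ n → f n ≤ Real.exp (Real.log 2 * (4/3:ℝ)^n - l n) := by
    intro n hn
    have hb2 := (h n hn).2
    have h1 : ((4/3:ℝ))^(n-1) ≤ (4/3:ℝ)^n :=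
      pow_le_pow_right₀ (by norm_num) (Nat.sub_le n 1)
    have hb3 : (b n:ℝ) ≤ (2:ℝ)^(((4/3:ℝ)^n : ℝ)) :=
      le_trans hb2 (Real.rpow_le_rpow_of_exponent_le (by norm_num) h1)
    have hb4 : (b n:ℝ) ≤ Real.exp (Real.log 2 * (4/3:ℝ)^n) := by
      rwa [Real.rpow_def_of_pos (by norm_num)] at hb3
    have han : (a n:ℝ) = Real.exp (l n) := (Real.exp_log (haR n)).symm
    have hcalc : f n = (b n:ℝ) * Real.exp (-(l n)) := by
      simp only [hfdef]
      rw [han, Real.exp_neg]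
      ring
    rw [hcalc]
    calc (b n:ℝ) * Real.exp (-(l n))
        ≤ Real.exp (Real.log 2 * (4/3:ℝ)^n) * Real.exp (-(l n)) :=
          mul_le_mul_of_nonneg_right hb4 (le_of_lt (Real.exp_pos _))
      _ = Real.exp (Real.log 2 * (4/3:ℝ)^n - l n) := by
          rw [← Real.exp_add]; ring_nf
  have hfpos : ∀ n, 0 < f n := fun n => div_pos (hbR n) (haR n)
  -- summability
  have hsum : Summable f := by
    have hev1 : ∀ᶠ n : ℕ in atTop, δ n < L/2 :=
      hδ0.eventually (eventually_lt_nhds (half_pos hL))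
    have hev2 : Tendsto (fun n:ℕ => (((4/3:ℝ)^n + n) * Real.log 2)/2^n) atTop (nhds 0) := by
      have t2 : Tendsto (fun n : ℕ => ((2:ℝ)/3)^n) atTop (nhds 0) :=
        tendsto_pow_atTop_nhds_zero_of_lt_one (by norm_num) (by norm_num)
      have t3 : Tendsto (fun n : ℕ => (n:ℝ) / 2 ^ n) atTop (nhds 0) := by
        simpa using tendsto_pow_const_div_const_pow_of_one_lt 1 (show (1:ℝ) < 2 by norm_num)
      have := ((t2.add t3).const_mul (Real.log 2))
      simp only [add_zero, mul_zero] at this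
      refine this.congr fun n => ?_
      have h4 : (4/3:ℝ)^n = (2/3)^n * 2^n := by rw [← mul_pow]; norm_num
      rw [h4]
      generalize ((2:ℝ)/3)^n = u
      have hv : (2:ℝ)^n ≠ 0 := by positivity
      field_simp
    have hev2' : ∀ᶠ n : ℕ in atTop, (((4/3:ℝ)^n + n) * Real.log 2)/2^n < L/2 :=
      hev2.eventually (eventually_lt_nhds (half_pos hL))
    have hev : ∀ᶠ n : ℕ in atTop, f n ≤ (1/2:ℝ)^n := by
      filter_upwards [hev1, hev2', eventually_ge_atTop 6] with n h1 h2 h3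
      have h2n : (0:ℝ) < 2^n := by positivity
      have h2' : ((4/3:ℝ)^n + n) * Real.log 2 < L/2 * 2^n := by
        rw [div_lt_iff₀ h2n] at h2; linarith
      have hX : Real.log 2 * (4/3:ℝ)^n - l n ≤ -(Real.log 2) * n := by
        rw [hl n]
        have hδn : δ n < L/2 := h1
        have hm : 2^n * δ n ≤ 2^n * (L/2) := by nlinarith
        nlinarith
      calc f n ≤ Real.exp (Real.log 2 * (4/3:ℝ)^n - l n) := hfle n h3
        _ ≤ Real.exp (-(Real.log 2) * n) := Real.exp_le_exp.mpr hX
        _ = (1/2:ℝ)^n := hancl_exp_neg_log_two_mul n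
    obtain ⟨K, hK⟩ := eventually_atTop.mp hev
    have hs2 : Summable (fun j:ℕ => f (j+K)) := by
      apply Summable.of_nonneg_of_le (fun j => le_of_lt (hfpos _))
        (fun j => hK (j+K) (Nat.le_add_left _ _))
      have := (summable_geometric_of_lt_one (show (0:ℝ) ≤ 1/2 by norm_num)
        (by norm_num)).mul_right ((1/2:ℝ)^K)
      refine this.congr fun j => ?_
      rw [pow_add]
    exact (summable_nat_add_iff K).mp hs2
  -- rationality data
  set q : ℝ := (r.den : ℝ) with hqdef
  have hq0 : 0 < q := by
    simp only [hqdef]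
    exact_mod_cast r.pos
  have hqx : q * x = (r.num : ℝ) := by
    rw [← hr, Rat.cast_def]
    field_simp [hqdef]
    ring
  -- E N ≥ 1 for all N
  have hE1 : ∀ N : ℕ, 1 ≤ q * (∏ k ∈ Finset.range (N+1), (a k:ℝ)) * (∑' j, f (j + (N+1))) := by
    intro N
    set PR : ℝ := ∏ k ∈ Finset.range (N+1), (a k:ℝ) with hPRdef
    set tail : ℝ := ∑' j, f (j + (N+1)) with htaildef
    have hPRpos : 0 < PR := Finset.prod_pos (fun k _ => haR k)
    have hsum' : Summable (fun j => f (j + (N+1))) := (summable_nat_add_iff _).mpr hsum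
    have htailpos : 0 < tail :=
      Summable.tsum_pos hsum' (fun j => le_of_lt (hfpos _)) 0 (hfpos _)
    have htaileq : tail = x - ∑ i ∈ Finset.range (N+1), f i := by
      have := hsum.sum_add_tsum_nat_add (N+1)
      simp only [htaildef, hxdef]
      linarith [this]
    -- the integer
    set W : ℤ := ∑ k ∈ Finset.range (N+1), b k * ∏ j ∈ (Finset.range (N+1)).erase k, a j with hWdef
    have hPRSf : PR * (∑ i ∈ Finset.range (N+1), f i) = (W:ℝ) := by
      rw [Finset.mul_sum, hWdef]
      push_cast
      refine Finset.sum_congr rfl fun k hk => ?_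
      have hprod : PR = (a k:ℝ) * ∏ j ∈ (Finset.range (N+1)).erase k, (a j:ℝ) :=
        (Finset.mul_prod_erase (Finset.range (N+1)) (fun j => (a j:ℝ)) hk).symm
      rw [hprod]
      simp only [hfdef]
      have hak : (a k:ℝ) ≠ 0 := ne_of_gt (haR k)
      field_simp
    set m : ℤ := r.num * (∏ k ∈ Finset.range (N+1), a k) - r.den * W with hmdef
    have hPRcast : ((∏ k ∈ Finset.range (N+1), a k : ℤ) : ℝ) = PR := by
      push_cast
      rfl
    have hmval : (m:ℝ) = q * PR * tail := by
      have hexp : q * PR * tail = PR * (q * x) - q * (PR * (∑ i ∈ Finset.range (N+1), f i)) := by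
        rw [htaileq]; ring
      rw [hexp, hqx, hPRSf, hmdef]
      push_cast [hPRcast]
      simp only [hqdef]
      ring
    have hmpos : 0 < (m:ℝ) := by
      rw [hmval]
      positivity
    have hm1 : 1 ≤ m := by
      have : 0 < m := by exact_mod_cast hmpos
      omega
    have : (1:ℝ) ≤ (m:ℝ) := by exact_mod_cast hm1
    linarith [hmval ▸ this]
  -- choose a good N
  obtain ⟨M₁, hM₁⟩ := eventually_atTop.mp
    ((tendsto_pow_atTop_atTop_of_one_lt (show (1:ℝ) < 4/3 by norm_num)).eventually_ge_atTop
      (Real.log q / 0.3))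
  set M : ℕ := max M₁ 6 with hMdef
  have hM6 : 6 ≤ M := le_max_right _ _
  have hlogqM : Real.log q ≤ 0.3 * (4/3:ℝ)^M := by
    have := hM₁ M (le_max_left _ _)
    rw [div_le_iff₀ (by norm_num : (0:ℝ) < 0.3)] at this
    linarith
  obtain ⟨N, hNM, hgood⟩ := hancl_goodN L c₁ hL δ S hδ0 hS hSlb M hM6
  -- upper bound for E N
  set PR : ℝ := ∏ k ∈ Finset.range (N+1), (a k:ℝ) with hPRdef
  have hPRpos : 0 < PR := Finset.prod_pos (fun k _ => haR k)
  have hsum' : Summable (fun j => f (j + (N+1))) := (summable_nat_add_iff _).mpr hsum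
  have hSl : ∑ k ∈ Finset.range (N+1), l k = (2^(N+1) - 1)*L - S N := by
    have hc : ∀ k ∈ Finset.range (N+1), l k = 2^k*L - 2^k*δ k := fun k _ => by
      rw [hl k]; ring
    rw [Finset.sum_congr rfl hc, Finset.sum_sub_distrib]
    have h1 : ∑ k ∈ Finset.range (N+1), (2:ℝ)^k*L = (2^(N+1)-1)*L := by
      rw [← Finset.sum_mul, geom_sum_eq (by norm_num : (2:ℝ) ≠ 1)]
      norm_num
    rw [h1]
  have hq_exp : q = Real.exp (Real.log q) := (Real.exp_log hq0).symm
  have hPR_exp : PR = Real.exp (∑ k ∈ Finset.range (N+1), l k) := by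
    rw [Real.exp_sum]
    exact Finset.prod_congr rfl fun k _ => (Real.exp_log (haR k)).symm
  have hterm : ∀ j:ℕ, q * PR * f (j + (N+1)) ≤ (1/2:ℝ)^(j+2) := by
    intro j
    set n : ℕ := j + (N+1) with hndef
    have hn6 : 6 ≤ n := by omega
    have hX : Real.log q + (∑ k ∈ Finset.range (N+1), l k)
        + (Real.log 2 * (4/3:ℝ)^n - l n) ≤ -(Real.log 2) * ((j:ℕ)+2 : ℕ) := by
      rw [hSl, hl n]
      have hgood' := hgood n (by omega)
      have hcast : ((n:ℝ) - (N:ℝ)) = (j:ℝ) + 1 := by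
        simp only [hndef]; push_cast; ring
      rw [hcast] at hgood'
      have hlog2 : Real.log 2 < 0.7 := lt_trans Real.log_two_lt_d9 (by norm_num)
      have hlog2' : 0 < Real.log 2 := Real.log_pos (by norm_num)
      have h43M : (4/3:ℝ)^M ≤ (4/3:ℝ)^N := pow_le_pow_right₀ (by norm_num) hNM
      have h43n : (4/3:ℝ)^N ≤ (4/3:ℝ)^n := pow_le_pow_right₀ (by norm_num) (by omega)
      have p1 : 0.3 * (4/3:ℝ)^n ≤ (1 - Real.log 2) * (4/3:ℝ)^n :=
        mul_le_mul_of_nonneg_right (by linarith) (by positivity)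
      have p4 : 0 ≤ (1 - Real.log 2) * ((j:ℝ)+2) :=
        mul_nonneg (by linarith) (by positivity)
      push_cast
      nlinarith [hgood', p1, p4, h43M, h43n, hlogqM, hL]
    have hfb : f n ≤ Real.exp (Real.log 2 * (4/3:ℝ)^n - l n) := hfle n hn6
    calc q * PR * f n ≤ q * PR * Real.exp (Real.log 2 * (4/3:ℝ)^n - l n) :=
          mul_le_mul_of_nonneg_left hfb (by positivity)
      _ = Real.exp (Real.log q + (∑ k ∈ Finset.range (N+1), l k)
            + (Real.log 2 * (4/3:ℝ)^n - l n)) := by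
          rw [Real.exp_add, Real.exp_add, ← hq_exp, ← hPR_exp]
      _ ≤ Real.exp (-(Real.log 2) * ((j:ℕ)+2 : ℕ)) := Real.exp_le_exp.mpr hX
      _ = (1/2:ℝ)^(j+2) := hancl_exp_neg_log_two_mul (j+2)
  have hEle : q * PR * (∑' j, f (j + (N+1))) ≤ 1/2 := by
    have h1 : q * PR * (∑' j, f (j + (N+1))) = ∑' j, q * PR * f (j + (N+1)) :=
      tsum_mul_left.symm
    have hsg : Summable (fun j:ℕ => (1/2:ℝ)^(j+2)) := by
      have := (summable_geometric_of_lt_one (show (0:ℝ) ≤ 1/2 by norm_num)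
        (by norm_num)).mul_right ((1/2:ℝ)^2)
      refine this.congr fun j => ?_
      rw [pow_add]
    have h2 : ∑' j:ℕ, q * PR * f (j + (N+1)) ≤ ∑' j:ℕ, (1/2:ℝ)^(j+2) :=
      Summable.tsum_le_tsum hterm (hsum'.mul_left _) hsg
    have h3 : ∑' j:ℕ, (1/2:ℝ)^(j+2) = 1/2 := by
      have hc : ∀ j:ℕ, (1/2:ℝ)^(j+2) = (1/2:ℝ)^j * (1/4) := by
        intro j; rw [pow_add]; norm_num
      rw [tsum_congr hc, tsum_mul_right, tsum_geometric_of_lt_one (by norm_num) (by norm_num)]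
      norm_num
    rw [h1]
    linarith [h2, h3 ▸ h2]
  have := hE1 N
  linarith
end

section
/- Assume Roth's theorem: for every algebraic irrational real ξ and real κ, if there are infinitely many pairs of coprime integers (p,q) with q > 0 and |ξ − p/q| < 1/q^κ, then κ ≤ 2. Let δ > 0 and let {a_n}, {b_n} be sequences of positive integers with limsup_{n→∞} a_{n+1} / ((∏_{i=1}^n a_i)^{2+δ} · b_{n+1}) = ∞ and liminf_{n→∞} (a_{n+1}/a_n)·(b_n/b_{n+1}) > 1. Then ∑_{n=1}^∞ b_n/a_n is transcendental. -/
set_option maxHeartbeats 1000000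

open Filter Finset

private lemma HR_tail_aux (c : ℕ → ℝ) (t : ℝ) (ht1 : 1 < t)
    (hsum : Summable c) (k : ℕ) (hd : ∀ i : ℕ, c (i + k) ≤ c k * t⁻¹ ^ i) :
    (∑' i : ℕ, c (i + k)) ≤ c k * (1 - t⁻¹)⁻¹ := by
  have ht0 : (0:ℝ) < t := lt_trans one_pos ht1
  have hti : t⁻¹ < 1 := by rw [inv_lt_one_iff₀]; right; exact ht1
  have hg : Summable (fun i : ℕ => c k * t⁻¹ ^ i) :=
    Summable.mul_left _ (summable_geometric_of_lt_one (by positivity) hti)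
  calc (∑' i : ℕ, c (i + k)) ≤ ∑' i : ℕ, c k * t⁻¹ ^ i :=
        Summable.tsum_le_tsum hd ((summable_nat_add_iff k).mpr hsum) hg
    _ = c k * ∑' i : ℕ, t⁻¹ ^ i := tsum_mul_left
    _ = c k * (1 - t⁻¹)⁻¹ := by
        rw [tsum_geometric_of_lt_one (by positivity) hti]

theorem HanclRucki1
    (hRoth : ∀ ξ κ : ℝ, IsAlgebraic ℚ ξ → Irrational ξ →
      {pq : ℤ × ℤ | 0 < pq.2 ∧ IsCoprime pq.1 pq.2 ∧
        |ξ - (pq.1 : ℝ) / (pq.2 : ℝ)| < 1 / (pq.2 : ℝ) ^ κ}.Infinite → κ ≤ 2)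
    (a b : ℕ → ℤ) (δ : ℝ)
    (ha : ∀ k, 0 < a k) (hb : ∀ k, 0 < b k) (hδ : 0 < δ)
    (hlimsup : Filter.limsup (fun k =>
      (((a (k + 1) : ℝ) / (∏ i ∈ Finset.range (k + 1), (a i : ℝ)) ^ ((2 : ℝ) + δ) *
        (1 / (b (k + 1) : ℝ)) : ℝ) : EReal)) atTop = ⊤)
    (hliminf : 1 < Filter.liminf (fun k =>
      (((a (k + 1) : ℝ) / (a k : ℝ) * ((b k : ℝ) / (b (k + 1) : ℝ)) : ℝ) : EReal)) atTop) :
    Transcendental ℚ (∑' k : ℕ, (b k : ℝ) / (a k : ℝ)) := by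
  -- basic positivity
  have haR : ∀ k, (0:ℝ) < (a k : ℝ) := fun k => by exact_mod_cast ha k
  have hbR : ∀ k, (0:ℝ) < (b k : ℝ) := fun k => by exact_mod_cast hb k
  set c : ℕ → ℝ := fun k => (b k : ℝ) / (a k : ℝ) with hc_def
  have hc : ∀ k, 0 < c k := fun k => div_pos (hbR k) (haR k)
  -- ratio bound from liminf
  obtain ⟨t, ht1, htL⟩ : ∃ t : ℝ, 1 < t ∧ (t : EReal) < Filter.liminf (fun k =>
      (((a (k + 1) : ℝ) / (a k : ℝ) * ((b k : ℝ) / (b (k + 1) : ℝ)) : ℝ) : EReal)) atTop := by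
    obtain ⟨t, h1t, htL⟩ := EReal.lt_iff_exists_real_btwn.mp hliminf
    exact ⟨t, by exact_mod_cast h1t, htL⟩
  have hratio : ∀ᶠ k in atTop, c (k+1) * t ≤ c k := by
    have := eventually_lt_of_lt_liminf htL
    filter_upwards [this] with k hk
    have hk' : t < (a (k + 1) : ℝ) / (a k : ℝ) * ((b k : ℝ) / (b (k + 1) : ℝ)) := by
      exact_mod_cast hk
    rw [hc_def]
    have h1 : (0:ℝ) < (a k : ℝ) := haR k
    have h2 : (0:ℝ) < (a (k+1) : ℝ) := haR (k+1)
    have h3 : (0:ℝ) < (b k : ℝ) := hbR k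
    have h4 : (0:ℝ) < (b (k+1) : ℝ) := hbR (k+1)
    rw [div_mul_div_comm, lt_div_iff₀ (by positivity)] at hk'
    rw [div_mul_eq_mul_div, div_le_div_iff₀ (by positivity) (by positivity)]
    nlinarith
  obtain ⟨N₀, hrat⟩ := eventually_atTop.mp hratio
  have ht0 : (0:ℝ) < t := lt_trans one_pos ht1
  -- summability
  have hsum : Summable c := by
    apply summable_of_ratio_norm_eventually_le (r := t⁻¹) (by
      rw [inv_lt_one_iff₀]; right; exact ht1)
    filter_upwards [hratio] with k hk
    rw [Real.norm_eq_abs, Real.norm_eq_abs, abs_of_pos (hc _), abs_of_pos (hc _)]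
    rw [inv_mul_eq_div, le_div_iff₀ ht0]
    linarith
  set α : ℝ := ∑' k : ℕ, c k with hα_def
  -- geometric decay of the tail
  have hdecay : ∀ k ≥ N₀, ∀ i : ℕ, c (k + i) ≤ c k * t⁻¹ ^ i := by
    intro k hk i
    induction i with
    | zero => simp
    | succ i ih =>
      have h1 : c (k + i + 1) * t ≤ c (k + i) := hrat _ (le_trans hk (Nat.le_add_right _ _))
      have h2 : c (k + i + 1) ≤ c (k + i) * t⁻¹ := by
        have h3 := mul_le_mul_of_nonneg_right h1 (inv_nonneg.mpr ht0.le)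
        calc c (k + i + 1) = c (k + i + 1) * t * t⁻¹ := by field_simp
          _ ≤ c (k + i) * t⁻¹ := h3
      calc c (k + (i+1)) = c (k + i + 1) := by ring_nf
        _ ≤ c (k + i) * t⁻¹ := h2
        _ ≤ c k * t⁻¹ ^ i * t⁻¹ := by
            apply mul_le_mul_of_nonneg_right ih (by positivity)
        _ = c k * t⁻¹ ^ (i+1) := by ring
  set T : ℝ := (1 - t⁻¹)⁻¹ with hT_def
  have hTpos : 0 < T := by
    rw [hT_def]
    have h : t⁻¹ < 1 := by rw [inv_lt_one_iff₀]; right; exact ht1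
    have : 0 < 1 - t⁻¹ := by linarith
    exact inv_pos.mpr this
  have htail : ∀ k ≥ N₀, (∑' i : ℕ, c (i + k)) ≤ c k * T := by
    intro k hk
    rw [hT_def]
    apply HR_tail_aux c t ht1 hsum k
    intro i
    have := hdecay k hk i
    rwa [Nat.add_comm k i] at this
  have htailpos : ∀ k : ℕ, 0 < (∑' i : ℕ, c (i + k)) := by
    intro k
    exact ((summable_nat_add_iff k).mpr hsum).tsum_pos (fun i => le_of_lt (hc _)) 0 (by simpa using hc k)
  have hαS : ∀ k : ℕ, α = (∑ i ∈ range k, c i) + ∑' i : ℕ, c (i + k) := by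
    intro k
    rw [hα_def, ← hsum.sum_add_tsum_nat_add k]
  -- denominators and numerators
  set Q : ℕ → ℤ := fun k => ∏ i ∈ range (k+1), a i with hQ_def
  have hQpos : ∀ k, 0 < Q k := fun k => Finset.prod_pos (fun i _ => ha i)
  have hQR : ∀ k, (Q k : ℝ) = ∏ i ∈ range (k+1), (a i : ℝ) := fun k => by
    rw [hQ_def]; push_cast; ring
  have hQRpos : ∀ k, (0:ℝ) < (Q k : ℝ) := fun k => by exact_mod_cast hQpos k
  have hQ1 : ∀ k, (1:ℝ) ≤ (Q k : ℝ) := fun k => by exact_mod_cast hQpos k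
  set p : ℕ → ℤ := fun k => ∑ i ∈ range (k+1), b i * ∏ j ∈ (range (k+1)).erase i, a j
    with hp_def
  have hSpQ : ∀ k : ℕ, (∑ i ∈ range (k+1), c i) = (p k : ℝ) / (Q k : ℝ) := by
    intro k
    have : (p k : ℝ) = ∑ i ∈ range (k+1), (b i : ℝ) * ∏ j ∈ (range (k+1)).erase i, (a j : ℝ) := by
      rw [hp_def]; push_cast; ring
    rw [this, Finset.sum_div]
    apply Finset.sum_congr rfl
    intro i hi
    have hP : (∏ j ∈ (range (k+1)).erase i, (a j : ℝ)) * (a i : ℝ)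
        = ∏ j ∈ range (k+1), (a j : ℝ) := Finset.prod_erase_mul _ _ hi
    have hPpos : (0:ℝ) < ∏ j ∈ (range (k+1)).erase i, (a j : ℝ) :=
      Finset.prod_pos (fun j _ => haR j)
    rw [hQR k, ← hP]
    rw [mul_comm (∏ j ∈ (range (k+1)).erase i, (a j : ℝ)) (a i : ℝ)] at *
    rw [show (b i : ℝ) * (∏ j ∈ (range (k+1)).erase i, (a j : ℝ)) /
        ((a i : ℝ) * ∏ j ∈ (range (k+1)).erase i, (a j : ℝ)) = (b i : ℝ) / (a i : ℝ) from
      mul_div_mul_right _ _ (ne_of_gt hPpos)]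
  -- key estimate for k in the "frequently" set
  have hkey : ∀ M : ℝ, 0 < M → ∃ᶠ k in atTop, N₀ ≤ k ∧
      0 < α - (p k : ℝ) / (Q k : ℝ) ∧
      α - (p k : ℝ) / (Q k : ℝ) ≤ T / (M * (Q k : ℝ) ^ ((2:ℝ) + δ)) := by
    intro M hM
    have hfreq : ∃ᶠ k in atTop, (M : EReal) < (((a (k + 1) : ℝ) /
        (∏ i ∈ Finset.range (k + 1), (a i : ℝ)) ^ ((2 : ℝ) + δ) *
        (1 / (b (k + 1) : ℝ)) : ℝ) : EReal) := by
      apply frequently_lt_of_lt_limsup (by isBoundedDefault)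
      rw [hlimsup]; exact EReal.coe_lt_top M
    have hfreq' : ∃ᶠ k in atTop, ((M : ℝ) < (a (k + 1) : ℝ) /
        (∏ i ∈ Finset.range (k + 1), (a i : ℝ)) ^ ((2 : ℝ) + δ) * (1 / (b (k + 1) : ℝ))
        ∧ N₀ ≤ k) := by
      apply hfreq.and_eventually (eventually_ge_atTop N₀) |>.mono
      intro k hk
      exact ⟨by exact_mod_cast hk.1, hk.2⟩
    apply hfreq'.mono
    rintro k ⟨hk, hkN⟩
    have hQrp : (0:ℝ) < (∏ i ∈ Finset.range (k + 1), (a i : ℝ)) ^ ((2:ℝ) + δ) := by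
      apply Real.rpow_pos_of_pos
      rw [← hQR]; exact hQRpos k
    -- c (k+1) < 1 / (M * Q k ^ (2+δ))
    have hck : c (k+1) ≤ 1 / (M * (Q k : ℝ) ^ ((2:ℝ) + δ)) := by
      have h2 : M * ((∏ i ∈ Finset.range (k + 1), (a i : ℝ)) ^ ((2:ℝ) + δ) * (b (k+1) : ℝ))
          < (a (k+1) : ℝ) := by
        rw [mul_one_div, div_div, lt_div_iff₀ (mul_pos hQrp (hbR (k+1)))] at hk
        nlinarith [hbR (k+1), hQrp]
      rw [hc_def]
      rw [div_le_div_iff₀ (haR (k+1)) (by rw [hQR]; positivity)]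
      rw [hQR]
      nlinarith [hbR (k+1), hQrp, hM]
    have hN : N₀ ≤ k := hkN
    constructor
    · exact hN
    have hαk := hαS (k+1)
    have htp := htailpos (k+1)
    have hSp := hSpQ k
    have htb : (∑' i : ℕ, c (i + (k+1))) ≤ c (k+1) * T := htail (k+1) (by omega)
    constructor
    · rw [hαk, hSp.symm]; linarith
    · rw [hαk, hSp.symm]
      have : (∑ i ∈ range (k+1), c i) + (∑' i : ℕ, c (i + (k+1))) - (∑ i ∈ range (k+1), c i)
          = ∑' i : ℕ, c (i + (k+1)) := by ring
      rw [this]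
      calc (∑' i : ℕ, c (i + (k+1))) ≤ c (k+1) * T := htb
        _ ≤ (1 / (M * (Q k : ℝ) ^ ((2:ℝ) + δ))) * T :=
            mul_le_mul_of_nonneg_right hck (le_of_lt hTpos)
        _ = T / (M * (Q k : ℝ) ^ ((2:ℝ) + δ)) := by ring
  -- main argument
  intro halg
  by_cases hrat : ∃ r : ℚ, (r : ℝ) = α
  · -- rational case
    obtain ⟨r, hr⟩ := hrat
    set v : ℤ := (r.den : ℤ) with hv_def
    have hv : 0 < v := by rw [hv_def]; exact_mod_cast r.pos
    have hvR : (0:ℝ) < (v:ℝ) := by exact_mod_cast hv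
    set M : ℝ := T * v + 1 with hM_def
    have hM : 0 < M := by positivity
    obtain ⟨k, hkN, hpos, hle⟩ := (hkey M hM).exists
    -- α - p k / Q k ≥ 1 / (v * Q k)
    have hlb : 1 / ((v:ℝ) * (Q k : ℝ)) ≤ α - (p k : ℝ) / (Q k : ℝ) := by
      have hαr : α = (r.num : ℝ) / (v : ℝ) := by
        rw [← hr, Rat.cast_def]; norm_num [hv_def]
      have hdiff : α - (p k : ℝ) / (Q k : ℝ)
          = ((r.num * Q k - v * p k : ℤ) : ℝ) / ((v:ℝ) * (Q k : ℝ)) := by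
        have hvne : ((v:ℤ):ℝ) ≠ 0 := by exact_mod_cast ne_of_gt hv
        have hQne : ((Q k : ℤ):ℝ) ≠ 0 := ne_of_gt (hQRpos k)
        rw [hαr]; push_cast
        field_simp
      have hm : (0:ℤ) < r.num * Q k - v * p k := by
        by_contra hcon
        push_neg at hcon
        have : ((r.num * Q k - v * p k : ℤ) : ℝ) ≤ 0 := by exact_mod_cast hcon
        rw [hdiff] at hpos
        have := div_pos_iff.mp hpos
        rcases this with ⟨h1, _⟩ | ⟨_, h2⟩
        · linarith
        · nlinarith [hQRpos k]
      have hm1 : (1:ℝ) ≤ ((r.num * Q k - v * p k : ℤ) : ℝ) := by exact_mod_cast hm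
      rw [hdiff]
      have hd : (0:ℝ) < (v:ℝ) * (Q k : ℝ) := mul_pos hvR (hQRpos k)
      gcongr
    have hQe : (Q k : ℝ) ≤ (Q k : ℝ) ^ ((2:ℝ) + δ) := by
      calc (Q k : ℝ) = (Q k : ℝ) ^ (1:ℝ) := (Real.rpow_one _).symm
        _ ≤ (Q k : ℝ) ^ ((2:ℝ) + δ) :=
            Real.rpow_le_rpow_of_exponent_le (hQ1 k) (by linarith)
    have hQrp : (0:ℝ) < (Q k : ℝ) ^ ((2:ℝ) + δ) := Real.rpow_pos_of_pos (hQRpos k) _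
    have h1 : 1 / ((v:ℝ) * (Q k : ℝ)) ≤ T / (M * (Q k : ℝ) ^ ((2:ℝ) + δ)) := le_trans hlb hle
    rw [div_le_div_iff₀ (mul_pos hvR (hQRpos k)) (mul_pos hM hQrp)] at h1
    -- 1 * (M * Q^e) ≤ T * (v * Q) ⇒ M * Q ≤ M * Q^e ≤ T v Q ⇒ M ≤ T v, contradiction
    have h2 : M * (Q k : ℝ) ≤ T * ((v:ℝ) * (Q k : ℝ)) := by nlinarith [hQRpos k]
    have h3 : M ≤ T * (v:ℝ) := by
      have := hQRpos k
      nlinarith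
    rw [hM_def] at h3; linarith
  · -- irrational case: use Roth
    have hirr : Irrational α := by
      rw [Irrational]
      intro hcon
      obtain ⟨r, hr⟩ := hcon
      exact hrat ⟨r, hr⟩
    set M : ℝ := T + 1 with hM_def
    have hM : 0 < M := by positivity
    have hMT : T < M := by rw [hM_def]; linarith
    -- the set of good k is infinite
    have hinf : {k : ℕ | N₀ ≤ k ∧ 0 < α - (p k : ℝ) / (Q k : ℝ) ∧
        α - (p k : ℝ) / (Q k : ℝ) ≤ T / (M * (Q k : ℝ) ^ ((2:ℝ) + δ))}.Infinite :=
      Nat.frequently_atTop_iff_infinite.mp (hkey M hM)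
    -- map each good k to a reduced fraction
    set g : ℕ → ℤ × ℤ := fun k => (p k / Int.gcd (p k) (Q k), Q k / Int.gcd (p k) (Q k))
      with hg_def
    have hgprop : ∀ k : ℕ, 0 < (g k).2 ∧ IsCoprime (g k).1 (g k).2 ∧
        ((g k).1 : ℝ) / ((g k).2 : ℝ) = (p k : ℝ) / (Q k : ℝ) ∧ (g k).2 ≤ Q k := by
      intro k
      have hgcd : 0 < Int.gcd (p k) (Q k) := by
        rw [Int.gcd_pos_iff]; right; exact ne_of_gt (hQpos k)
      have hgcdZ : (0:ℤ) < (Int.gcd (p k) (Q k) : ℤ) := by exact_mod_cast hgcd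
      have hd1 : ((Int.gcd (p k) (Q k) : ℤ)) ∣ p k := Int.gcd_dvd_left _ _
      have hd2 : ((Int.gcd (p k) (Q k) : ℤ)) ∣ Q k := Int.gcd_dvd_right _ _
      have hq' : (g k).2 * (Int.gcd (p k) (Q k) : ℤ) = Q k := by
        rw [hg_def]; exact Int.ediv_mul_cancel hd2
      have hp' : (g k).1 * (Int.gcd (p k) (Q k) : ℤ) = p k := by
        rw [hg_def]; exact Int.ediv_mul_cancel hd1
      have hq'pos : 0 < (g k).2 := by
        by_contra h
        push_neg at h
        nlinarith [hQpos k, hgcdZ, hq']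
      refine ⟨hq'pos, ?_, ?_, ?_⟩
      · rw [Int.isCoprime_iff_gcd_eq_one, hg_def]
        exact Int.gcd_div_gcd_div_gcd hgcd
      · have hgR : ((Int.gcd (p k) (Q k) : ℤ) : ℝ) ≠ 0 := by
          exact_mod_cast ne_of_gt hgcdZ
        have hq'R : ((g k).2 : ℝ) ≠ 0 := by exact_mod_cast ne_of_gt hq'pos
        have e1 : ((g k).1 : ℝ) * ((Int.gcd (p k) (Q k) : ℤ) : ℝ) = (p k : ℝ) := by
          exact_mod_cast congrArg (Int.cast : ℤ → ℝ) hp'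
        have e2 : ((g k).2 : ℝ) * ((Int.gcd (p k) (Q k) : ℤ) : ℝ) = (Q k : ℝ) := by
          exact_mod_cast congrArg (Int.cast : ℤ → ℝ) hq'
        rw [← e1, ← e2, mul_div_mul_right _ _ hgR]
      · nlinarith [hgcdZ, hq'pos, hq']
    -- the image set is a subset of the Roth set with κ = 2 + δ
    have hsub : g '' {k : ℕ | N₀ ≤ k ∧ 0 < α - (p k : ℝ) / (Q k : ℝ) ∧
        α - (p k : ℝ) / (Q k : ℝ) ≤ T / (M * (Q k : ℝ) ^ ((2:ℝ) + δ))} ⊆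
        {pq : ℤ × ℤ | 0 < pq.2 ∧ IsCoprime pq.1 pq.2 ∧
          |α - (pq.1 : ℝ) / (pq.2 : ℝ)| < 1 / (pq.2 : ℝ) ^ ((2:ℝ) + δ)} := by
      rintro _ ⟨k, ⟨hkN, hpos, hle⟩, rfl⟩
      obtain ⟨h1, h2, h3, h4⟩ := hgprop k
      refine ⟨h1, h2, ?_⟩
      rw [h3, abs_of_pos hpos]
      have hq1 : (1:ℝ) ≤ ((g k).2 : ℝ) := by exact_mod_cast h1
      have hqle : ((g k).2 : ℝ) ≤ (Q k : ℝ) := by exact_mod_cast h4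
      have hQe : ((g k).2 : ℝ) ^ ((2:ℝ) + δ) ≤ (Q k : ℝ) ^ ((2:ℝ) + δ) :=
        Real.rpow_le_rpow (by linarith) hqle (by linarith)
      have hq'rp : (0:ℝ) < ((g k).2 : ℝ) ^ ((2:ℝ) + δ) :=
        Real.rpow_pos_of_pos (by linarith) _
      have hQrp : (0:ℝ) < (Q k : ℝ) ^ ((2:ℝ) + δ) := Real.rpow_pos_of_pos (hQRpos k) _
      calc α - (p k : ℝ) / (Q k : ℝ) ≤ T / (M * (Q k : ℝ) ^ ((2:ℝ) + δ)) := hle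
        _ < 1 / (Q k : ℝ) ^ ((2:ℝ) + δ) := by
            rw [div_lt_div_iff₀ (by positivity) (by positivity)]
            nlinarith
        _ ≤ 1 / ((g k).2 : ℝ) ^ ((2:ℝ) + δ) := by
            apply div_le_div_of_nonneg_left one_pos.le hq'rp hQe
    -- injectivity: the value p k / Q k is strictly increasing in k
    have hSmono : StrictMono (fun k : ℕ => (p k : ℝ) / (Q k : ℝ)) := by
      have : StrictMono (fun k : ℕ => ∑ i ∈ range (k+1), c i) := by
        apply strictMono_nat_of_lt_succ
        intro n
        rw [Finset.sum_range_succ c (n+1)]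
        have := hc (n+1)
        linarith
      intro x y hxy
      show (p x : ℝ) / (Q x : ℝ) < (p y : ℝ) / (Q y : ℝ)
      rw [← hSpQ x, ← hSpQ y]
      exact this hxy
    have hginj : Function.Injective g := by
      intro x y hxy
      have hx := (hgprop x).2.2.1
      have hy := (hgprop y).2.2.1
      have : (p x : ℝ) / (Q x : ℝ) = (p y : ℝ) / (Q y : ℝ) := by
        rw [← hx, ← hy, hxy]
      exact hSmono.injective this
    have hRothInf : {pq : ℤ × ℤ | 0 < pq.2 ∧ IsCoprime pq.1 pq.2 ∧
        |α - (pq.1 : ℝ) / (pq.2 : ℝ)| < 1 / (pq.2 : ℝ) ^ ((2:ℝ) + δ)}.Infinite :=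
      Set.Infinite.mono hsub (Set.Infinite.image (hginj.injOn) hinf)
    have := hRoth α ((2:ℝ) + δ) halg hirr hRothInf
    linarith
end

section
/- Assume Roth's theorem as a hypothesis. Let δ, ε > 0 and let {a_n}, {b_n} be sequences of positive integers with limsup_{n→∞} a_{n+1} / ((∏_{i=1}^n a_i)^{2 + 2/ε + δ} · b_{n+1}) = ∞, and suppose that for all sufficiently large n, (a_{n+1}/b_{n+1})^{1/(1+ε)} ≥ (a_n/b_n)^{1/(1+ε)} + 1. Then ∑_{n=1}^∞ b_n/a_n is transcendental. -/
set_option maxHeartbeats 2000000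

open Filter Finset

theorem HanclRucki2
    (hRoth : ∀ ξ κ : ℝ, IsAlgebraic ℚ ξ → Irrational ξ →
      {pq : ℤ × ℤ | 0 < pq.2 ∧ IsCoprime pq.1 pq.2 ∧
        |ξ - (pq.1 : ℝ) / (pq.2 : ℝ)| < 1 / (pq.2 : ℝ) ^ κ}.Infinite → κ ≤ 2)
    (a b : ℕ → ℤ) (δ ε : ℝ)
    (ha : ∀ k, 0 < a k) (hb : ∀ k, 0 < b k) (hδ : 0 < δ) (hε : 0 < ε)
    (hlimsup : Filter.limsup (fun k =>
      (((a (k + 1) : ℝ) / (∏ i ∈ Finset.range (k + 1), (a i : ℝ)) ^ ((2 : ℝ) + 2 / ε + δ) *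
        (1 / (b (k + 1) : ℝ)) : ℝ) : EReal)) atTop = ⊤)
    (hev : ∀ᶠ k in atTop,
      ((a k : ℝ) / (b k : ℝ)) ^ ((1 : ℝ) / (1 + ε)) + 1 ≤
        ((a (k + 1) : ℝ) / (b (k + 1) : ℝ)) ^ ((1 : ℝ) / (1 + ε))) :
    Transcendental ℚ (∑' k : ℕ, (b k : ℝ) / (a k : ℝ)) := by
  have haR : ∀ k, (0:ℝ) < (a k : ℝ) := fun k => by exact_mod_cast ha k
  have hbR : ∀ k, (0:ℝ) < (b k : ℝ) := fun k => by exact_mod_cast hb k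
  have hab : ∀ k, (0:ℝ) < (a k : ℝ) / (b k : ℝ) := fun k => div_pos (haR k) (hbR k)
  have hε1 : (0:ℝ) < 1 + ε := by linarith
  set f : ℕ → ℝ := fun k => ((a k : ℝ) / (b k : ℝ)) ^ ((1:ℝ)/(1+ε)) with hf
  have hfpos : ∀ k, 0 < f k := fun k => Real.rpow_pos_of_pos (hab k) _
  obtain ⟨N, hN⟩ := eventually_atTop.mp hev
  -- growth of f
  have hgrow : ∀ n, N ≤ n → ∀ j : ℕ, f n + j ≤ f (n + j) := by
    intro n hn j
    induction j with
    | zero => simp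
    | succ j ih =>
      have h1 := hN (n + j) (le_trans hn (Nat.le_add_right _ _))
      have : f n + (j:ℝ) + 1 ≤ f (n + j) + 1 := by linarith
      push_cast
      calc f n + ((j:ℝ) + 1) = (f n + j) + 1 := by ring
        _ ≤ f (n + j) + 1 := by linarith
        _ ≤ f (n + j + 1) := h1
  have hfk : ∀ k, N ≤ k → ((k:ℝ) - N) ≤ f k := by
    intro k hk
    have h := hgrow N le_rfl (k - N)
    rw [Nat.add_sub_cancel' hk] at h
    have : ((k - N : ℕ) : ℝ) = (k:ℝ) - N := by
      rw [Nat.cast_sub hk]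
    rw [this] at h
    nlinarith [hfpos N]
  -- constants
  set R : ℝ := 2 + 2/ε + δ with hR
  have hR0 : 0 < R := by positivity
  have hεR : ε * R = 2*ε + 2 + δ*ε := by rw [hR]; field_simp
  have hkey : 2/R < ε/(1+ε) := by
    rw [div_lt_div_iff₀ hR0 hε1]
    nlinarith
  set u : ℝ := (2/R + ε/(1+ε))/2 with hu
  have hu0 : 0 < u := by positivity
  have huR : 2/R < u := by rw [hu]; linarith
  have hu1 : u < ε/(1+ε) := by rw [hu]; linarith
  set κ : ℝ := R * u with hκ
  have hκ2 : 2 < κ := by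
    have : R * (2/R) < R * u := mul_lt_mul_of_pos_left huR hR0
    have h2 : R * (2/R) = 2 := by field_simp
    linarith [h2 ▸ this]
  have hκ0 : 0 < κ := by linarith
  set s : ℝ := u * (1+ε) with hs
  have hs0 : 0 < s := by positivity
  set p : ℝ := (1 - u) * (1+ε) with hp
  have hp1 : 1 < p := by
    have h1 : u * (1+ε) < ε := (lt_div_iff₀ hε1).mp hu1
    rw [hp]; nlinarith
  have hsp : s + p = 1 + ε := by rw [hs, hp]; ring
  -- summable p-series
  have hPsum : ∀ q : ℝ, 1 < q → Summable (fun j : ℕ => ((j:ℝ)+1)^(-q)) := by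
    intro q hq
    have h1 : Summable (fun n : ℕ => ((n:ℝ))^(-q)) := by
      have := Real.summable_nat_rpow_inv.2 hq
      refine this.congr fun n => ?_
      rw [Real.rpow_neg (Nat.cast_nonneg n)]
    have h2 := (summable_nat_add_iff 1).mpr h1
    refine h2.congr fun n => ?_
    push_cast
    ring_nf
  set C : ℝ := ∑' j : ℕ, ((j:ℝ)+1)^(-p) with hC
  have hCsum := hPsum p hp1
  have hC0 : 0 ≤ C := tsum_nonneg fun j => Real.rpow_nonneg (by positivity) _
  -- term formula and bounds
  have hterm : ∀ k, (b k:ℝ)/(a k:ℝ) = f k ^ (-(1+ε)) := by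
    intro k
    rw [hf]
    rw [← Real.rpow_mul (hab k).le]
    have : (1/(1+ε)) * (-(1+ε)) = -1 := by field_simp
    rw [this, Real.rpow_neg_one, inv_div]
  have htermnn : ∀ k, 0 ≤ (b k:ℝ)/(a k:ℝ) := fun k => (div_pos (hbR k) (haR k)).le
  have hsum : Summable (fun k => (b k:ℝ)/(a k:ℝ)) := by
    rw [← summable_nat_add_iff (N+1)]
    refine Summable.of_nonneg_of_le (fun j => htermnn _) (fun j => ?_) (hPsum (1+ε) (by linarith))
    rw [hterm]
    have h1 : ((j:ℝ)+1) ≤ f (j + (N+1)) := by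
      have := hfk (j + (N+1)) (by omega)
      push_cast at this ⊢
      linarith
    have h0 : (0:ℝ) < (j:ℝ)+1 := by positivity
    exact Real.rpow_le_rpow_of_nonpos h0 h1 (by linarith)
  set α : ℝ := ∑' k : ℕ, (b k : ℝ) / (a k : ℝ) with hα
  -- tail decomposition
  have htaileq : ∀ n : ℕ, α - ∑ k ∈ range (n+1), (b k:ℝ)/(a k:ℝ)
      = ∑' j : ℕ, (b (j + (n+1)):ℝ)/(a (j + (n+1)):ℝ) := by
    intro n
    rw [hα, ← hsum.sum_add_tsum_nat_add (n+1)]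
    ring
  have htpos : ∀ n : ℕ, 0 < α - ∑ k ∈ range (n+1), (b k:ℝ)/(a k:ℝ) := by
    intro n
    rw [htaileq n]
    have hsh : Summable (fun j : ℕ => (b (j + (n+1)):ℝ)/(a (j + (n+1)):ℝ)) :=
      (summable_nat_add_iff (n+1)).2 hsum
    calc (0:ℝ) < (b (0 + (n+1)):ℝ)/(a (0 + (n+1)):ℝ) := div_pos (hbR _) (haR _)
      _ ≤ _ := Summable.le_tsum hsh 0 fun j _ => htermnn _
  -- tail upper bound
  have htail : ∀ n : ℕ, N ≤ n → α - ∑ k ∈ range (n+1), (b k:ℝ)/(a k:ℝ)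
      ≤ C * f (n+1) ^ (-s) := by
    intro n hn
    rw [htaileq n]
    set t := f (n+1) with ht
    have ht1 : 1 ≤ t := by
      have h := hfk (n+1) (by omega)
      rw [← ht] at h
      have hn' : (N:ℝ) ≤ n := by exact_mod_cast hn
      push_cast at h
      linarith
    have hbound : ∀ j : ℕ, (b (j + (n+1)):ℝ)/(a (j + (n+1)):ℝ) ≤ t^(-s) * ((j:ℝ)+1)^(-p) := by
      intro j
      rw [hterm]
      have hfj : t + j ≤ f (j + (n+1)) := by
        have := hgrow (n+1) (by omega) j
        rw [add_comm (n+1) j] at this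
        linarith
      have htj0 : (0:ℝ) < t + j := by positivity
      calc f (j + (n+1)) ^ (-(1+ε)) ≤ (t + j) ^ (-(1+ε)) :=
            Real.rpow_le_rpow_of_nonpos htj0 hfj (by linarith)
        _ ≤ t^(-s) * ((j:ℝ)+1)^(-p) := by
            rw [Real.rpow_neg htj0.le, Real.rpow_neg (by linarith : (0:ℝ) ≤ t),
              Real.rpow_neg (by positivity : (0:ℝ) ≤ (j:ℝ)+1), ← mul_inv]
            refine inv_anti₀ (by positivity) ?_
            have : (t + j) ^ (1+ε) = (t+j)^s * (t+j)^p := by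
              rw [← Real.rpow_add htj0, hsp]
            rw [this]
            have h1 : t^s ≤ (t+j)^s := Real.rpow_le_rpow (by linarith) (le_add_of_nonneg_right (Nat.cast_nonneg j)) hs0.le
            have h2 : ((j:ℝ)+1)^p ≤ (t+j)^p := Real.rpow_le_rpow (by positivity) (by linarith) (by linarith)
            exact mul_le_mul h1 h2 (by positivity) (by positivity)
    have hsh : Summable (fun j : ℕ => (b (j + (n+1)):ℝ)/(a (j + (n+1)):ℝ)) :=
      (summable_nat_add_iff (n+1)).2 hsum
    calc (∑' j : ℕ, (b (j + (n+1)):ℝ)/(a (j + (n+1)):ℝ))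
        ≤ ∑' j : ℕ, t^(-s) * ((j:ℝ)+1)^(-p) := Summable.tsum_le_tsum hbound hsh (hCsum.mul_left _)
      _ = t^(-s) * C := by rw [tsum_mul_left]
      _ = C * t^(-s) := mul_comm _ _
  -- integer numerators/denominators
  set Q : ℕ → ℤ := fun n => ∏ i ∈ range (n+1), a i with hQ
  set P : ℕ → ℤ := fun n => ∑ k ∈ range (n+1), b k * ∏ i ∈ (range (n+1)).erase k, a i with hP
  have hQpos : ∀ n, 0 < Q n := fun n => Finset.prod_pos fun i _ => ha i
  have hQcast : ∀ n, (Q n : ℝ) = ∏ i ∈ range (n+1), (a i : ℝ) := by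
    intro n; rw [hQ]; push_cast; ring
  have hQ1 : ∀ n, (1:ℝ) ≤ (Q n : ℝ) := by
    intro n
    have : (1:ℤ) ≤ Q n := hQpos n
    exact_mod_cast this
  have hPQ : ∀ n, ∑ k ∈ range (n+1), (b k:ℝ)/(a k:ℝ) = (P n:ℝ)/(Q n:ℝ) := by
    intro n
    have hPR : (P n : ℝ) = ∑ k ∈ range (n+1), (b k : ℝ) * ∏ i ∈ (range (n+1)).erase k, (a i:ℝ) := by
      rw [hP]; push_cast; ring
    rw [hPR, hQcast n, Finset.sum_div]
    refine Finset.sum_congr rfl fun k hk => ?_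
    rw [← Finset.mul_prod_erase (range (n+1)) (fun i => (a i:ℝ)) hk]
    exact (mul_div_mul_right _ _ (ne_of_gt (Finset.prod_pos fun i _ => haR i))).symm
  -- Q grows
  have hQn : ∀ n, N + 1 ≤ n → ((n:ℝ) - N) ≤ (Q n : ℝ) := by
    intro n hn
    have h1 : (a n : ℝ) ≤ (Q n : ℝ) := by
      have : a n ≤ Q n := Int.le_of_dvd (hQpos n)
        (Finset.dvd_prod_of_mem a (Finset.mem_range.2 (Nat.lt_succ_self n)))
      exact_mod_cast this
    have h2 : (a n : ℝ) / (b n : ℝ) ≤ (a n : ℝ) := by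
      apply div_le_self (haR n).le
      exact_mod_cast hb n
    have h3 : f n ^ ((1:ℝ)+ε) = (a n : ℝ) / (b n : ℝ) := by
      rw [hf, ← Real.rpow_mul (hab n).le]
      rw [one_div_mul_cancel (ne_of_gt hε1), Real.rpow_one]
    have h4 : ((n:ℝ) - N) ≤ f n ^ ((1:ℝ)+ε) := by
      have hfn := hfk n (by omega)
      have h5 : ((n:ℝ) - N) ^ ((1:ℝ)+ε) ≤ f n ^ ((1:ℝ)+ε) := by
        apply Real.rpow_le_rpow ?_ hfn (by linarith)
        have : (N:ℝ) + 1 ≤ n := by exact_mod_cast hn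
        linarith
      have h6 : ((n:ℝ) - N) ≤ ((n:ℝ) - N) ^ ((1:ℝ)+ε) := by
        have hge1 : (1:ℝ) ≤ (n:ℝ) - N := by
          have : (N:ℝ) + 1 ≤ n := by exact_mod_cast hn
          linarith
        calc ((n:ℝ) - N) = ((n:ℝ) - N) ^ ((1:ℝ)) := (Real.rpow_one _).symm
          _ ≤ ((n:ℝ) - N) ^ ((1:ℝ)+ε) :=
            Real.rpow_le_rpow_of_exponent_le hge1 (by linarith)
      linarith
    linarith
  -- frequently large
  have hfreq : ∀ M : ℝ, ∃ᶠ n in atTop, M * (Q n:ℝ)^R < (a (n+1):ℝ)/(b (n+1):ℝ) := by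
    intro M
    have h1 : ∃ᶠ n in atTop,
        M < (a (n+1):ℝ) / (∏ i ∈ range (n+1), (a i : ℝ)) ^ R * (1 / (b (n+1):ℝ)) := by
      by_contra hcon
      rw [not_frequently] at hcon
      have h2 : ∀ᶠ n in atTop,
          (((a (n+1):ℝ) / (∏ i ∈ range (n+1), (a i : ℝ)) ^ R * (1 / (b (n+1):ℝ)) : ℝ) : EReal)
            ≤ ((M:ℝ) : EReal) := by
        filter_upwards [hcon] with n hn
        rw [not_lt] at hn
        exact_mod_cast hn
      have h3 := Filter.limsup_le_of_le (by isBoundedDefault) h2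
      rw [hlimsup] at h3
      exact absurd h3 (not_le.2 (EReal.coe_lt_top M))
    refine h1.mono fun n hn => ?_
    have hQR : (0:ℝ) < (∏ i ∈ range (n+1), (a i : ℝ)) ^ R :=
      Real.rpow_pos_of_pos (Finset.prod_pos fun i _ => haR i) _
    have heq : (a (n+1):ℝ) / (∏ i ∈ range (n+1), (a i : ℝ)) ^ R * (1 / (b (n+1):ℝ))
        = ((a (n+1):ℝ)/(b (n+1):ℝ)) / (∏ i ∈ range (n+1), (a i : ℝ)) ^ R := by
      ring
    rw [heq, lt_div_iff₀ hQR] at hn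
    rw [hQcast]
    linarith
  -- main estimate
  have hmain : ∀ M : ℝ, 0 < M → ∀ n, N + 1 ≤ n →
      M * (Q n:ℝ)^R < (a (n+1):ℝ)/(b (n+1):ℝ) →
      α - (P n:ℝ)/(Q n:ℝ) ≤ C * M^(-u) * (Q n:ℝ)^(-κ) := by
    intro M hM n hn hlt
    have hQr0 : (0:ℝ) < (Q n : ℝ) := by exact_mod_cast hQpos n
    have hMQ0 : (0:ℝ) < M * (Q n:ℝ)^R := by positivity
    have h1 : (M * (Q n:ℝ)^R) ^ ((1:ℝ)/(1+ε)) ≤ f (n+1) := by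
      rw [hf]
      exact Real.rpow_le_rpow hMQ0.le hlt.le (by positivity)
    have h2 : f (n+1) ^ (-s) ≤ ((M * (Q n:ℝ)^R) ^ ((1:ℝ)/(1+ε))) ^ (-s) :=
      Real.rpow_le_rpow_of_nonpos (Real.rpow_pos_of_pos hMQ0 _) h1 (by linarith)
    have h3 : ((M * (Q n:ℝ)^R) ^ ((1:ℝ)/(1+ε))) ^ (-s) = M^(-u) * (Q n:ℝ)^(-κ) := by
      rw [← Real.rpow_mul hMQ0.le]
      have he : (1:ℝ)/(1+ε) * (-s) = -u := by
        rw [hs]; field_simp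
      rw [he, Real.mul_rpow hM.le (Real.rpow_nonneg hQr0.le _)]
      rw [← Real.rpow_mul hQr0.le]
      have : R * (-u) = -κ := by rw [hκ]; ring
      rw [this]
    calc α - (P n:ℝ)/(Q n:ℝ) = α - ∑ k ∈ range (n+1), (b k:ℝ)/(a k:ℝ) := by rw [hPQ]
      _ ≤ C * f (n+1) ^ (-s) := htail n (by omega)
      _ ≤ C * (M^(-u) * (Q n:ℝ)^(-κ)) := by
          refine mul_le_mul_of_nonneg_left ?_ hC0
          rw [← h3]; exact h2
      _ = C * M^(-u) * (Q n:ℝ)^(-κ) := by ring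
  -- Q^κ dominates Q*Q
  have hQ2 : ∀ n, (Q n:ℝ) * (Q n:ℝ) ≤ (Q n:ℝ)^κ := by
    intro n
    have h2 : (Q n:ℝ)^((2:ℕ):ℝ) = (Q n:ℝ)^(2:ℕ) := Real.rpow_natCast _ 2
    calc (Q n:ℝ)*(Q n:ℝ) = (Q n:ℝ)^(2:ℕ) := by ring
      _ = (Q n:ℝ)^((2:ℕ):ℝ) := h2.symm
      _ ≤ (Q n:ℝ)^κ := Real.rpow_le_rpow_of_exponent_le (hQ1 n) (by push_cast; linarith)
  -- irrationality
  have hirr : Irrational α := by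
    rintro ⟨r, hr⟩
    set K : ℕ := N + 1 + ⌈C * r.den⌉₊ + 1 with hK
    obtain ⟨n, hlt, hnK⟩ := ((hfreq 1).and_eventually (eventually_ge_atTop K)).exists
    have hn1 : N + 1 ≤ n := by omega
    have hQr0 : (0:ℝ) < (Q n : ℝ) := by exact_mod_cast hQpos n
    have hup : α - (P n:ℝ)/(Q n:ℝ) ≤ C * (Q n:ℝ)^(-κ) := by
      have h := hmain 1 one_pos n hn1 (by simpa using hlt)
      simpa [Real.one_rpow] using h
    have hpos := htpos n
    rw [hPQ n] at hpos
    have hden0 : (0:ℝ) < (r.den:ℝ) := by exact_mod_cast r.pos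
    set z : ℤ := r.num * Q n - (r.den:ℤ) * P n with hz
    have hzval : (z:ℝ) = ((r.den:ℝ) * (Q n:ℝ)) * (α - (P n:ℝ)/(Q n:ℝ)) := by
      rw [← hr, Rat.cast_def, hz]
      push_cast
      field_simp
    have hz0 : 0 < z := by
      have hzR : (0:ℝ) < (z:ℝ) := by
        rw [hzval]; exact mul_pos (by positivity) hpos
      exact_mod_cast hzR
    have hz1 : (1:ℝ) ≤ (z:ℝ) := by exact_mod_cast hz0
    have hlow : 1 / ((r.den:ℝ) * (Q n:ℝ)) ≤ α - (P n:ℝ)/(Q n:ℝ) := by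
      rw [div_le_iff₀ (by positivity)]
      nlinarith
    have hcomb : 1 / ((r.den:ℝ) * (Q n:ℝ)) ≤ C / (Q n:ℝ)^κ := by
      have := le_trans hlow hup
      rwa [Real.rpow_neg hQr0.le, ← div_eq_mul_inv] at this
    rw [div_le_div_iff₀ (by positivity) (Real.rpow_pos_of_pos hQr0 κ)] at hcomb
    -- hcomb : 1 * Q^κ ≤ C * (den * Q)
    have h5 : (Q n:ℝ) * (Q n:ℝ) ≤ (C * (r.den:ℝ)) * (Q n:ℝ) := by
      calc (Q n:ℝ)*(Q n:ℝ) ≤ (Q n:ℝ)^κ := hQ2 n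
        _ ≤ C * ((r.den:ℝ) * (Q n:ℝ)) := by linarith
        _ = (C * (r.den:ℝ)) * (Q n:ℝ) := by ring
    have hQle : (Q n:ℝ) ≤ C * (r.den:ℝ) := le_of_mul_le_mul_right h5 hQr0
    have hnN : ((n:ℝ) - N) ≤ (Q n:ℝ) := hQn n hn1
    have hceil : C * (r.den:ℝ) ≤ (⌈C * (r.den:ℝ)⌉₊ : ℝ) := Nat.le_ceil _
    have hKn : (K:ℝ) ≤ (n:ℝ) := by exact_mod_cast hnK
    have hKval : (K:ℝ) = (N:ℝ) + 1 + (⌈C * (r.den:ℝ)⌉₊ : ℝ) + 1 := by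
      rw [hK]; push_cast; ring
    linarith
  -- final: transcendence
  intro halg
  obtain ⟨M, hMC, hM1⟩ := (((tendsto_rpow_atTop hu0).eventually_gt_atTop C).and
    (eventually_ge_atTop 1)).exists
  have hM0 : (0:ℝ) < M := lt_of_lt_of_le one_pos hM1
  have hCM : C * M^(-u) < 1 := by
    rw [Real.rpow_neg hM0.le, ← div_eq_mul_inv, div_lt_one (Real.rpow_pos_of_pos hM0 u)]
    exact hMC
  set S := {pq : ℤ × ℤ | 0 < pq.2 ∧ IsCoprime pq.1 pq.2 ∧
      |α - (pq.1 : ℝ) / (pq.2 : ℝ)| < 1 / (pq.2 : ℝ) ^ κ} with hS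
  have hconstr : ∀ n, N + 1 ≤ n → M * (Q n:ℝ)^R < (a (n+1):ℝ)/(b (n+1):ℝ) →
      ∃ pq : ℤ × ℤ, pq ∈ S ∧ |α - (pq.1 : ℝ)/(pq.2 : ℝ)| ≤ C * M^(-u) * (Q n:ℝ)^(-κ) := by
    intro n hn hlt
    have hQr0 : (0:ℝ) < (Q n:ℝ) := by exact_mod_cast hQpos n
    have hg0 : 0 < Int.gcd (P n) (Q n) := Int.gcd_pos_iff.2 (Or.inr (hQpos n).ne')
    set g : ℤ := (Int.gcd (P n) (Q n) : ℤ) with hgdef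
    have hgZ : (0:ℤ) < g := by rw [hgdef]; exact_mod_cast hg0
    set p' : ℤ := P n / g with hp'
    set q' : ℤ := Q n / g with hq'
    have hdvdP : g ∣ P n := Int.gcd_dvd_left _ _
    have hdvdQ : g ∣ Q n := Int.gcd_dvd_right _ _
    have hq'g : q' * g = Q n := Int.ediv_mul_cancel hdvdQ
    have hp'g : p' * g = P n := Int.ediv_mul_cancel hdvdP
    have hq'0 : 0 < q' := by nlinarith [hq'g, hQpos n, hgZ]
    have hcop : IsCoprime p' q' := Int.isCoprime_iff_gcd_eq_one.2 (Int.gcd_div_gcd_div_gcd hg0)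
    have hgR0 : ((g:ℝ)) ≠ 0 := by exact_mod_cast hgZ.ne'
    have hval : (p':ℝ)/(q':ℝ) = (P n:ℝ)/(Q n:ℝ) := by
      rw [← hp'g, ← hq'g]; push_cast
      rw [mul_div_mul_right _ _ hgR0]
    have hq'le : q' ≤ Q n := Int.ediv_le_self g (hQpos n).le
    have hq'R : (0:ℝ) < (q':ℝ) := by exact_mod_cast hq'0
    have hbd := hmain M hM0 n hn hlt
    have hD := htpos n
    rw [hPQ n] at hD
    have habs : |α - (p':ℝ)/(q':ℝ)| = α - (P n:ℝ)/(Q n:ℝ) := by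
      rw [hval, abs_of_pos hD]
    refine ⟨(p', q'), ⟨hq'0, hcop, ?_⟩, by rw [habs]; exact hbd⟩
    show |α - (p':ℝ)/(q':ℝ)| < 1 / (q':ℝ)^κ
    rw [habs]
    calc α - (P n:ℝ)/(Q n:ℝ) ≤ C * M^(-u) * (Q n:ℝ)^(-κ) := hbd
      _ < 1 * (Q n:ℝ)^(-κ) := mul_lt_mul_of_pos_right hCM (Real.rpow_pos_of_pos hQr0 _)
      _ = 1 / (Q n:ℝ)^κ := by rw [one_mul, Real.rpow_neg hQr0.le, one_div]
      _ ≤ 1 / (q':ℝ)^κ := by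
          apply one_div_le_one_div_of_le (Real.rpow_pos_of_pos hq'R κ)
          exact Real.rpow_le_rpow hq'R.le (by exact_mod_cast hq'le) hκ0.le
  have hSinf : S.Infinite := by
    intro hfin
    obtain ⟨n₀, hlt₀, hn₀⟩ := ((hfreq M).and_eventually (eventually_ge_atTop (N+1))).exists
    obtain ⟨pq₀, hpq₀, _⟩ := hconstr n₀ hn₀ hlt₀
    obtain ⟨pqm, hpqmS, hmin⟩ := Set.exists_min_image S
      (fun pq => |α - (pq.1:ℝ)/(pq.2:ℝ)|) hfin ⟨pq₀, hpq₀⟩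
    have hm0 : 0 < |α - (pqm.1:ℝ)/(pqm.2:ℝ)| := by
      rw [abs_pos, sub_ne_zero]
      intro hEq
      exact hirr ⟨(pqm.1 : ℚ)/(pqm.2 : ℚ), by push_cast; rw [← hEq]⟩
    set m := |α - (pqm.1:ℝ)/(pqm.2:ℝ)| with hm
    set B := C * M^(-u) with hB
    have hB0 : 0 ≤ B := by
      rw [hB]; positivity
    set K : ℕ := N + 1 + ⌈B / m⌉₊ + 1 with hK
    obtain ⟨n, hlt, hnK⟩ := ((hfreq M).and_eventually (eventually_ge_atTop K)).exists
    have hn1 : N + 1 ≤ n := by omega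
    obtain ⟨pq, hpqS, hpqb⟩ := hconstr n hn1 hlt
    have hQr0 : (0:ℝ) < (Q n:ℝ) := by exact_mod_cast hQpos n
    have hq1 : (Q n:ℝ) ≤ (Q n:ℝ)^κ := by
      calc (Q n:ℝ) = (Q n:ℝ)^(1:ℝ) := (Real.rpow_one _).symm
        _ ≤ _ := Real.rpow_le_rpow_of_exponent_le (hQ1 n) (by linarith)
    have hnN : ((n:ℝ) - N) ≤ (Q n:ℝ) := hQn n hn1
    have hnN0 : (0:ℝ) < (n:ℝ) - N := by
      have : ((N:ℝ)) + 1 ≤ n := by exact_mod_cast hn1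
      linarith
    have hceil : B / m ≤ (⌈B / m⌉₊ : ℝ) := Nat.le_ceil _
    have hKn : (K:ℝ) ≤ (n:ℝ) := by exact_mod_cast hnK
    have hKval : (K:ℝ) = (N:ℝ) + 1 + (⌈B / m⌉₊ : ℝ) + 1 := by rw [hK]; push_cast; ring
    have hchain : B * (Q n:ℝ)^(-κ) < m := by
      have h1 : B * (Q n:ℝ)^(-κ) = B / (Q n:ℝ)^κ := by
        rw [Real.rpow_neg hQr0.le, div_eq_mul_inv]
      have h2 : B / (Q n:ℝ)^κ ≤ B / ((n:ℝ) - N) :=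
        div_le_div_of_nonneg_left hB0 hnN0 (le_trans hnN hq1)
      have h3 : B / ((n:ℝ) - N) < m := by
        rw [div_lt_iff₀ hnN0]
        have hBm : B / m < (n:ℝ) - N := by linarith
        have := (div_lt_iff₀ hm0).mp hBm
        linarith
      calc B * (Q n:ℝ)^(-κ) = B / (Q n:ℝ)^κ := h1
        _ ≤ B / ((n:ℝ) - N) := h2
        _ < m := h3
    have hge := hmin pq hpqS
    have : |α - (pq.1:ℝ)/(pq.2:ℝ)| < m := lt_of_le_of_lt hpqb hchain
    simp only [hm] at hge
    linarith
  have hle : κ ≤ 2 := hRoth α κ halg hirr hSinf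
  linarith
end

section
/- Under the hypotheses of Hančl's Theorem 3 (A > 1; d_n > 1 for all n with ∏ d_n convergent; a_n, b_n positive integers; a_n^{1/2^n} → A; d_n^{2^n}/b_n → ∞), the series ∑ b_n / a_n is summable. -/
open Filter

set_option maxHeartbeats 1000000 in
theorem issummable (A : ℝ) (d : ℕ → ℝ) (a b : ℕ → ℤ)
    (hA : 1 < A) (hd : ∀ n, 1 < d n) (hdprod : Multipliable d)
    (ha : ∀ n, 0 < a n) (hb : ∀ n, 0 < b n)
    (assu1 : Tendsto (fun n => (a n : ℝ) ^ ((1 : ℝ) / 2 ^ n)) atTop (nhds A))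
    (assu3 : Tendsto (fun n => d n ^ (2 ^ n : ℕ) / (b n : ℝ)) atTop atTop) :
    Summable (fun n => (b n : ℝ) / (a n : ℝ)) := by
  set c : ℝ := (1 + A) / 2 with hc
  have hc1 : 1 < c := by simp [hc]; linarith
  have hcA : c < A := by simp [hc]; linarith
  have hc0 : 0 < c := by linarith
  set s : ℝ := Real.sqrt c with hs
  have hs1 : 1 < s := by
    rw [hs, show (1:ℝ) = Real.sqrt 1 by simp]
    exact Real.sqrt_lt_sqrt (by norm_num) hc1
  have hs0 : 0 < s := by linarith
  have hss : s * s = c := Real.mul_self_sqrt hc0.le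
  set r : ℝ := s⁻¹ with hr
  have hr0 : 0 < r := inv_pos.mpr hs0
  have hr1 : r < 1 := inv_lt_one_of_one_lt₀ hs1
  -- d tends to 1
  have hd1 : Tendsto d atTop (nhds 1) := by
    set L := ∏' i, d i with hL
    have hP : Tendsto (fun n => ∏ i ∈ Finset.range n, d i) atTop (nhds L) :=
      hdprod.hasProd.tendsto_prod_nat
    have hpos : ∀ n, (0:ℝ) < ∏ i ∈ Finset.range n, d i := fun n =>
      Finset.prod_pos (fun i _ => lt_trans one_pos (hd i))
    have hge : ∀ n, (1:ℝ) ≤ ∏ i ∈ Finset.range n, d i := fun n =>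
      by
      calc (1:ℝ) = ∏ _i ∈ Finset.range n, (1:ℝ) := by simp
        _ ≤ ∏ i ∈ Finset.range n, d i :=
            Finset.prod_le_prod (by norm_num) (fun i _ => (hd i).le)
    have hL1 : 1 ≤ L := ge_of_tendsto hP (Eventually.of_forall hge)
    have hLne : L ≠ 0 := by linarith
    have hsucc : Tendsto (fun n => ∏ i ∈ Finset.range (n+1), d i) atTop (nhds L) :=
      hP.comp (tendsto_add_atTop_nat 1)
    have := hsucc.div hP hLne
    rw [div_self hLne] at this
    refine this.congr (fun n => ?_)
    simp only [Pi.div_apply]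
    rw [Finset.prod_range_succ, mul_comm, mul_div_assoc,
      div_self (hpos n).ne', mul_one]
  have h2 : ∀ᶠ n in atTop, d n < s := hd1.eventually_lt_const hs1
  have h1 : ∀ᶠ n in atTop, c < (a n : ℝ) ^ ((1 : ℝ) / 2 ^ n) :=
    assu1.eventually_const_lt hcA
  have h3 : ∀ᶠ n in atTop, (1:ℝ) ≤ d n ^ (2 ^ n : ℕ) / (b n : ℝ) :=
    assu3.eventually_ge_atTop 1
  have hbound : ∀ᶠ n in atTop, (b n : ℝ) / (a n : ℝ) ≤ r ^ n := by
    filter_upwards [h1, h2, h3] with n h1 h2 h3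
    have han : (0:ℝ) < (a n : ℝ) := by exact_mod_cast ha n
    have hbn : (0:ℝ) < (b n : ℝ) := by exact_mod_cast hb n
    have hca : c ^ (2 ^ n : ℕ) < (a n : ℝ) := by
      have := pow_lt_pow_left₀ h1 hc0.le (by positivity : (2:ℕ)^n ≠ 0)
      calc c ^ (2^n : ℕ) < ((a n : ℝ) ^ ((1:ℝ)/2^n)) ^ (2^n : ℕ) := this
        _ = (a n : ℝ) := by
          rw [← Real.rpow_natCast ((a n : ℝ) ^ ((1:ℝ)/2^n)) (2^n),
            ← Real.rpow_mul han.le]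
          norm_num
    have hbs : (b n : ℝ) ≤ s ^ (2 ^ n : ℕ) := by
      have hbd : (b n : ℝ) ≤ d n ^ (2 ^ n : ℕ) := by
        rw [le_div_iff₀ hbn] at h3; linarith
      exact hbd.trans (pow_le_pow_left₀ (le_of_lt (lt_trans one_pos (hd n))) h2.le _)
    have hcpos : (0:ℝ) < c ^ (2 ^ n : ℕ) := by positivity
    calc (b n : ℝ) / (a n : ℝ) ≤ s ^ (2^n : ℕ) / c ^ (2^n : ℕ) :=
          div_le_div₀ (by positivity) hbs hcpos hca.le
      _ = r ^ (2^n : ℕ) := by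
          rw [← div_pow, hr]
          congr 1
          field_simp
          linarith [hss]
      _ ≤ r ^ n := pow_le_pow_of_le_one hr0.le hr1.le (Nat.le_of_lt (Nat.lt_two_pow_self (n := n)))
  have hgeo : Summable (fun n => r ^ n) := summable_geometric_of_lt_one hr0.le hr1
  apply summable_of_isBigO_nat hgeo
  apply Asymptotics.IsBigO.of_bound 1
  filter_upwards [hbound] with n h
  have han : (0:ℝ) < (a n : ℝ) := by exact_mod_cast ha n
  have hbn : (0:ℝ) < (b n : ℝ) := by exact_mod_cast hb n
  rw [Real.norm_eq_abs, Real.norm_eq_abs, abs_of_nonneg (by positivity),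
    abs_of_nonneg (by positivity), one_mul]
  exact h
end

section
/- Counterexample lemma: there exist sequences of positive integers {a_n}, {b_n} satisfying limsup a_{n+1}/((∏_{i=1}^n a_i)^{2+δ} b_{n+1}) = ∞ and liminf (a_{n+1}/a_n)(b_n/b_{n+1}) > 1, yet such that it is NOT the case that for every real A > 1 there exists k_0 with (1/A)·(b_k/a_k) > b_{k+1}/a_{k+1} for all k > k_0. Concretely, with b_k = 1 for all k, a_{k+1} = k·(∏_{i=1}^k a_i)^{⌈2+δ⌉} for odd k and a_{k+1} = 2·a_k for even k, the claim 'for each A > 1' fails (though it holds for some A > 1). -/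
open Filter Finset

namespace HanclRuckiCE

/-- Joint recursion computing `(a k, ∏ i ∈ range (k+1), a i)`. -/
def F (c : ℕ) : ℕ → ℤ × ℤ
  | 0 => (1, 1)
  | k + 1 =>
      let p := F c k
      let a' : ℤ := if Odd k then (k : ℤ) * p.2 ^ c else 2 * p.1
      (a', p.2 * a')

def aa (c k : ℕ) : ℤ := (F c k).1

def P (c k : ℕ) : ℤ := (F c k).2

lemma a_zero (c : ℕ) : aa c 0 = 1 := rfl

lemma P_zero (c : ℕ) : P c 0 = 1 := rfl

lemma a_succ_odd (c k : ℕ) (h : Odd k) : aa c (k + 1) = (k : ℤ) * (P c k) ^ c := by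
  simp [aa, P, F, h]

lemma a_succ_even (c k : ℕ) (h : Even k) : aa c (k + 1) = 2 * aa c k := by
  simp [aa, P, F, Nat.not_odd_iff_even.mpr h]

lemma P_succ (c k : ℕ) : P c (k + 1) = P c k * aa c (k + 1) := rfl

lemma pos (c k : ℕ) : 0 < aa c k ∧ 0 < P c k := by
  induction k with
  | zero => exact ⟨one_pos, one_pos⟩
  | succ k ih =>
    have ha : 0 < aa c (k + 1) := by
      by_cases h : Odd k
      · rw [a_succ_odd c k h]
        have hk : 0 < k := h.pos
        exact mul_pos (by exact_mod_cast hk) (pow_pos ih.2 c)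
      · rw [a_succ_even c k (Nat.not_odd_iff_even.mp h)]
        linarith [ih.1]
    exact ⟨ha, by rw [P_succ]; exact mul_pos ih.2 ha⟩

lemma a_pos (c k : ℕ) : 0 < aa c k := (pos c k).1

lemma one_le_a (c k : ℕ) : 1 ≤ aa c k := (a_pos c k)

lemma one_le_P (c k : ℕ) : 1 ≤ P c k := (pos c k).2

lemma P_eq_prod (c k : ℕ) : P c k = ∏ i ∈ Finset.range (k + 1), aa c i := by
  induction k with
  | zero => simp [P_zero, a_zero]
  | succ k ih =>
    rw [P_succ, ih]
    exact (Finset.prod_range_succ _ _).symm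

lemma a_le_P (c k : ℕ) : aa c k ≤ P c k := by
  cases k with
  | zero => exact le_refl 1
  | succ k =>
    rw [P_succ]
    exact le_mul_of_one_le_left (a_pos c (k + 1)).le (one_le_P c k)

lemma two_le_a (c : ℕ) (hc : 2 ≤ c) : ∀ k, 1 ≤ k → 2 ≤ aa c k := by
  intro k hk
  induction k with
  | zero => omega
  | succ k ih =>
    by_cases h : Odd k
    · rw [a_succ_odd c k h]
      have hk1 : 1 ≤ k := h.pos
      have h2 : 2 ≤ aa c k := ih hk1
      have hP : 2 ≤ P c k := le_trans h2 (a_le_P c k)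
      have hPc : P c k ≤ (P c k) ^ c := le_self_pow₀ (one_le_P c k) (by omega)
      have : (1 : ℤ) ≤ (k : ℤ) := by exact_mod_cast hk1
      nlinarith
    · rw [a_succ_even c k (Nat.not_odd_iff_even.mp h)]
      linarith [one_le_a c k]

/-- Key growth estimate: `a (k+1) ≥ 2 * a k` for every `k`. -/
lemma growth (c : ℕ) (hc : 2 ≤ c) (k : ℕ) : 2 * aa c k ≤ aa c (k + 1) := by
  by_cases h : Odd k
  · rw [a_succ_odd c k h]
    have hk1 : 1 ≤ k := h.pos
    have h2 : 2 ≤ aa c k := two_le_a c hc k hk1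
    have hP : aa c k ≤ P c k := a_le_P c k
    have hP2 : 2 ≤ P c k := le_trans h2 hP
    have hpow : (P c k) ^ 2 ≤ (P c k) ^ c := pow_le_pow_right₀ (one_le_P c k) hc
    have hk' : (1 : ℤ) ≤ (k : ℤ) := by exact_mod_cast hk1
    have h1 : 2 * aa c k ≤ (P c k) ^ 2 := by nlinarith
    nlinarith [pow_pos (pos c k).2 c]
  · rw [a_succ_even c k (Nat.not_odd_iff_even.mp h)]

end HanclRuckiCE

open HanclRuckiCE

theorem hancl_rucki_counterexample (δ : ℝ) (hδ : 0 < δ) :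
    ∃ a b : ℕ → ℤ, (∀ k, 0 < a k) ∧ (∀ k, 0 < b k) ∧
      (∀ k, b k = 1) ∧
      (∀ k, Odd k → a (k + 1) = (k : ℤ) *
        (∏ i ∈ Finset.range (k + 1), a i) ^ (⌈(2 : ℝ) + δ⌉₊)) ∧
      (∀ k, Even k → a (k + 1) = 2 * a k) ∧
      Filter.limsup (fun k =>
        (((a (k + 1) : ℝ) / (∏ i ∈ Finset.range (k + 1), (a i : ℝ)) ^ ((2 : ℝ) + δ) *
          (1 / (b (k + 1) : ℝ)) : ℝ) : EReal)) atTop = ⊤ ∧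
      1 < Filter.liminf (fun k =>
        (((a (k + 1) : ℝ) / (a k : ℝ) * ((b k : ℝ) / (b (k + 1) : ℝ)) : ℝ) : EReal)) atTop ∧
      ¬ (∀ A : ℝ, 1 < A → ∃ k₀ : ℕ, ∀ k > k₀,
          (b (k + 1) : ℝ) / (a (k + 1) : ℝ) < (1 / A) * ((b k : ℝ) / (a k : ℝ))) ∧
      (∃ A : ℝ, 1 < A ∧ ∃ k₀ : ℕ, ∀ k > k₀,
          (b (k + 1) : ℝ) / (a (k + 1) : ℝ) < (1 / A) * ((b k : ℝ) / (a k : ℝ))) := by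
  set c : ℕ := ⌈(2 : ℝ) + δ⌉₊ with hcdef
  have hc2 : 2 ≤ c := by
    have : (2 : ℝ) < 2 + δ := by linarith
    have := Nat.lt_ceil.mpr (show ((2 : ℕ) : ℝ) < 2 + δ by push_cast; linarith)
    omega
  have hcR : (2 : ℝ) + δ ≤ (c : ℝ) := Nat.le_ceil _
  refine ⟨aa c, fun _ => 1, a_pos c, fun _ => one_pos, fun _ => rfl, ?_, ?_, ?_, ?_, ?_, ?_⟩
  · intro k hk
    rw [a_succ_odd c k hk, P_eq_prod]
  · intro k hk
    exact a_succ_even c k hk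
  · -- limsup = ⊤
    rw [EReal.eq_top_iff_forall_lt]
    intro y
    refine lt_of_lt_of_le (b := ((y + 1 : ℝ) : EReal))
      (by exact_mod_cast (by linarith : y < y + 1)) ?_
    apply le_limsup_of_frequently_le'
    rw [Filter.frequently_atTop]
    intro n
    refine ⟨2 * max n ⌈y + 1⌉₊ + 1, by omega, ?_⟩
    set k : ℕ := 2 * max n ⌈y + 1⌉₊ + 1 with hkdef
    have hodd : Odd k := ⟨max n ⌈y + 1⌉₊, by omega⟩
    have hyk : y + 1 ≤ (k : ℝ) := by
      have h1 : y + 1 ≤ (⌈y + 1⌉₊ : ℝ) := Nat.le_ceil _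
      have h2 : (⌈y + 1⌉₊ : ℝ) ≤ (k : ℝ) := by exact_mod_cast (by omega : ⌈y + 1⌉₊ ≤ k)
      linarith
    rw [EReal.coe_le_coe_iff]
    have hprod : (∏ i ∈ Finset.range (k + 1), ((aa c i : ℤ) : ℝ)) = ((P c k : ℤ) : ℝ) := by
      rw [P_eq_prod]; push_cast; ring
    rw [hprod]
    set Pr : ℝ := ((P c k : ℤ) : ℝ) with hPr
    have hPr1 : (1 : ℝ) ≤ Pr := by rw [hPr]; exact_mod_cast one_le_P c k
    have hPrpos : (0 : ℝ) < Pr ^ ((2 : ℝ) + δ) := Real.rpow_pos_of_pos (by linarith) _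
    have ha : ((aa c (k + 1) : ℤ) : ℝ) = (k : ℝ) * Pr ^ c := by
      rw [a_succ_odd c k hodd]; push_cast; ring
    rw [ha]
    have hpow : Pr ^ ((2 : ℝ) + δ) ≤ Pr ^ c := by
      rw [← Real.rpow_natCast Pr c]
      exact Real.rpow_le_rpow_of_exponent_le hPr1 hcR
    rw [Int.cast_one, div_one, mul_one, le_div_iff₀ hPrpos]
    have hk0 : (0 : ℝ) ≤ (k : ℝ) := Nat.cast_nonneg k
    calc (y + 1) * Pr ^ ((2 : ℝ) + δ) ≤ (k : ℝ) * Pr ^ c :=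
          mul_le_mul hyk hpow (le_of_lt hPrpos) hk0
      _ = (k : ℝ) * Pr ^ c := rfl
  · -- liminf > 1
    have hbound : ∀ᶠ k in atTop,
        ((2 : ℝ) : EReal) ≤
          (((aa c (k + 1) : ℝ) / (aa c k : ℝ) * (((1 : ℤ) : ℝ) / ((1 : ℤ) : ℝ)) : ℝ) : EReal) := by
      refine Filter.Eventually.of_forall fun k => ?_
      rw [EReal.coe_le_coe_iff]
      have hak : (0 : ℝ) < ((aa c k : ℤ) : ℝ) := by exact_mod_cast a_pos c k
      have hg : (2 : ℝ) * ((aa c k : ℤ) : ℝ) ≤ ((aa c (k + 1) : ℤ) : ℝ) := by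
        exact_mod_cast growth c hc2 k
      rw [Int.cast_one, div_one, mul_one, le_div_iff₀ hak]
      linarith
    have h2 : ((2 : ℝ) : EReal) = Filter.liminf (fun _ : ℕ => ((2 : ℝ) : EReal)) atTop :=
      (Filter.liminf_const _).symm
    calc (1 : EReal) < ((2 : ℝ) : EReal) := by
          exact_mod_cast (one_lt_two : (1 : ℝ) < 2)
      _ = _ := h2
      _ ≤ _ := Filter.liminf_le_liminf hbound
  · -- ¬ ∀ A
    intro h
    obtain ⟨k₀, hk⟩ := h 3 (by norm_num)
    set k : ℕ := 2 * k₀ + 2 with hkdef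
    have heven : Even k := ⟨k₀ + 1, by omega⟩
    have hlt := hk k (by omega)
    rw [a_succ_even c k heven] at hlt
    have hak : (0 : ℝ) < ((aa c k : ℤ) : ℝ) := by exact_mod_cast a_pos c k
    set x : ℝ := ((aa c k : ℤ) : ℝ) with hx
    push_cast at hlt
    rw [show (1 : ℝ) / 3 * (1 / x) = 1 / (3 * x) by ring,
      div_lt_div_iff₀ (by positivity) (by positivity)] at hlt
    nlinarith
  · -- ∃ A
    refine ⟨3 / 2, by norm_num, 0, fun k _ => ?_⟩
    have hak : (0 : ℝ) < ((aa c k : ℤ) : ℝ) := by exact_mod_cast a_pos c k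
    have hak1 : (0 : ℝ) < ((aa c (k + 1) : ℤ) : ℝ) := by exact_mod_cast a_pos c (k + 1)
    have hg : (2 : ℝ) * ((aa c k : ℤ) : ℝ) ≤ ((aa c (k + 1) : ℤ) : ℝ) := by
      exact_mod_cast growth c hc2 k
    rw [Int.cast_one]
    rw [show (1 : ℝ) / (3 / 2) * (1 / ((aa c k : ℤ) : ℝ)) = 2 / (3 * ((aa c k : ℤ) : ℝ)) by
      ring, div_lt_div_iff₀ hak1 (by positivity)]
    nlinarith
end

section
/- For 0 < ε < 1/2, for all sufficiently large natural numbers N, the number of integers n in the interval [N, 2N) for which p_{n+1} > p_n + √(p_n) holds is less than N/2, where p_n is the n-th prime. -/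
open Filter Finset
open scoped Classical

lemma cheb_pow (n : ℕ) (hn : 4 ≤ n) :
    4 ^ n ≤ (2 * n) ^ ((2 * n + 1).primeCounting' + 1) := by
  have h0 : 0 < n := by omega
  have hcb : Nat.centralBinom n ≤ (2 * n) ^ ((2 * n + 1).primeCounting') := by
    calc Nat.centralBinom n
        = ∏ p ∈ Finset.range (2 * n + 1), p ^ (Nat.centralBinom n).factorization p :=
          (Nat.prod_pow_factorization_centralBinom n).symm
      _ = ∏ p ∈ (Finset.range (2 * n + 1)).filter Nat.Prime,
            p ^ (Nat.centralBinom n).factorization p := by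
          refine (Finset.prod_filter_of_ne ?_).symm
          intro p _ hp
          by_contra hnp
          rw [Nat.factorization_eq_zero_of_not_prime _ hnp] at hp
          simp at hp
      _ ≤ ∏ p ∈ (Finset.range (2 * n + 1)).filter Nat.Prime, (2 * n) := by
          refine Finset.prod_le_prod' ?_
          intro p _
          rw [Nat.centralBinom]
          exact Nat.pow_factorization_choose_le (by omega)
      _ = (2 * n) ^ ((Finset.range (2 * n + 1)).filter Nat.Prime).card :=
          Finset.prod_const _
      _ = (2 * n) ^ ((2 * n + 1).primeCounting') := by
          rw [Nat.primeCounting', Nat.count_eq_card_filter_range]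
  calc 4 ^ n ≤ n * Nat.centralBinom n := (Nat.four_pow_lt_mul_centralBinom n hn).le
    _ ≤ (2 * n) * ((2 * n) ^ ((2 * n + 1).primeCounting')) :=
        Nat.mul_le_mul (by omega) hcb
    _ = (2 * n) ^ ((2 * n + 1).primeCounting' + 1) := by ring

lemma log_lt_sqrt_eventually :
    ∀ᶠ N : ℕ in atTop, 128 * Real.log N < Real.sqrt N := by
  have h := isLittleO_log_rpow_atTop (by norm_num : (0:ℝ) < 1/2)
  have h2 := h.bound (by norm_num : (0:ℝ) < 1/256)
  have h3 : ∀ᶠ x : ℝ in atTop, 128 * Real.log x < Real.sqrt x := by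
    filter_upwards [h2, eventually_ge_atTop (1:ℝ)] with x hx hx1
    have hlog : 0 ≤ Real.log x := Real.log_nonneg hx1
    have hrpow : x ^ ((1:ℝ)/2) = Real.sqrt x := (Real.sqrt_eq_rpow x).symm
    rw [Real.norm_eq_abs, Real.norm_eq_abs, abs_of_nonneg hlog,
      abs_of_nonneg (Real.rpow_nonneg (by linarith) _), hrpow] at hx
    have hs : 0 < Real.sqrt x := Real.sqrt_pos.mpr (by linarith)
    nlinarith
  exact tendsto_natCast_atTop_atTop.eventually h3

lemma pi_big_eventually :
    ∀ᶠ N : ℕ in atTop,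
      2 * N < (2 * (N * Nat.sqrt N / 8) + 1).primeCounting' := by
  filter_upwards [log_lt_sqrt_eventually, eventually_ge_atTop 256] with N hlog hN
  set L := Nat.sqrt N with hLdef
  set f := N * L / 8 with hfdef
  set s := Real.sqrt N with hsdef
  have hL16 : 16 ≤ L := by
    have h := Nat.sqrt_le_sqrt hN
    have h2 : Nat.sqrt 256 = 16 := by norm_num [Nat.sqrt]
    omega
  have hf512 : 512 ≤ f := by
    have h1 : 4096 ≤ N * L := le_trans (by norm_num) (Nat.mul_le_mul hN hL16)
    calc 512 = 4096 / 8 := by norm_num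
      _ ≤ N * L / 8 := Nat.div_le_div_right h1
  have hs16 : 16 ≤ s := by
    have : (16:ℝ) = Real.sqrt 256 := by
      rw [show (256:ℝ) = 16^2 by norm_num, Real.sqrt_sq]; norm_num
    rw [this]
    exact Real.sqrt_le_sqrt (by exact_mod_cast hN)
  have hNR : (256:ℝ) ≤ (N:ℝ) := by exact_mod_cast hN
  have hsN : s ≤ (N:ℝ) := by
    rw [hsdef]
    calc Real.sqrt N ≤ Real.sqrt ((N:ℝ)^2) := Real.sqrt_le_sqrt (by nlinarith)
      _ = (N:ℝ) := Real.sqrt_sq (by positivity)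
  have hLs : (L:ℝ) ≤ s := by
    rw [hsdef]
    refine Real.le_sqrt' (by positivity) |>.mpr ?_
    exact_mod_cast Nat.sqrt_le' N
  have hsL : s ≤ (L:ℝ) + 1 := by
    rw [hsdef]
    have h1 : (N:ℝ) ≤ ((L:ℝ)+1)^2 := by exact_mod_cast (Nat.lt_succ_sqrt' N).le
    calc Real.sqrt N ≤ Real.sqrt (((L:ℝ)+1)^2) := Real.sqrt_le_sqrt h1
      _ = (L:ℝ)+1 := Real.sqrt_sq (by positivity)
  have hfle : (f:ℝ) ≤ (N:ℝ) * s / 8 := by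
    have h1 : (f:ℝ) ≤ ((N*L : ℕ):ℝ) / 8 := by
      rw [hfdef]
      exact_mod_cast Nat.cast_div_le
    have h2 : ((N*L:ℕ):ℝ) = (N:ℝ) * L := by push_cast; ring
    rw [h2] at h1
    nlinarith
  have hfge : (N:ℝ) * s / 16 ≤ (f:ℝ) := by
    have h1 : N * L ≤ 8 * f + 7 := by
      rw [hfdef]; omega
    have h2 : (N:ℝ) * (L:ℝ) ≤ 8 * (f:ℝ) + 7 := by exact_mod_cast h1
    nlinarith
  -- key numeric inequality
  have hkey : (2*f) ^ (2*N+1) < 4 ^ f := by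
    have h2f : (0:ℝ) < 2*(f:ℝ) := by positivity
    have hNpos : (0:ℝ) < (N:ℝ) := by linarith
    have h2fN2 : 2*(f:ℝ) ≤ (N:ℝ)^2 := by nlinarith
    have hlog4 : 1 ≤ Real.log 4 := by
      rw [Real.le_log_iff_exp_le (by norm_num)]
      exact le_of_lt (lt_of_lt_of_le Real.exp_one_lt_d9 (by norm_num))
    have hlogN : 0 ≤ Real.log N := Real.log_nonneg (by linarith)
    have hexp : ((4*N+2:ℕ):ℝ) * Real.log N < (f:ℝ) * Real.log 4 := by
      push_cast
      have hfnn : (0:ℝ) ≤ (f:ℝ) := by positivity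
      nlinarith [mul_le_mul_of_nonneg_left hlog.le (by positivity : (0:ℝ) ≤ 6*(N:ℝ)/128),
        mul_le_mul_of_nonneg_right hlog4 hfnn]
    have hreal : ((2*f:ℕ):ℝ) ^ (2*N+1) < (4:ℝ) ^ f := by
      have hXpos : (0:ℝ) < ((2*f:ℕ):ℝ) ^ (2*N+1) := by
        have : (0:ℝ) < ((2*f:ℕ):ℝ) := by exact_mod_cast (by omega : 0 < 2*f)
        positivity
      rw [← Real.log_lt_log_iff hXpos (by positivity)]
      rw [Real.log_pow, Real.log_pow]
      calc (2*N+1 : ℕ) * Real.log ((2*f:ℕ):ℝ)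
          ≤ (2*N+1 : ℕ) * Real.log ((N:ℝ)^2) := by
            refine mul_le_mul_of_nonneg_left ?_ (by positivity)
            refine Real.log_le_log (by exact_mod_cast (by omega : 0 < 2*f)) ?_
            push_cast
            linarith
        _ = ((4*N+2:ℕ):ℝ) * Real.log N := by
            rw [Real.log_pow]; push_cast; ring
        _ < (f:ℝ) * Real.log 4 := hexp
    exact_mod_cast hreal
  -- conclude via cheb_pow
  have hch := cheb_pow f (by omega)
  set k := (2 * f + 1).primeCounting' with hk
  have hlt : (2*f) ^ (2*N+1) < (2*f) ^ (k+1) := lt_of_lt_of_le hkey hch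
  have : 2*N+1 < k+1 := by
    have h2f1 : 1 < 2*f := by omega
    exact (Nat.pow_lt_pow_iff_right h2f1).mp hlt
  omega

theorem prime_gap_count (ε : ℝ) (hε0 : 0 < ε) (hε : ε < 1 / 2) :
    ∀ᶠ N : ℕ in atTop,
      (((Finset.Ico N (2 * N)).filter (fun n =>
        (Nat.nth Nat.Prime n : ℝ) + Real.sqrt (Nat.nth Nat.Prime n) <
          (Nat.nth Nat.Prime (n + 1) : ℝ))).card : ℝ) < (N : ℝ) / 2 := by
  filter_upwards [pi_big_eventually, eventually_ge_atTop 256] with N hpi hN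
  set f := N * Nat.sqrt N / 8 with hfdef
  set p : ℕ → ℕ := Nat.nth Nat.Prime with hp
  have hp2N : p (2*N) < 2*f+1 := Nat.nth_lt_of_lt_count hpi
  have hs : (0:ℝ) < Real.sqrt N := Real.sqrt_pos.mpr (by positivity)
  have hs16 : (16:ℝ) ≤ Real.sqrt N := by
    have : (16:ℝ) = Real.sqrt 256 := by
      rw [show (256:ℝ) = 16^2 by norm_num, Real.sqrt_sq]; norm_num
    rw [this]
    exact Real.sqrt_le_sqrt (by exact_mod_cast hN)
  have hNR : (256:ℝ) ≤ (N:ℝ) := by exact_mod_cast hN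
  set S := (Finset.Ico N (2 * N)).filter (fun n =>
        (Nat.nth Nat.Prime n : ℝ) + Real.sqrt (Nat.nth Nat.Prime n) <
          (Nat.nth Nat.Prime (n + 1) : ℝ)) with hS
  -- monotonicity of p
  have hmono : ∀ m n : ℕ, m ≤ n → p m ≤ p n := fun m n h =>
    (Nat.nth_le_nth Nat.infinite_setOf_prime).mpr h
  -- telescoping sum
  have htel : ∑ n ∈ Finset.Ico N (2*N), ((p (n+1) : ℝ) - p n)
      = (p (2*N) : ℝ) - p N := by
    rw [Finset.sum_Ico_eq_sub _ (by omega : N ≤ 2*N),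
      Finset.sum_range_sub (fun n => (p n : ℝ)), Finset.sum_range_sub (fun n => (p n : ℝ))]
    ring
  -- lower bound for the sum
  have hlb : (S.card : ℝ) * Real.sqrt N ≤ (p (2*N) : ℝ) - p N := by
    rw [← htel]
    calc (S.card : ℝ) * Real.sqrt N = ∑ _n ∈ S, Real.sqrt N := by
          rw [Finset.sum_const, nsmul_eq_mul]
      _ ≤ ∑ n ∈ S, ((p (n+1) : ℝ) - p n) := by
          refine Finset.sum_le_sum ?_
          intro n hn
          rw [hS, Finset.mem_filter, Finset.mem_Ico] at hn
          obtain ⟨⟨hn1, _⟩, hn2⟩ := hn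
          have hNp : (N:ℝ) ≤ (p n : ℝ) := by
            have hx : n ≤ p n := by
              rw [hp]; have := Nat.add_two_le_nth_prime n; omega
            exact_mod_cast le_trans hn1 hx
          have : Real.sqrt N ≤ Real.sqrt (p n) := Real.sqrt_le_sqrt hNp
          linarith
      _ ≤ ∑ n ∈ Finset.Ico N (2*N), ((p (n+1) : ℝ) - p n) := by
          refine Finset.sum_le_sum_of_subset_of_nonneg (Finset.filter_subset _ _) ?_
          intro n _ _
          have := hmono n (n+1) (by omega)
          have : (p n : ℝ) ≤ p (n+1) := by exact_mod_cast this
          linarith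
  -- upper bound: p (2N) < (N/2) √N
  have hfle : (f:ℝ) ≤ (N:ℝ) * Real.sqrt N / 8 := by
    have h1 : (f:ℝ) ≤ ((N * Nat.sqrt N : ℕ):ℝ) / 8 := by
      rw [hfdef]; exact_mod_cast Nat.cast_div_le
    have hLs : ((Nat.sqrt N : ℕ):ℝ) ≤ Real.sqrt N := by
      refine (Real.le_sqrt (by positivity) (by positivity)).mpr ?_
      exact_mod_cast Nat.sqrt_le' N
    have h2 : ((N * Nat.sqrt N : ℕ):ℝ) ≤ (N:ℝ) * Real.sqrt N := by
      push_cast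
      nlinarith
    nlinarith
  have hub : (p (2*N) : ℝ) < (N:ℝ)/2 * Real.sqrt N := by
    have h1 : (p (2*N) : ℝ) < 2*(f:ℝ)+1 := by exact_mod_cast hp2N
    nlinarith
  have hpN0 : (0:ℝ) ≤ (p N : ℝ) := Nat.cast_nonneg _
  have : (S.card : ℝ) * Real.sqrt N < ((N:ℝ)/2) * Real.sqrt N := by
    calc (S.card : ℝ) * Real.sqrt N ≤ (p (2*N) : ℝ) - p N := hlb
      _ ≤ (p (2*N) : ℝ) := by linarith
      _ < (N:ℝ)/2 * Real.sqrt N := hub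
  exact lt_of_mul_lt_mul_right this hs.le
end

section
/- Let A > 1, let {a_n}, {b_n} be positive integer sequences, let d : ℕ → ℝ with d n > 1 and convergent infinite product, and suppose a_n^{1/2^n} → A and d_n^{2^n}/b_n → ∞. Then for all sufficiently large n, ∑_{j=0}^∞ b_{n+j}/a_{n+j} ≤ 2·b_n/a_n. -/
open Filter

theorem show5 (A : ℝ) (d : ℕ → ℝ) (a b : ℕ → ℤ)
    (hA : 1 < A) (hd : ∀ n, 1 < d n) (hdprod : Multipliable d)
    (ha : ∀ n, 0 < a n) (hb : ∀ n, 0 < b n)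
    (assu1 : Tendsto (fun n => (a n : ℝ) ^ ((1 : ℝ) / 2 ^ n)) atTop (nhds A))
    (assu3 : Tendsto (fun n => d n ^ (2 ^ n : ℕ) / (b n : ℝ)) atTop atTop) :
    ∀ᶠ n in atTop, (∑' j : ℕ, (b (n + j) : ℝ) / (a (n + j) : ℝ)) ≤ 2 * (b n : ℝ) / (a n : ℝ) := by
  have haR : ∀ m, (0:ℝ) < (a m : ℝ) := fun m => by exact_mod_cast ha m
  have hbR : ∀ m, (0:ℝ) < (b m : ℝ) := fun m => by exact_mod_cast hb m
  have hb1 : ∀ m, (1:ℝ) ≤ (b m : ℝ) := fun m => by exact_mod_cast hb m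
  have hA0 : (0:ℝ) < A := lt_trans one_pos hA
  -- d tends to 1
  have hprodpos : ∀ n, (0:ℝ) < ∏ i ∈ Finset.range n, d i := fun n =>
    Finset.prod_pos fun i _ => lt_trans one_pos (hd i)
  have hP : Tendsto (fun n => ∏ i ∈ Finset.range n, d i) atTop (nhds (∏' i, d i)) :=
    hdprod.hasProd.tendsto_prod_nat
  have hPpos : (0:ℝ) < ∏' i, d i := by
    have h1 : (1:ℝ) ≤ ∏' i, d i := by
      refine ge_of_tendsto' hP fun n => ?_
      calc (1:ℝ) = ∏ _i ∈ Finset.range n, (1:ℝ) := by simp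
        _ ≤ ∏ i ∈ Finset.range n, d i :=
          Finset.prod_le_prod (fun i _ => by norm_num) (fun i _ => (hd i).le)
    linarith
  have hd1 : Tendsto d atTop (nhds 1) := by
    have h2 : Tendsto (fun n => (∏ i ∈ Finset.range (n+1), d i) / ∏ i ∈ Finset.range n, d i)
        atTop (nhds ((∏' i, d i) / (∏' i, d i))) :=
      (hP.comp (tendsto_add_atTop_nat 1)).div hP hPpos.ne'
    rw [div_self hPpos.ne'] at h2
    refine h2.congr fun n => ?_
    rw [Finset.prod_range_succ, mul_comm, mul_div_assoc, div_self (hprodpos n).ne', mul_one]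
  -- the auxiliary quantity h
  set h : ℕ → ℝ := fun m => d (m+1) ^ 2 * (a m : ℝ) ^ ((1:ℝ)/2^m) /
      ((a (m+1) : ℝ) ^ ((1:ℝ)/2^(m+1))) ^ 2 with hh
  have htend : Tendsto h atTop (nhds (1/A)) := by
    have t1 : Tendsto (fun m => d (m+1)) atTop (nhds 1) := hd1.comp (tendsto_add_atTop_nat 1)
    have t3 : Tendsto (fun m => (a (m+1):ℝ) ^ ((1:ℝ)/2^(m+1))) atTop (nhds A) :=
      assu1.comp (tendsto_add_atTop_nat 1)
    have := ((t1.pow 2).mul assu1).div (t3.pow 2) (by positivity)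
    have heq : (1:ℝ)^2 * A / A^2 = 1/A := by field_simp
    rw [heq] at this
    exact this
  set c : ℝ := (A + 1) / (2 * A) with hc
  have hc0 : 0 < c := by positivity
  have hc1 : c < 1 := by rw [hc, div_lt_one (by positivity)]; linarith
  have hcA : 1/A < c := by
    rw [hc, div_lt_div_iff₀ hA0 (by positivity)]
    nlinarith
  have ev1 : ∀ᶠ m in atTop, h m ≤ c :=
    (htend.eventually_lt_const hcA).mono fun m hm => hm.le
  have ev2 : ∀ᶠ m in atTop, c ^ (2^m : ℕ) ≤ 1/2 := by
    have : Tendsto (fun m : ℕ => c ^ (2^m : ℕ)) atTop (nhds 0) :=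
      (tendsto_pow_atTop_nhds_zero_of_lt_one hc0.le hc1).comp
        (tendsto_pow_atTop_atTop_of_one_lt one_lt_two)
    exact (this.eventually_lt_const (by norm_num : (0:ℝ) < 1/2)).mono fun m hm => hm.le
  have ev3 : ∀ᶠ m in atTop, (b m : ℝ) ≤ d m ^ (2^m : ℕ) := by
    filter_upwards [assu3.eventually_ge_atTop 1] with m hm
    have := (le_div_iff₀ (hbR m)).mp hm
    linarith
  have ev3' : ∀ᶠ m in atTop, (b (m+1) : ℝ) ≤ d (m+1) ^ (2^(m+1) : ℕ) :=
    (tendsto_add_atTop_nat 1).eventually ev3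
  obtain ⟨N, hN⟩ := eventually_atTop.mp ((ev1.and ev2).and ev3')
  -- key step
  have key : ∀ m, N ≤ m → (b (m+1) : ℝ) / (a (m+1) : ℝ) ≤ 1/2 * ((b m : ℝ) / (a m : ℝ)) := by
    intro m hm
    obtain ⟨⟨h1, h2⟩, h3⟩ := hN m hm
    have hx : ((a m:ℝ) ^ ((1:ℝ)/2^m)) ^ (2^m : ℕ) = (a m : ℝ) := by
      rw [← Real.rpow_natCast ((a m:ℝ) ^ ((1:ℝ)/2^m)) (2^m), ← Real.rpow_mul (haR m).le]
      rw [show ((1:ℝ)/2^m) * ((2^m : ℕ) : ℝ) = 1 by push_cast; field_simp]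
      exact Real.rpow_one _
    have hy : ((a (m+1):ℝ) ^ ((1:ℝ)/2^(m+1))) ^ (2^(m+1) : ℕ) = (a (m+1) : ℝ) := by
      rw [← Real.rpow_natCast ((a (m+1):ℝ) ^ ((1:ℝ)/2^(m+1))) (2^(m+1)),
        ← Real.rpow_mul (haR (m+1)).le]
      rw [show ((1:ℝ)/2^(m+1)) * ((2^(m+1) : ℕ) : ℝ) = 1 by push_cast; field_simp]
      exact Real.rpow_one _
    have step1 : h m ^ (2^m : ℕ) =
        d (m+1) ^ (2^(m+1) : ℕ) * (a m : ℝ) / (a (m+1) : ℝ) := by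
      rw [hh]
      rw [div_pow, mul_pow, ← pow_mul, ← pow_mul, hx]
      rw [show 2 * 2^m = 2^(m+1) by ring, hy]
    have hhm0 : 0 ≤ h m := by
      simp only [hh]
      apply div_nonneg
      · exact mul_nonneg (pow_nonneg (lt_trans one_pos (hd (m+1))).le 2)
          (Real.rpow_nonneg (haR m).le _)
      · exact pow_nonneg (Real.rpow_nonneg (haR (m+1)).le _) 2
    have hpow : h m ^ (2^m : ℕ) ≤ c ^ (2^m : ℕ) := pow_le_pow_left₀ hhm0 h1 _
    calc (b (m+1) : ℝ) / (a (m+1) : ℝ)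
        ≤ d (m+1) ^ (2^(m+1) : ℕ) / (a (m+1) : ℝ) := by
          gcongr
          exact (haR _).le
      _ = h m ^ (2^m : ℕ) / (a m : ℝ) := by
          rw [step1]
          field_simp [(haR m).ne', (haR (m+1)).ne']
      _ ≤ c ^ (2^m : ℕ) / (a m : ℝ) := by
          apply div_le_div_of_nonneg_right hpow (haR m).le
      _ ≤ (1/2) / (a m : ℝ) := by
          apply div_le_div_of_nonneg_right h2 (haR m).le
      _ = 1/2 * (1 / (a m : ℝ)) := by ring
      _ ≤ 1/2 * ((b m : ℝ) / (a m : ℝ)) :=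
          mul_le_mul_of_nonneg_left ((div_le_div_iff_of_pos_right (haR m)).mpr (hb1 m)) (by norm_num)
  -- geometric bound
  have geom : ∀ n, N ≤ n → ∀ j, (b (n+j) : ℝ) / (a (n+j) : ℝ) ≤
      (1/2 : ℝ)^j * ((b n : ℝ) / (a n : ℝ)) := by
    intro n hn j
    induction j with
    | zero => simp
    | succ j ih =>
        have h1 := key (n + j) (le_trans hn (Nat.le_add_right n j))
        rw [show n + (j+1) = (n+j)+1 by ring]
        calc (b ((n+j)+1) : ℝ) / (a ((n+j)+1) : ℝ)
            ≤ 1/2 * ((b (n+j) : ℝ) / (a (n+j) : ℝ)) := h1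
          _ ≤ 1/2 * ((1/2 : ℝ)^j * ((b n : ℝ) / (a n : ℝ))) := by gcongr
          _ = (1/2 : ℝ)^(j+1) * ((b n : ℝ) / (a n : ℝ)) := by ring
  refine eventually_atTop.mpr ⟨N, fun n hn => ?_⟩
  have hsum2 : Summable (fun j : ℕ => (1/2 : ℝ)^j * ((b n : ℝ) / (a n : ℝ))) :=
    summable_geometric_two.mul_right _
  have hsum1 : Summable (fun j : ℕ => (b (n+j) : ℝ) / (a (n+j) : ℝ)) := by
    refine Summable.of_nonneg_of_le (fun j => ?_) (geom n hn) hsum2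
    exact div_nonneg (hbR _).le (haR _).le
  calc (∑' j : ℕ, (b (n + j) : ℝ) / (a (n + j) : ℝ))
      ≤ ∑' j : ℕ, (1/2 : ℝ)^j * ((b n : ℝ) / (a n : ℝ)) :=
        Summable.tsum_le_tsum (geom n hn) hsum1 hsum2
    _ = (∑' j : ℕ, (1/2 : ℝ)^j) * ((b n : ℝ) / (a n : ℝ)) := tsum_mul_right
    _ = 2 * ((b n : ℝ) / (a n : ℝ)) := by rw [tsum_geometric_two]
    _ = 2 * (b n : ℝ) / (a n : ℝ) := by ring
end
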